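/- arXiv:0908.4003 — 4 statements merged into one kernel-verified Lean document; each statement's English description precedes it below -/
import Mathlib

section
/- Let s_n be the number of canonical secondary structures on [1,n] (with θ = 1, and s_0 = 0), and let r_n be the number of secondary structures T on [1,n] (with θ = 1, r_0 = 0) such that the structure obtained from T by adding one enclosing base pair (shifting T up by one and adding the pair (1, n+2)) is canonical. Then the formal power series S(z) = Σ_{n≥1} s_n z^n and R(z) = Σ_{n≥1} r_n z^n in ℚ[[z]] satisfy the system S = z + zS + z²R + z²SR and R = z³ + z²R + z⁴SR + z³S. -/
/-- A secondary structure on `[1,n]` with `θ = 1`: a finite set of base pairs `(i,j)`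
with `1 ≤ i`, `i + 1 < j` (i.e. `i < j` and `j - i > 1`), `j ≤ n`, no shared endpoints,
and no crossings (pseudoknots). -/
def IsSecStr (n : ℕ) (S : Finset (ℕ × ℕ)) : Prop :=
  (∀ p ∈ S, 1 ≤ p.1 ∧ p.1 + 1 < p.2 ∧ p.2 ≤ n) ∧
  (∀ p ∈ S, ∀ q ∈ S, p ≠ q →
    p.1 ≠ q.1 ∧ p.1 ≠ q.2 ∧ p.2 ≠ q.1 ∧ p.2 ≠ q.2) ∧
  (∀ p ∈ S, ∀ q ∈ S, ¬ (p.1 < q.1 ∧ q.1 < p.2 ∧ p.2 < q.2))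

/-- A secondary structure is canonical if it has no lonely base pairs. -/
def IsCanonical (S : Finset (ℕ × ℕ)) : Prop :=
  ∀ p ∈ S, (p.1 - 1, p.2 + 1) ∈ S ∨ (p.1 + 1, p.2 - 1) ∈ S

/-- The number of canonical secondary structures on `[1,n]` (θ = 1). -/
noncomputable def numCanonical (n : ℕ) : ℕ :=
  Set.ncard {S : Finset (ℕ × ℕ) | IsSecStr n S ∧ IsCanonical S}

/-- The structure obtained from `T` on `[1,n]` by adding one enclosing base pair. -/
def enclose (n : ℕ) (T : Finset (ℕ × ℕ)) : Finset (ℕ × ℕ) :=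
  insert (1, n + 2) (T.image fun p => (p.1 + 1, p.2 + 1))

/-- The number of secondary structures `T` on `[1,n]` such that the structure obtained
from `T` by adding one enclosing base pair is canonical. -/
noncomputable def numPreCanonical (n : ℕ) : ℕ :=
  Set.ncard {T : Finset (ℕ × ℕ) | IsSecStr n T ∧ IsCanonical (enclose n T)}

/-- `S(z) = Σ_{n≥1} s_n zⁿ`, with `s_n` the number of canonical structures on `[1,n]`. -/
noncomputable def canonGF : PowerSeries ℚ :=
  PowerSeries.mk fun n => if n = 0 then 0 else (numCanonical n : ℚ)

/-- `R(z) = Σ_{n≥1} r_n zⁿ`, with `r_n` the number of structures on `[1,n]` that become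
canonical after adding one enclosing base pair. -/
noncomputable def canonRGF : PowerSeries ℚ :=
  PowerSeries.mk fun n => if n = 0 then 0 else (numPreCanonical n : ℚ)

def shiftSet (k : ℕ) (S : Finset (ℕ × ℕ)) : Finset (ℕ × ℕ) :=
  S.image fun p => (p.1 + k, p.2 + k)
lemma mem_shift {k : ℕ} {V : Finset (ℕ × ℕ)} {q : ℕ × ℕ} :
    q ∈ shiftSet k V ↔ ∃ p ∈ V, p.1 + k = q.1 ∧ p.2 + k = q.2 := by
  simp [shiftSet, Prod.ext_iff]

lemma shift_secstr {k n : ℕ} {V : Finset (ℕ × ℕ)} (h : IsSecStr n V) :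
    IsSecStr (n + k) (shiftSet k V) := by
  obtain ⟨hb, hd, hc⟩ := h
  refine ⟨?_, ?_, ?_⟩
  · rintro q hq
    obtain ⟨p, hp, h1, h2⟩ := mem_shift.1 hq
    have := hb p hp; omega
  · rintro q hq q' hq' hne
    obtain ⟨p, hp, h1, h2⟩ := mem_shift.1 hq
    obtain ⟨p', hp', h1', h2'⟩ := mem_shift.1 hq'
    have hpp : p ≠ p' := by
      rintro rfl; apply hne; rw [Prod.ext_iff]; omega
    have := hd p hp p' hp' hpp; omega
  · rintro q hq q' hq'
    obtain ⟨p, hp, h1, h2⟩ := mem_shift.1 hq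
    obtain ⟨p', hp', h1', h2'⟩ := mem_shift.1 hq'
    have := hc p hp p' hp'; omega

-- unshift: structures living above k can be shifted down
lemma exists_unshift {k n : ℕ} {Q : Finset (ℕ × ℕ)} (hQ : IsSecStr n Q)
    (hk : ∀ p ∈ Q, k < p.1) :
    ∃ W, IsSecStr (n - k) W ∧ Q = shiftSet k W := by
  obtain ⟨hb, hd, hc⟩ := hQ
  refine ⟨Q.image (fun p => (p.1 - k, p.2 - k)), ⟨?_, ?_, ?_⟩, ?_⟩
  · rintro q hq
    simp only [Finset.mem_image] at hq
    obtain ⟨p, hp, rfl⟩ := hq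
    have := hb p hp; have := hk p hp
    constructor
    · omega
    · constructor <;> simp <;> omega
  · rintro q hq q' hq' hne
    simp only [Finset.mem_image] at hq hq'
    obtain ⟨p, hp, rfl⟩ := hq
    obtain ⟨p', hp', rfl⟩ := hq'
    have h1 := hb p hp; have h2 := hb p' hp'
    have h3 := hk p hp; have h4 := hk p' hp'
    have hpp : p ≠ p' := by
      rintro rfl; exact hne rfl
    have := hd p hp p' hp' hpp
    simp only [Prod.ext_iff] at hne ⊢
    simp at hne ⊢
    omega
  · rintro q hq q' hq'
    simp only [Finset.mem_image] at hq hq'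
    obtain ⟨p, hp, rfl⟩ := hq
    obtain ⟨p', hp', rfl⟩ := hq'
    have h1 := hb p hp; have h2 := hb p' hp'
    have h3 := hk p hp; have h4 := hk p' hp'
    have := hc p hp p' hp'
    simp; omega
  · ext q
    simp only [mem_shift, Finset.mem_image]
    constructor
    · intro hq
      refine ⟨(q.1 - k, q.2 - k), ⟨q, hq, rfl⟩, ?_, ?_⟩ <;>
        (have := hb q hq; have := hk q hq; simp; omega)
    · rintro ⟨p, ⟨p', hp', rfl⟩, h1, h2⟩
      have := hb p' hp'; have := hk p' hp'
      have : p' = q := by rw [Prod.ext_iff]; simp at h1 h2 ⊢; omega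
      rwa [← this]

lemma shift_canon_iff {k n : ℕ} {V : Finset (ℕ × ℕ)} (hV : IsSecStr n V) :
    IsCanonical (shiftSet k V) ↔ IsCanonical V := by
  obtain ⟨hb, -, -⟩ := hV
  constructor
  · intro h p hp
    have hpb := hb p hp
    have := h (p.1 + k, p.2 + k) (mem_shift.2 ⟨p, hp, rfl, rfl⟩)
    rcases this with h1 | h1
    · obtain ⟨q, hq, e1, e2⟩ := mem_shift.1 h1
      have hqb := hb q hq
      left
      have : q = (p.1 - 1, p.2 + 1) := by rw [Prod.ext_iff]; simp at e1 e2 ⊢; omega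
      rwa [← this]
    · obtain ⟨q, hq, e1, e2⟩ := mem_shift.1 h1
      have hqb := hb q hq
      right
      have : q = (p.1 + 1, p.2 - 1) := by rw [Prod.ext_iff]; simp at e1 e2 ⊢; omega
      rwa [← this]
  · intro h q hq
    obtain ⟨p, hp, e1, e2⟩ := mem_shift.1 hq
    have hpb := hb p hp
    rcases h p hp with h1 | h1
    · have hqb := hb _ h1
      left
      refine mem_shift.2 ⟨(p.1 - 1, p.2 + 1), h1, ?_, ?_⟩ <;> simp <;> omega
    · have hqb := hb _ h1
      right
      refine mem_shift.2 ⟨(p.1 + 1, p.2 - 1), h1, ?_, ?_⟩ <;> simp <;> omega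

lemma shift_inj {k : ℕ} {V W : Finset (ℕ × ℕ)} (h : shiftSet k V = shiftSet k W) :
    V = W := by
  ext p
  constructor
  · intro hp
    have : (p.1 + k, p.2 + k) ∈ shiftSet k W := by rw [← h]; exact mem_shift.2 ⟨p, hp, rfl, rfl⟩
    obtain ⟨q, hq, e1, e2⟩ := mem_shift.1 this
    have : q = p := by rw [Prod.ext_iff]; simp at e1 e2; omega
    rwa [← this]
  · intro hp
    have : (p.1 + k, p.2 + k) ∈ shiftSet k V := by rw [h]; exact mem_shift.2 ⟨p, hp, rfl, rfl⟩
    obtain ⟨q, hq, e1, e2⟩ := mem_shift.1 this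
    have : q = p := by rw [Prod.ext_iff]; simp at e1 e2; omega
    rwa [← this]

lemma mem_enclose {n : ℕ} {T : Finset (ℕ × ℕ)} {q : ℕ × ℕ} :
    q ∈ enclose n T ↔ q = (1, n + 2) ∨ ∃ p ∈ T, p.1 + 1 = q.1 ∧ p.2 + 1 = q.2 := by
  simp [enclose, Prod.ext_iff]

def AlmostCanon (n : ℕ) (S : Finset (ℕ × ℕ)) : Prop :=
  ∀ p ∈ S, p = (1, n) ∨ (p.1 - 1, p.2 + 1) ∈ S ∨ (p.1 + 1, p.2 - 1) ∈ S

-- E1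
lemma enclose_secstr {m n : ℕ} {W : Finset (ℕ × ℕ)} (hm : 1 ≤ m)
    (hW : IsSecStr m W) (hn : n = m + 2) : IsSecStr n (enclose m W) := by
  subst hn
  obtain ⟨hb, hd, hc⟩ := hW
  refine ⟨?_, ?_, ?_⟩
  · intro q hq
    rcases mem_enclose.1 hq with rfl | ⟨p, hp, e1, e2⟩
    · simp; omega
    · have := hb p hp; omega
  · intro q hq q' hq' hne
    rcases mem_enclose.1 hq with rfl | ⟨p, hp, e1, e2⟩ <;>
      rcases mem_enclose.1 hq' with h' | ⟨p', hp', e1', e2'⟩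
    · exact absurd h'.symm hne
    · have := hb p' hp'; simp; omega
    · subst h'; have := hb p hp; simp; omega
    · have hpp : p ≠ p' := by
        rintro rfl; apply hne; rw [Prod.ext_iff]; omega
      have := hd p hp p' hp' hpp; have := hb p hp; have := hb p' hp'; omega
  · intro q hq q' hq'
    rcases mem_enclose.1 hq with rfl | ⟨p, hp, e1, e2⟩ <;>
      rcases mem_enclose.1 hq' with h' | ⟨p', hp', e1', e2'⟩
    · subst h'; simp
    · have := hb p' hp'; simp; omega
    · subst h'; have := hb p hp; simp; omega
    · have := hc p hp p' hp'; have := hb p hp; have := hb p' hp'; omega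

-- E5
lemma canonical_enclose_iff {n : ℕ} {T : Finset (ℕ × ℕ)} (hT : IsSecStr n T) :
    IsCanonical (enclose n T) ↔ (1, n) ∈ T ∧ AlmostCanon n T := by
  obtain ⟨hb, -, -⟩ := hT
  constructor
  · intro h
    constructor
    · have := h (1, n + 2) (by simp [enclose])
      rcases this with h1 | h1
      · rcases mem_enclose.1 h1 with h2 | ⟨p, hp, e1, e2⟩
        · simp at h2
        · simp at e1
      · rcases mem_enclose.1 h1 with h2 | ⟨p, hp, e1, e2⟩
        · simp at h2
        · have := hb p hp
          have : p = (1, n) := by rw [Prod.ext_iff]; simp at e1 e2 ⊢; omega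
          rwa [← this]
    · intro p hp
      have hpb := hb p hp
      have hmem : (p.1 + 1, p.2 + 1) ∈ enclose n T :=
        mem_enclose.2 (Or.inr ⟨p, hp, rfl, rfl⟩)
      rcases h _ hmem with h1 | h1 <;> simp only at h1
      · rcases mem_enclose.1 h1 with h2 | ⟨q, hq, e1, e2⟩
        · left
          rw [Prod.ext_iff] at h2 ⊢; simp at h2 ⊢; omega
        · right; left
          have hqb := hb q hq
          have : q = (p.1 - 1, p.2 + 1) := by rw [Prod.ext_iff]; simp at e1 e2 ⊢; omega
          rwa [← this]
      · rcases mem_enclose.1 h1 with h2 | ⟨q, hq, e1, e2⟩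
        · rw [Prod.ext_iff] at h2; simp at h2
        · right; right
          have hqb := hb q hq
          have : q = (p.1 + 1, p.2 - 1) := by rw [Prod.ext_iff]; simp at e1 e2 ⊢; omega
          rwa [← this]
  · rintro ⟨h1, hA⟩ q hq
    rcases mem_enclose.1 hq with rfl | ⟨p, hp, e1, e2⟩
    · right
      simp only
      exact mem_enclose.2 (Or.inr ⟨(1, n), h1, rfl, rfl⟩)
    · have hpb := hb p hp
      rcases hA p hp with h2 | h2 | h2
      · subst h2
        left
        have : (q.1 - 1, q.2 + 1) = (1, n + 2) := by rw [Prod.ext_iff]; simp; omega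
        rw [this]; simp [enclose]
      · left
        have hqb := hb _ h2
        refine mem_enclose.2 (Or.inr ⟨_, h2, ?_, ?_⟩) <;> simp <;> omega
      · right
        have hqb := hb _ h2
        refine mem_enclose.2 (Or.inr ⟨_, h2, ?_, ?_⟩) <;> simp <;> omega

-- E6
lemma almost_enclose_iff {m n : ℕ} {V : Finset (ℕ × ℕ)} (hV : IsSecStr m V)
    (hn : n = m + 2) : AlmostCanon n (enclose m V) ↔ AlmostCanon m V := by
  subst hn
  obtain ⟨hb, -, -⟩ := hV
  constructor
  · intro h p hp
    have hpb := hb p hp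
    have hmem : (p.1 + 1, p.2 + 1) ∈ enclose m V :=
      mem_enclose.2 (Or.inr ⟨p, hp, rfl, rfl⟩)
    rcases h _ hmem with h1 | h1 | h1
    · rw [Prod.ext_iff] at h1; simp at h1; omega
    · rcases mem_enclose.1 h1 with h2 | ⟨q, hq, e1, e2⟩
      · left
        rw [Prod.ext_iff] at h2 ⊢; simp at h2 ⊢; omega
      · right; left
        have hqb := hb q hq
        have : q = (p.1 - 1, p.2 + 1) := by rw [Prod.ext_iff]; simp at e1 e2 ⊢; omega
        rwa [← this]
    · rcases mem_enclose.1 h1 with h2 | ⟨q, hq, e1, e2⟩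
      · rw [Prod.ext_iff] at h2; simp at h2
      · right; right
        have hqb := hb q hq
        have : q = (p.1 + 1, p.2 - 1) := by rw [Prod.ext_iff]; simp at e1 e2 ⊢; omega
        rwa [← this]
  · intro h q hq
    rcases mem_enclose.1 hq with rfl | ⟨p, hp, e1, e2⟩
    · left; rfl
    · have hpb := hb p hp
      rcases h p hp with h2 | h2 | h2
      · subst h2
        right; left
        have : (q.1 - 1, q.2 + 1) = (1, m + 2) := by rw [Prod.ext_iff]; simp; omega
        rw [this]; simp [enclose]
      · right; left
        have hqb := hb _ h2
        refine mem_enclose.2 (Or.inr ⟨_, h2, ?_, ?_⟩) <;> simp <;> omega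
      · right; right
        have hqb := hb _ h2
        refine mem_enclose.2 (Or.inr ⟨_, h2, ?_, ?_⟩) <;> simp <;> omega

-- E2: decompose a structure whose first base pairs with the last
lemma exists_enclose {n : ℕ} {T : Finset (ℕ × ℕ)} (hT : IsSecStr n T)
    (h1 : (1, n) ∈ T) : ∃ W, IsSecStr (n - 2) W ∧ T = enclose (n - 2) W := by
  obtain ⟨hb, hd, hc⟩ := hT
  have hn : 3 ≤ n := by have := hb _ h1; simp at this; omega
  -- every other pair lives in [2, n-1]
  have key : ∀ p ∈ T, p ≠ (1, n) → 2 ≤ p.1 ∧ p.2 ≤ n - 1 := by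
    intro p hp hne
    have hpb := hb p hp
    have hdp := hd p hp (1, n) h1 hne
    have hcp := hc (1, n) h1 p hp
    simp at hdp hcp
    omega
  refine ⟨(T.erase (1, n)).image (fun p => (p.1 - 1, p.2 - 1)), ⟨?_, ?_, ?_⟩, ?_⟩
  · rintro q hq
    simp only [Finset.mem_image, Finset.mem_erase] at hq
    obtain ⟨p, ⟨hne, hp⟩, rfl⟩ := hq
    have := hb p hp; have := key p hp hne
    simp; omega
  · rintro q hq q' hq' hne
    simp only [Finset.mem_image, Finset.mem_erase] at hq hq'
    obtain ⟨p, ⟨hne1, hp⟩, rfl⟩ := hq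
    obtain ⟨p', ⟨hne2, hp'⟩, rfl⟩ := hq'
    have h1 := hb p hp; have h2 := hb p' hp'
    have h3 := key p hp hne1; have h4 := key p' hp' hne2
    have hpp : p ≠ p' := by rintro rfl; exact hne rfl
    have := hd p hp p' hp' hpp
    simp at hne ⊢; omega
  · rintro q hq q' hq'
    simp only [Finset.mem_image, Finset.mem_erase] at hq hq'
    obtain ⟨p, ⟨hne1, hp⟩, rfl⟩ := hq
    obtain ⟨p', ⟨hne2, hp'⟩, rfl⟩ := hq'
    have h1 := hb p hp; have h2 := hb p' hp'
    have h3 := key p hp hne1; have h4 := key p' hp' hne2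
    have := hc p hp p' hp'
    simp; omega
  · ext q
    rw [mem_enclose]
    constructor
    · intro hq
      by_cases hcase : q = (1, n)
      · left; rw [hcase, Prod.ext_iff]; simp; omega
      · right
        have := hb q hq; have := key q hq hcase
        refine ⟨(q.1 - 1, q.2 - 1), ?_, by simp; omega, by simp; omega⟩
        simp only [Finset.mem_image, Finset.mem_erase]
        exact ⟨q, ⟨hcase, hq⟩, rfl⟩
    · rintro (rfl | ⟨p, hp, e1, e2⟩)
      · have : ((1 : ℕ), n - 2 + 2) = ((1 : ℕ), n) := by simp; omega
        rw [this]; exact h1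
      · simp only [Finset.mem_image, Finset.mem_erase] at hp
        obtain ⟨p', ⟨hne, hp'⟩, rfl⟩ := hp
        have := hb p' hp'; have := key p' hp' hne
        have : p' = q := by rw [Prod.ext_iff]; simp at e1 e2; omega
        rwa [← this]

lemma enclose_inj {m : ℕ} {V W : Finset (ℕ × ℕ)} (hV : IsSecStr m V)
    (hW : IsSecStr m W) (h : enclose m V = enclose m W) : V = W := by
  obtain ⟨hbV, -, -⟩ := hV
  obtain ⟨hbW, -, -⟩ := hW
  ext p
  constructor
  · intro hp
    have hpb := hbV p hp
    have : (p.1 + 1, p.2 + 1) ∈ enclose m W := by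
      rw [← h]; exact mem_enclose.2 (Or.inr ⟨p, hp, rfl, rfl⟩)
    rcases mem_enclose.1 this with h2 | ⟨q, hq, e1, e2⟩
    · rw [Prod.ext_iff] at h2; simp at h2; omega
    · have : q = p := by rw [Prod.ext_iff]; simp at e1 e2; omega
      rwa [← this]
  · intro hp
    have hpb := hbW p hp
    have : (p.1 + 1, p.2 + 1) ∈ enclose m V := by
      rw [h]; exact mem_enclose.2 (Or.inr ⟨p, hp, rfl, rfl⟩)
    rcases mem_enclose.1 this with h2 | ⟨q, hq, e1, e2⟩
    · rw [Prod.ext_iff] at h2; simp at h2; omega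
    · have : q = p := by rw [Prod.ext_iff]; simp at e1 e2; omega
      rwa [← this]

-- counting frame
def IsCanonicalFS (n : ℕ) (S : Finset (ℕ × ℕ)) : Prop := IsSecStr n S ∧ IsCanonical S

def Omeg (n : ℕ) : Finset (Finset (ℕ × ℕ)) :=
  (Finset.range (n + 1) ×ˢ Finset.range (n + 1)).powerset

lemma mem_Omeg {n : ℕ} {S : Finset (ℕ × ℕ)} (h : IsSecStr n S) : S ∈ Omeg n := by
  obtain ⟨hb, -, -⟩ := h
  simp only [Omeg, Finset.mem_powerset]
  intro p hp
  have := hb p hp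
  simp only [Finset.mem_product, Finset.mem_range]
  omega

open Classical in
noncomputable def CF (n : ℕ) : Finset (Finset (ℕ × ℕ)) :=
  (Omeg n).filter fun S => IsSecStr n S ∧ IsCanonical S

open Classical in
noncomputable def RF (n : ℕ) : Finset (Finset (ℕ × ℕ)) :=
  (Omeg n).filter fun S => IsSecStr n S ∧ IsCanonical (enclose n S)

open Classical in
noncomputable def AF (n : ℕ) : Finset (Finset (ℕ × ℕ)) :=
  (Omeg n).filter fun S => IsSecStr n S ∧ AlmostCanon n S

open Classical in
noncomputable def TF (n : ℕ) : Finset (Finset (ℕ × ℕ)) :=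
  (Omeg n).filter fun S => IsSecStr n S ∧ IsCanonical S ∧ (1, n) ∈ S

lemma mem_CF {n : ℕ} {S : Finset (ℕ × ℕ)} : S ∈ CF n ↔ IsSecStr n S ∧ IsCanonical S := by
  simp only [CF, Finset.mem_filter]
  exact ⟨fun h => h.2, fun h => ⟨mem_Omeg h.1, h⟩⟩

lemma mem_RF {n : ℕ} {S : Finset (ℕ × ℕ)} :
    S ∈ RF n ↔ IsSecStr n S ∧ IsCanonical (enclose n S) := by
  simp only [RF, Finset.mem_filter]
  exact ⟨fun h => h.2, fun h => ⟨mem_Omeg h.1, h⟩⟩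

lemma mem_AF {n : ℕ} {S : Finset (ℕ × ℕ)} :
    S ∈ AF n ↔ IsSecStr n S ∧ AlmostCanon n S := by
  simp only [AF, Finset.mem_filter]
  exact ⟨fun h => h.2, fun h => ⟨mem_Omeg h.1, h⟩⟩

lemma mem_TF {n : ℕ} {S : Finset (ℕ × ℕ)} :
    S ∈ TF n ↔ IsSecStr n S ∧ IsCanonical S ∧ (1, n) ∈ S := by
  simp only [TF, Finset.mem_filter]
  exact ⟨fun h => h.2, fun h => ⟨mem_Omeg h.1, h⟩⟩

lemma numCanonical_eq (n : ℕ) : numCanonical n = (CF n).card := by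
  have : {S : Finset (ℕ × ℕ) | IsSecStr n S ∧ IsCanonical S} = ↑(CF n) := by
    ext S; simp [mem_CF]
  rw [numCanonical, this, Set.ncard_coe_finset]

lemma numPreCanonical_eq (n : ℕ) : numPreCanonical n = (RF n).card := by
  have : {S : Finset (ℕ × ℕ) | IsSecStr n S ∧ IsCanonical (enclose n S)} = ↑(RF n) := by
    ext S; simp [mem_RF]
  rw [numPreCanonical, this, Set.ncard_coe_finset]

lemma RF_empty {n : ℕ} (hn : n < 3) : RF n = ∅ := by
  ext S
  simp only [mem_RF, Finset.notMem_empty, iff_false, not_and]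
  intro hS hc
  have h1 := (canonical_enclose_iff hS).1 hc
  have := hS.1 _ h1.1
  simp at this; omega

lemma TF_empty {n : ℕ} (hn : n < 3) : TF n = ∅ := by
  ext S
  simp only [mem_TF, Finset.notMem_empty, iff_false]
  rintro ⟨hS, -, hmem⟩
  have := hS.1 _ hmem
  simp at this; omega

lemma CF_zero : CF 0 = {∅} := by
  ext S
  simp only [mem_CF, Finset.mem_singleton]
  constructor
  · rintro ⟨⟨hb, -, -⟩, -⟩
    ext p
    simp only [Finset.notMem_empty, iff_false]
    intro hp
    have := hb p hp; omega
  · rintro rfl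
    exact ⟨⟨by simp, by simp, by simp⟩, by intro p hp; simp at hp⟩

lemma card_TF {m : ℕ} (hm : 3 ≤ m) : (TF m).card = (RF (m - 2)).card := by
  refine (Finset.card_bij (fun W _ => enclose (m - 2) W) ?_ ?_ ?_).symm
  · intro W hW
    rw [mem_RF] at hW
    obtain ⟨hsec, hcan⟩ := hW
    rw [mem_TF]
    refine ⟨enclose_secstr (by omega) hsec (by omega), hcan, ?_⟩
    have : ((1 : ℕ), m) = ((1 : ℕ), m - 2 + 2) := by simp; omega
    rw [this]; simp [enclose]
  · intro W hW W' hW' h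
    exact enclose_inj (mem_RF.1 hW).1 (mem_RF.1 hW').1 h
  · intro V hV
    rw [mem_TF] at hV
    obtain ⟨hsec, hcan, hmem⟩ := hV
    obtain ⟨W, hWsec, rfl⟩ := exists_enclose hsec hmem
    exact ⟨W, mem_RF.2 ⟨hWsec, hcan⟩, rfl⟩

lemma card_RF {n : ℕ} (hn : 3 ≤ n) : (RF n).card = (AF (n - 2)).card := by
  refine (Finset.card_bij (fun W _ => enclose (n - 2) W) ?_ ?_ ?_).symm
  · intro W hW
    rw [mem_AF] at hW
    obtain ⟨hsec, halm⟩ := hW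
    have hsec2 : IsSecStr n (enclose (n - 2) W) := enclose_secstr (by omega) hsec (by omega)
    rw [mem_RF]
    refine ⟨hsec2, (canonical_enclose_iff hsec2).2 ⟨?_, ?_⟩⟩
    · have : ((1 : ℕ), n) = ((1 : ℕ), n - 2 + 2) := by simp; omega
      rw [this]; simp [enclose]
    · exact (almost_enclose_iff hsec (by omega)).2 halm
  · intro W hW W' hW' h
    exact enclose_inj (mem_AF.1 hW).1 (mem_AF.1 hW').1 h
  · intro V hV
    rw [mem_RF] at hV
    obtain ⟨hsec, hcan⟩ := hV
    obtain ⟨hmem, halm⟩ := (canonical_enclose_iff hsec).1 hcan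
    obtain ⟨W, hWsec, rfl⟩ := exists_enclose hsec hmem
    refine ⟨W, mem_AF.2 ⟨hWsec, ?_⟩, rfl⟩
    exact (almost_enclose_iff hWsec (by omega)).1 halm

open Classical in
lemma card_AF (m : ℕ) : (AF m).card + (TF m).card = (RF m).card + (CF m).card := by
  have h1 : AF m = ((AF m).filter (fun S => (1, m) ∈ S)) ∪
      ((AF m).filter (fun S => (1, m) ∉ S)) := by
    rw [Finset.filter_union_filter_not_eq]
  have h2 : CF m = ((CF m).filter (fun S => (1, m) ∈ S)) ∪
      ((CF m).filter (fun S => (1, m) ∉ S)) := by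
    rw [Finset.filter_union_filter_not_eq]
  have e1 : (AF m).filter (fun S => (1, m) ∈ S) = RF m := by
    ext S
    simp only [Finset.mem_filter, mem_AF, mem_RF]
    constructor
    · rintro ⟨⟨hsec, halm⟩, hmem⟩
      exact ⟨hsec, (canonical_enclose_iff hsec).2 ⟨hmem, halm⟩⟩
    · rintro ⟨hsec, hcan⟩
      obtain ⟨hmem, halm⟩ := (canonical_enclose_iff hsec).1 hcan
      exact ⟨⟨hsec, halm⟩, hmem⟩
  have e2 : (AF m).filter (fun S => (1, m) ∉ S) = (CF m).filter (fun S => (1, m) ∉ S) := by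
    ext S
    simp only [Finset.mem_filter, mem_AF, mem_CF]
    constructor
    · rintro ⟨⟨hsec, halm⟩, hmem⟩
      refine ⟨⟨hsec, fun p hp => ?_⟩, hmem⟩
      rcases halm p hp with h | h
      · exact absurd (h ▸ hp) hmem
      · exact h
    · rintro ⟨⟨hsec, hcan⟩, hmem⟩
      exact ⟨⟨hsec, fun p hp => Or.inr (hcan p hp)⟩, hmem⟩
  have e3 : (CF m).filter (fun S => (1, m) ∈ S) = TF m := by
    ext S
    simp only [Finset.mem_filter, mem_CF, mem_TF]
    tauto
  have d1 : Disjoint ((AF m).filter (fun S => (1, m) ∈ S))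
      ((AF m).filter (fun S => (1, m) ∉ S)) := by
    apply Finset.disjoint_filter_filter'
    exact disjoint_compl_right
  have d2 : Disjoint ((CF m).filter (fun S => (1, m) ∈ S))
      ((CF m).filter (fun S => (1, m) ∉ S)) := by
    apply Finset.disjoint_filter_filter'
    exact disjoint_compl_right
  calc (AF m).card + (TF m).card
      = (((AF m).filter (fun S => (1, m) ∈ S)) ∪
        ((AF m).filter (fun S => (1, m) ∉ S))).card + (TF m).card := by rw [← h1]
    _ = (RF m).card + ((CF m).filter (fun S => (1, m) ∉ S)).card + (TF m).card := by
        rw [Finset.card_union_of_disjoint d1, e1, e2]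
    _ = (RF m).card + (CF m).card := by
        have : (CF m).card = (TF m).card + ((CF m).filter (fun S => (1, m) ∉ S)).card := by
          conv_lhs => rw [h2]
          rw [Finset.card_union_of_disjoint d2, e3]
        omega

lemma secstr_mono {m n : ℕ} {S : Finset (ℕ × ℕ)} (h : IsSecStr m S) (hmn : m ≤ n) :
    IsSecStr n S := by
  obtain ⟨hb, hd, hc⟩ := h
  exact ⟨fun p hp => by have := hb p hp; omega, hd, hc⟩

lemma card_CF0 {n : ℕ} (hn : 1 ≤ n) :
    ((CF n).filter (fun S => ∀ p ∈ S, p.1 ≠ 1)).card = (CF (n - 1)).card := by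
  refine (Finset.card_bij (fun V _ => shiftSet 1 V) ?_ ?_ ?_).symm
  · intro V hV
    rw [mem_CF] at hV
    obtain ⟨hsec, hcan⟩ := hV
    rw [Finset.mem_filter, mem_CF]
    refine ⟨⟨secstr_mono (shift_secstr hsec) (by omega), (shift_canon_iff hsec).2 hcan⟩, ?_⟩
    intro p hp
    obtain ⟨q, hq, e1, e2⟩ := mem_shift.1 hp
    have := hsec.1 q hq; omega
  · intro V hV V' hV' h
    exact shift_inj h
  · intro U hU
    rw [Finset.mem_filter, mem_CF] at hU
    obtain ⟨⟨hsec, hcan⟩, h1⟩ := hU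
    have hk : ∀ p ∈ U, 1 < p.1 := by
      intro p hp
      have := hsec.1 p hp
      have := h1 p hp
      omega
    obtain ⟨W, hWsec, rfl⟩ := exists_unshift hsec hk
    exact ⟨W, mem_CF.2 ⟨hWsec, (shift_canon_iff hWsec).1 hcan⟩, rfl⟩

section Join

variable {n j : ℕ} {V W : Finset (ℕ × ℕ)}

lemma join_coords (h3 : 3 ≤ j) (hjn : j ≤ n) (hV : IsSecStr (j - 2) V)
    (hW : IsSecStr (n - j) W) :
    (∀ p ∈ enclose (j - 2) V, 1 ≤ p.1 ∧ p.1 + 1 < p.2 ∧ p.2 ≤ j) ∧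
    (∀ q ∈ shiftSet j W, j + 1 ≤ q.1 ∧ q.1 + 1 < q.2 ∧ q.2 ≤ n) := by
  constructor
  · intro p hp
    have := (enclose_secstr (m := j - 2) (by omega) hV rfl).1 p hp
    omega
  · intro q hq
    obtain ⟨p, hp, e1, e2⟩ := mem_shift.1 hq
    have := hW.1 p hp
    omega

lemma join_mem (h3 : 3 ≤ j) (hjn : j ≤ n) (hV : V ∈ RF (j - 2)) (hW : W ∈ CF (n - j)) :
    enclose (j - 2) V ∪ shiftSet j W ∈ (CF n).filter (fun S => (1, j) ∈ S) := by
  rw [mem_RF] at hV; rw [mem_CF] at hW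
  obtain ⟨hVsec, hVcan⟩ := hV
  obtain ⟨hWsec, hWcan⟩ := hW
  obtain ⟨hPco, hQco⟩ := join_coords h3 hjn hVsec hWsec
  have hPsec : IsSecStr j (enclose (j - 2) V) := enclose_secstr (by omega) hVsec (by omega)
  have hQsec : IsSecStr n (shiftSet j W) := by
    have := shift_secstr (k := j) hWsec
    exact secstr_mono this (by omega)
  obtain ⟨hPb, hPd, hPc⟩ := hPsec
  obtain ⟨hQb, hQd, hQc⟩ := hQsec
  rw [Finset.mem_filter, mem_CF]
  refine ⟨⟨⟨?_, ?_, ?_⟩, ?_⟩, ?_⟩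
  · intro p hp
    rcases Finset.mem_union.1 hp with h | h
    · have := hPco p h; omega
    · exact hQb p h
  · intro p hp q hq hne
    rcases Finset.mem_union.1 hp with h | h <;> rcases Finset.mem_union.1 hq with h' | h'
    · exact hPd p h q h' hne
    · have := hPco p h; have := hQco q h'; omega
    · have := hQco p h; have := hPco q h'; omega
    · exact hQd p h q h' hne
  · intro p hp q hq
    rcases Finset.mem_union.1 hp with h | h <;> rcases Finset.mem_union.1 hq with h' | h'
    · exact hPc p h q h'
    · have := hPco p h; have := hQco q h'; omega
    · have := hQco p h; have := hPco q h'; omega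
    · exact hQc p h q h'
  · intro p hp
    rcases Finset.mem_union.1 hp with h | h
    · rcases hVcan p h with h1 | h1
      · exact Or.inl (Finset.mem_union_left _ h1)
      · exact Or.inr (Finset.mem_union_left _ h1)
    · have hQcan : IsCanonical (shiftSet j W) := (shift_canon_iff hWsec).2 hWcan
      rcases hQcan p h with h1 | h1
      · exact Or.inl (Finset.mem_union_right _ h1)
      · exact Or.inr (Finset.mem_union_right _ h1)
  · apply Finset.mem_union_left
    have : ((1 : ℕ), j) = ((1 : ℕ), j - 2 + 2) := by simp; omega
    rw [this]; simp [enclose]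

lemma join_parts (h3 : 3 ≤ j) (hjn : j ≤ n) (hV : IsSecStr (j - 2) V)
    (hW : IsSecStr (n - j) W) :
    (enclose (j - 2) V ∪ shiftSet j W).filter (fun p => p.2 ≤ j) = enclose (j - 2) V ∧
    (enclose (j - 2) V ∪ shiftSet j W).filter (fun p => ¬ p.2 ≤ j) = shiftSet j W := by
  obtain ⟨hPco, hQco⟩ := join_coords h3 hjn hV hW
  constructor
  · ext p
    simp only [Finset.mem_filter, Finset.mem_union]
    constructor
    · rintro ⟨h | h, h2⟩
      · exact h
      · have := hQco p h; omega
    · intro h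
      exact ⟨Or.inl h, (hPco p h).2.2⟩
  · ext p
    simp only [Finset.mem_filter, Finset.mem_union]
    constructor
    · rintro ⟨h | h, h2⟩
      · exact absurd (hPco p h).2.2 h2
      · exact h
    · intro h
      have := hQco p h
      exact ⟨Or.inr h, by omega⟩

lemma dichotomy {U : Finset (ℕ × ℕ)} (hU : IsSecStr n U) (hj : (1, j) ∈ U) :
    ∀ p ∈ U, p = (1, j) ∨ (2 ≤ p.1 ∧ p.2 < j) ∨ (j < p.1) := by
  obtain ⟨hb, hd, hc⟩ := hU
  intro p hp
  by_cases hcase : p = (1, j)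
  · exact Or.inl hcase
  · right
    have h1 := hb p hp
    have h2 := hd p hp (1, j) hj hcase
    have h3 := hc (1, j) hj p hp
    simp at h2 h3
    omega

lemma split {U : Finset (ℕ × ℕ)} (hU : IsSecStr n U) (hcan : IsCanonical U)
    (hj : (1, j) ∈ U) :
    ∃ V W, V ∈ RF (j - 2) ∧ W ∈ CF (n - j) ∧ U = enclose (j - 2) V ∪ shiftSet j W := by
  have hjb := hU.1 _ hj
  simp only at hjb
  have h3 : 3 ≤ j := by omega
  have hjn : j ≤ n := hjb.2.2
  have hdich := dichotomy hU hj
  obtain ⟨hb, hd, hc⟩ := hU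
  set P := U.filter (fun p => p.2 ≤ j) with hP
  set Q := U.filter (fun p => ¬ p.2 ≤ j) with hQ
  have hPmem : ∀ p, p ∈ P ↔ p ∈ U ∧ p.2 ≤ j := fun p => Finset.mem_filter
  have hQmem : ∀ p, p ∈ Q ↔ p ∈ U ∧ ¬ p.2 ≤ j := fun p => Finset.mem_filter
  have hjP : (1, j) ∈ P := (hPmem _).2 ⟨hj, le_refl j⟩
  have hQhigh : ∀ q ∈ Q, j < q.1 := by
    intro q hq
    obtain ⟨hqU, hq2⟩ := (hQmem q).1 hq
    rcases hdich q hqU with rfl | h | h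
    · simp at hq2
    · omega
    · exact h
  have hPsec : IsSecStr j P := by
    refine ⟨?_, ?_, ?_⟩
    · intro p hp
      obtain ⟨hpU, hp2⟩ := (hPmem p).1 hp
      have := hb p hpU; omega
    · intro p hp q hq
      exact hd p ((hPmem p).1 hp).1 q ((hPmem q).1 hq).1
    · intro p hp q hq
      exact hc p ((hPmem p).1 hp).1 q ((hPmem q).1 hq).1
  have hQsec : IsSecStr n Q := by
    refine ⟨?_, ?_, ?_⟩
    · intro p hp
      exact hb p ((hQmem p).1 hp).1
    · intro p hp q hq
      exact hd p ((hQmem p).1 hp).1 q ((hQmem q).1 hq).1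
    · intro p hp q hq
      exact hc p ((hQmem p).1 hp).1 q ((hQmem q).1 hq).1
  have hPcan : IsCanonical P := by
    intro p hp
    obtain ⟨hpU, hp2⟩ := (hPmem p).1 hp
    have hpb := hb p hpU
    rcases hcan p hpU with h1 | h1
    · left
      refine (hPmem _).2 ⟨h1, ?_⟩
      have hwb := hb _ h1
      rcases hdich _ h1 with he | h | h
      · rw [he]
      · omega
      · simp at h; omega
    · right
      refine (hPmem _).2 ⟨h1, ?_⟩
      have hwb := hb _ h1
      rcases hdich _ h1 with he | h | h
      · rw [he]
      · omega
      · simp at h; omega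
  have hQcan : IsCanonical Q := by
    intro p hp
    obtain ⟨hpU, hp2⟩ := (hQmem p).1 hp
    have hpb := hb p hpU
    have hphigh := hQhigh p hp
    rcases hcan p hpU with h1 | h1
    · left
      refine (hQmem _).2 ⟨h1, ?_⟩
      simp; omega
    · right
      refine (hQmem _).2 ⟨h1, ?_⟩
      have hwb := hb _ h1
      simp at hwb ⊢; omega
  obtain ⟨V, hVsec, hPeq⟩ := exists_enclose hPsec hjP
  have hQk : ∀ q ∈ Q, j < q.1 := hQhigh
  obtain ⟨W, hWsec, hQeq⟩ := exists_unshift hQsec hQk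
  refine ⟨V, W, ?_, ?_, ?_⟩
  · rw [mem_RF]
    exact ⟨hVsec, hPeq ▸ hPcan⟩
  · rw [mem_CF]
    exact ⟨hWsec, (shift_canon_iff hWsec).1 (hQeq ▸ hQcan)⟩
  · rw [← hPeq, ← hQeq, hP, hQ, Finset.filter_union_filter_not_eq]

lemma card_CFj (h3 : 3 ≤ j) (hjn : j ≤ n) :
    ((CF n).filter (fun S => (1, j) ∈ S)).card = (RF (j - 2)).card * (CF (n - j)).card := by
  rw [← Finset.card_product]
  refine (Finset.card_bij (fun p _ => enclose (j - 2) p.1 ∪ shiftSet j p.2) ?_ ?_ ?_).symm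
  · rintro ⟨V, W⟩ hVW
    rw [Finset.mem_product] at hVW
    exact join_mem h3 hjn hVW.1 hVW.2
  · rintro ⟨V, W⟩ hVW ⟨V', W'⟩ hVW' h
    rw [Finset.mem_product] at hVW hVW'
    dsimp only at hVW hVW' h
    have hV := (mem_RF.1 hVW.1).1
    have hW := (mem_CF.1 hVW.2).1
    have hV' := (mem_RF.1 hVW'.1).1
    have hW' := (mem_CF.1 hVW'.2).1
    have p1 := join_parts h3 hjn hV hW
    have p2 := join_parts h3 hjn hV' hW'
    have eV : enclose (j - 2) V = enclose (j - 2) V' := by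
      rw [← p1.1, ← p2.1, h]
    have eW : shiftSet j W = shiftSet j W' := by
      rw [← p1.2, ← p2.2, h]
    rw [Prod.ext_iff]
    exact ⟨enclose_inj hV hV' eV, shift_inj eW⟩
  · intro U hU
    rw [Finset.mem_filter, mem_CF] at hU
    obtain ⟨⟨hsec, hcan⟩, hj⟩ := hU
    obtain ⟨V, W, hV, hW, hUeq⟩ := split hsec hcan hj
    exact ⟨(V, W), Finset.mem_product.2 ⟨hV, hW⟩, hUeq.symm⟩

end Join

lemma CF_partition {n : ℕ} :
    CF n = (CF n).filter (fun S => ∀ p ∈ S, p.1 ≠ 1) ∪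
      (Finset.Icc 3 n).biUnion (fun j => (CF n).filter (fun S => (1, j) ∈ S)) := by
  ext S
  simp only [Finset.mem_union, Finset.mem_biUnion, Finset.mem_filter, Finset.mem_Icc]
  constructor
  · intro hS
    by_cases hcase : ∀ p ∈ S, p.1 ≠ 1
    · exact Or.inl ⟨hS, hcase⟩
    · push_neg at hcase
      obtain ⟨p, hp, hp1⟩ := hcase
      have hb := (mem_CF.1 hS).1.1 p hp
      have : p = (1, p.2) := by rw [Prod.ext_iff]; simp; omega
      exact Or.inr ⟨p.2, ⟨by omega, by omega⟩, hS, this ▸ hp⟩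
  · rintro (⟨h, -⟩ | ⟨j, -, h, -⟩) <;> exact h

lemma CF_card_partition {n : ℕ} :
    (CF n).card = ((CF n).filter (fun S => ∀ p ∈ S, p.1 ≠ 1)).card +
      ∑ j ∈ Finset.Icc 3 n, ((CF n).filter (fun S => (1, j) ∈ S)).card := by
  rw [← Finset.card_biUnion, ← Finset.card_union_of_disjoint, ← CF_partition]
  · rw [Finset.disjoint_left]
    intro S hS hS'
    simp only [Finset.mem_filter, Finset.mem_biUnion] at hS hS'
    obtain ⟨j, -, -, hj⟩ := hS'
    exact hS.2 _ hj rfl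
  · intro i hi k hk hik
    rw [Function.onFun, Finset.disjoint_left]
    intro S hS hS'
    simp only [Finset.mem_filter] at hS hS'
    have hd := (mem_CF.1 hS.1).1.2.1 _ hS.2 _ hS'.2
      (by simp [Prod.ext_iff]; intro; omega)
    simp at hd

lemma N1 {n : ℕ} (hn : 1 ≤ n) :
    (CF n).card = (CF (n - 1)).card +
      ∑ j ∈ Finset.Icc 3 n, (RF (j - 2)).card * (CF (n - j)).card := by
  rw [CF_card_partition, card_CF0 hn]
  congr 1
  refine Finset.sum_congr rfl fun j hj => ?_
  rw [Finset.mem_Icc] at hj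
  exact card_CFj hj.1 hj.2

lemma N2 {n : ℕ} (hn : 3 ≤ n) :
    (RF n).card + (TF (n - 2)).card = (RF (n - 2)).card + (CF (n - 2)).card := by
  rw [card_RF hn]
  exact card_AF (n - 2)

lemma CF_zero_card : (CF 0).card = 1 := by rw [CF_zero]; simp

noncomputable def sc (n : ℕ) : ℚ := if n = 0 then 0 else ((CF n).card : ℚ)
noncomputable def rc (n : ℕ) : ℚ := ((RF n).card : ℚ)

lemma rc_small {n : ℕ} (h : n < 3) : rc n = 0 := by
  rw [rc, RF_empty h]; simp

lemma sc_pos {n : ℕ} (h : n ≠ 0) : sc n = ((CF n).card : ℚ) := by rw [sc, if_neg h]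

noncomputable def conv (m : ℕ) : ℚ := ∑ i ∈ Finset.range (m + 1), sc i * rc (m - i)

lemma SUM {m : ℕ} (hm : 2 ≤ m) :
    ∑ j ∈ Finset.Icc 3 m, ((RF (j - 2)).card : ℚ) * ((CF (m - j)).card : ℚ) =
      rc (m - 2) + conv (m - 2) := by
  rcases Nat.lt_or_ge m 3 with h3 | h3
  · have hm2 : m = 2 := by omega
    subst hm2
    simp [conv, rc_small, sc]
  -- rewrite conv (m-2)
  have hconv : conv (m - 2) =
      ∑ i ∈ Finset.range (m - 3), ((CF (i + 1)).card : ℚ) * rc (m - 3 - i) := by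
    rw [conv]
    have e : m - 2 + 1 = (m - 2) + 1 := rfl
    rw [Finset.sum_range_succ']
    have h0 : sc 0 * rc (m - 2 - 0) = 0 := by simp [sc]
    rw [h0, add_zero]
    have e2 : m - 2 = (m - 3) + 1 := by omega
    rw [e2, Finset.sum_range_succ]
    have hl : sc (m - 3 + 1) * rc (m - 3 + 1 - (m - 3 + 1)) = 0 := by
      have h' : m - 3 + 1 - (m - 3 + 1) = 0 := by omega
      rw [h', rc_small (by omega), mul_zero]
    rw [hl, add_zero]
    refine Finset.sum_congr rfl fun i hi => ?_
    have hi' := Finset.mem_range.1 hi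
    have e3 : m - 3 + 1 - (i + 1) = m - 3 - i := by omega
    rw [e3, sc_pos (by omega)]
  have hrefl := Finset.sum_range_reflect
    (fun i => ((CF (i + 1)).card : ℚ) * rc (m - 3 - i)) (m - 3)
  rw [hconv, ← hrefl]
  -- now handle LHS
  have hIcc : Finset.Icc 3 m = Finset.Ico 3 (m + 1) := by rw [Finset.Ico_add_one_right_eq_Icc]
  rw [hIcc, Finset.sum_Ico_eq_sum_range]
  have hrange : m + 1 - 3 = (m - 3) + 1 := by omega
  rw [hrange, Finset.sum_range_succ]
  have e1 : 3 + (m - 3) - 2 = m - 2 := by omega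
  have e2 : m - (3 + (m - 3)) = 0 := by omega
  rw [e1, e2, CF_zero_card]
  rw [add_comm (rc (m - 2))]
  congr 1
  · refine Finset.sum_congr rfl fun i hi => ?_
    have hi' := Finset.mem_range.1 hi
    have e3 : 3 + i - 2 = i + 1 := by omega
    have e4 : m - (3 + i) = m - 3 - i := by omega
    have e5 : m - 3 - 1 - i + 1 = m - 3 - i := by omega
    have e6 : m - 3 - (m - 3 - 1 - i) = i + 1 := by omega
    rw [e3, e4, e5, e6, rc, mul_comm]
  · rw [rc]; simp

lemma T1 (n : ℕ) : sc n = (if n = 1 then (1 : ℚ) else 0) +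
    (if 1 ≤ n then sc (n - 1) else 0) + (if 2 ≤ n then rc (n - 2) else 0) +
    (if 2 ≤ n then conv (n - 2) else 0) := by
  have cf1 : ((CF 1).card : ℚ) = 1 := by
    have := N1 (n := 1) (by omega)
    simp at this
    rw [this, CF_zero_card]; norm_num
  rcases Nat.lt_or_ge n 3 with h3 | h3
  · interval_cases n
    · simp [sc]
    · have : sc 1 = ((CF 1).card : ℚ) := sc_pos (by omega)
      rw [this, cf1]; norm_num [sc]
    · have h2 : sc 2 = ((CF 2).card : ℚ) := sc_pos (by omega)
      have := N1 (n := 2) (by omega)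
      have hIcc : Finset.Icc 3 2 = ∅ := by decide
      rw [hIcc] at this
      simp at this
      rw [h2, this, ← cf1]
      have : sc 1 = ((CF 1).card : ℚ) := sc_pos (by omega)
      rw [rc_small (by omega)]
      simp [this, conv, sc, rc_small]
  · have hN := N1 (n := n) (by omega)
    have hcast : ((CF n).card : ℚ) = ((CF (n - 1)).card : ℚ) +
        ∑ j ∈ Finset.Icc 3 n, ((RF (j - 2)).card : ℚ) * ((CF (n - j)).card : ℚ) := by
      rw [hN]; push_cast; ring
    rw [sc_pos (by omega), hcast, SUM (by omega)]
    rw [if_neg (by omega), if_pos (by omega), if_pos (by omega), if_pos (by omega)]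
    rw [sc_pos (by omega)]
    ring

lemma T2 (n : ℕ) : rc n = (if n = 3 then (1 : ℚ) else 0) +
    (if 2 ≤ n then rc (n - 2) else 0) + (if 4 ≤ n then conv (n - 4) else 0) +
    (if 3 ≤ n then sc (n - 3) else 0) := by
  have cf1 : ((CF 1).card : ℚ) = 1 := by
    have := N1 (n := 1) (by omega)
    simp at this
    rw [this, CF_zero_card]; norm_num
  rcases Nat.lt_or_ge n 3 with h3 | h3
  · interval_cases n
    · simp [rc_small]
    · simp [rc_small]
    · simp [rc_small]
  rcases Nat.lt_or_ge n 4 with h4 | h4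
  · have hn3 : n = 3 := by omega
    subst hn3
    have hN := N2 (n := 3) (by omega)
    rw [TF_empty (by omega), RF_empty (n := 1) (by omega)] at hN
    simp at hN
    rw [rc, hN, cf1]
    rw [rc_small (by omega)]
    norm_num [sc]
  · -- n ≥ 4
    have hN := N2 (n := n) (by omega)
    have hcast : (rc n : ℚ) + ((TF (n - 2)).card : ℚ) =
        rc (n - 2) + ((CF (n - 2)).card : ℚ) := by
      rw [rc, rc]; exact_mod_cast congrArg (fun x : ℕ => (x : ℚ)) hN
    have hTF : ((TF (n - 2)).card : ℚ) = rc (n - 4) := by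
      rcases Nat.lt_or_ge n 5 with h5 | h5
      · have : n = 4 := by omega
        subst this
        rw [TF_empty (by omega), rc_small (by omega)]; simp
      · have := card_TF (m := n - 2) (by omega)
        have e : n - 2 - 2 = n - 4 := by omega
        rw [this, e, rc]
    have hN1 := N1 (n := n - 2) (by omega)
    have hcast2 : ((CF (n - 2)).card : ℚ) = ((CF (n - 3)).card : ℚ) +
        ∑ j ∈ Finset.Icc 3 (n - 2), ((RF (j - 2)).card : ℚ) * ((CF (n - 2 - j)).card : ℚ) := by
      have e : n - 2 - 1 = n - 3 := by omega
      rw [hN1, e]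
      push_cast
      ring
    have hSUM := SUM (m := n - 2) (by omega)
    have e1 : n - 2 - 2 = n - 4 := by omega
    rw [e1] at hSUM
    rw [hTF] at hcast
    rw [hcast2, hSUM] at hcast
    rw [if_neg (by omega), if_pos (by omega), if_pos (by omega), if_pos (by omega)]
    rw [sc_pos (by omega)]
    have e2 : ((CF (n - 3)).card : ℚ) = ((CF (n - 3)).card : ℚ) := rfl
    linarith [hcast]

lemma coeff_canonGF (k : ℕ) : (PowerSeries.coeff k) canonGF = sc k := by
  rw [canonGF, PowerSeries.coeff_mk, sc]
  split_ifs with h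
  · rfl
  · rw [numCanonical_eq]

lemma coeff_canonRGF (k : ℕ) : (PowerSeries.coeff k) canonRGF = rc k := by
  rw [canonRGF, PowerSeries.coeff_mk, rc]
  split_ifs with h
  · subst h
    rw [RF_empty (by omega)]
    simp
  · rw [numPreCanonical_eq]

lemma coeff_mul_GF (k : ℕ) :
    (PowerSeries.coeff k) (canonGF * canonRGF) = conv k := by
  rw [PowerSeries.coeff_mul, Finset.Nat.sum_antidiagonal_eq_sum_range_succ_mk, conv]
  exact Finset.sum_congr rfl fun i _ => by rw [coeff_canonGF, coeff_canonRGF]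


open PowerSeries in
/-- The generating functions satisfy `S = z + zS + z²R + z²SR` and
`R = z³ + z²R + z⁴SR + z³S`. -/
theorem canonical_gf_system :
    canonGF = X + X * canonGF + X ^ 2 * canonRGF + X ^ 2 * canonGF * canonRGF ∧
    canonRGF = X ^ 3 + X ^ 2 * canonRGF + X ^ 4 * canonGF * canonRGF
      + X ^ 3 * canonGF := by
  constructor
  · ext n
    rw [map_add, map_add, map_add, coeff_canonGF, coeff_X]
    rw [show (X : ℚ⟦X⟧) * canonGF = X ^ 1 * canonGF by rw [pow_one]]
    rw [coeff_X_pow_mul', coeff_X_pow_mul', mul_assoc, coeff_X_pow_mul']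
    rw [coeff_canonGF, coeff_canonRGF]
    rw [T1 n]
    congr 1
    split_ifs with h
    · rw [coeff_mul_GF]
    · rfl
  · ext n
    rw [map_add, map_add, map_add, coeff_canonRGF, coeff_X_pow]
    rw [coeff_X_pow_mul', mul_assoc, coeff_X_pow_mul', coeff_X_pow_mul']
    rw [coeff_canonRGF, coeff_canonGF]
    rw [T2 n]
    congr 1
    · congr 1
      split_ifs with h
      · rw [coeff_mul_GF]
      · rfl
end

section
/- Let s_n be the number of saturated secondary structures on [1,n] (with θ = 1, and s_0 = 0), and let r_n be the number of saturated secondary structures on [1,n] having no visible position (r_0 = 0). Then the formal power series S(z) = Σ_{n≥1} s_n z^n and R(z) = Σ_{n≥1} r_n z^n in ℚ[[z]] satisfy the system S = z + z² + zR + z²R + z²S + z²S² and R = z²S + z²RS. -/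
/-- A secondary structure on `[1,n]` is saturated if no base pair can be added
so that the result is still a secondary structure on `[1,n]`. -/
def IsSaturated (n : ℕ) (S : Finset (ℕ × ℕ)) : Prop :=
  IsSecStr n S ∧ ∀ p : ℕ × ℕ, p ∉ S → ¬ IsSecStr n (insert p S)

/-- No position of `[1,n]` is visible in `S` (i.e. external to every base pair):
every `i ∈ [1,n]` lies (weakly) between the two ends of some base pair. -/
def NoVisible (n : ℕ) (S : Finset (ℕ × ℕ)) : Prop :=
  ∀ i : ℕ, 1 ≤ i → i ≤ n → ∃ p ∈ S, p.1 ≤ i ∧ i ≤ p.2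

/-- `S(z) = Σ_{n≥1} s_n zⁿ`, with `s_n` the number of saturated secondary structures
on `[1,n]` (θ = 1). -/
noncomputable def satGF : PowerSeries ℚ :=
  PowerSeries.mk fun n =>
    if n = 0 then 0 else (Set.ncard {S : Finset (ℕ × ℕ) | IsSaturated n S} : ℚ)

/-- `R(z) = Σ_{n≥1} r_n zⁿ`, with `r_n` the number of saturated secondary structures
on `[1,n]` having no visible position. -/
noncomputable def satNoVisGF : PowerSeries ℚ :=
  PowerSeries.mk fun n =>
    if n = 0 then 0
    else (Set.ncard {S : Finset (ℕ × ℕ) | IsSaturated n S ∧ NoVisible n S} : ℚ)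

open Finset

attribute [local instance] Classical.propDecidable

noncomputable def satF (n : ℕ) : Finset (Finset (ℕ × ℕ)) :=
  ((Finset.Iic n ×ˢ Finset.Iic n).powerset).filter fun S => IsSaturated n S

noncomputable def satnvF (n : ℕ) : Finset (Finset (ℕ × ℕ)) :=
  ((Finset.Iic n ×ˢ Finset.Iic n).powerset).filter fun S => IsSaturated n S ∧ NoVisible n S

lemma subset_box {n : ℕ} {S : Finset (ℕ × ℕ)} (h : IsSecStr n S) :
    S ⊆ Finset.Iic n ×ˢ Finset.Iic n := by
  intro p hp
  have := h.1 p hp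
  simp only [Finset.mem_product, Finset.mem_Iic]
  omega

lemma mem_satF {n : ℕ} {S : Finset (ℕ × ℕ)} : S ∈ satF n ↔ IsSaturated n S := by
  simp only [satF, mem_filter, mem_powerset, and_iff_right_iff_imp]
  exact fun h => subset_box h.1

lemma mem_satnvF {n : ℕ} {S : Finset (ℕ × ℕ)} :
    S ∈ satnvF n ↔ IsSaturated n S ∧ NoVisible n S := by
  simp only [satnvF, mem_filter, mem_powerset, and_iff_right_iff_imp]
  exact fun h => subset_box h.1.1

lemma ncard_sat (n : ℕ) :
    Set.ncard {S : Finset (ℕ × ℕ) | IsSaturated n S} = (satF n).card := by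
  rw [show {S : Finset (ℕ × ℕ) | IsSaturated n S} = ↑(satF n) by
    ext S; simp [mem_satF], Set.ncard_coe_finset]

lemma ncard_satnv (n : ℕ) :
    Set.ncard {S : Finset (ℕ × ℕ) | IsSaturated n S ∧ NoVisible n S} = (satnvF n).card := by
  rw [show {S : Finset (ℕ × ℕ) | IsSaturated n S ∧ NoVisible n S} = ↑(satnvF n) by
    ext S; simp [mem_satnvF], Set.ncard_coe_finset]

/-! ### shifts -/

def upE (d : ℕ) : ℕ × ℕ ↪ ℕ × ℕ :=
  ⟨fun p => (p.1 + d, p.2 + d), by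
    intro p q h
    simp only [Prod.ext_iff] at h ⊢
    omega⟩

@[simp] lemma upE_apply (d : ℕ) (p : ℕ × ℕ) : upE d p = (p.1 + d, p.2 + d) := rfl

def up (d : ℕ) (S : Finset (ℕ × ℕ)) : Finset (ℕ × ℕ) := S.map (upE d)

def down (d : ℕ) (S : Finset (ℕ × ℕ)) : Finset (ℕ × ℕ) :=
  S.image fun p => (p.1 - d, p.2 - d)

lemma mem_up {d : ℕ} {S : Finset (ℕ × ℕ)} {a b : ℕ} :
    (a, b) ∈ up d S ↔ d ≤ a ∧ d ≤ b ∧ (a - d, b - d) ∈ S := by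
  simp only [up, mem_map, upE_apply, Prod.ext_iff]
  constructor
  · rintro ⟨p, hp, h1, h2⟩
    refine ⟨by omega, by omega, ?_⟩
    have : (a - d, b - d) = p := by
      simp only [Prod.ext_iff]; omega
    rwa [this]
  · rintro ⟨h1, h2, hp⟩
    exact ⟨_, hp, by omega, by omega⟩

lemma up_insert (d : ℕ) (q : ℕ × ℕ) (S : Finset (ℕ × ℕ)) :
    up d (insert q S) = insert (q.1 + d, q.2 + d) (up d S) := by
  simp [up, Finset.map_insert, upE_apply]

lemma down_insert (d : ℕ) (q : ℕ × ℕ) (S : Finset (ℕ × ℕ)) :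
    down d (insert q S) = insert (q.1 - d, q.2 - d) (down d S) := by
  simp [down, Finset.image_insert]

lemma down_up (d : ℕ) (S : Finset (ℕ × ℕ)) : down d (up d S) = S := by
  ext ⟨a, b⟩
  simp only [down, mem_image]
  constructor
  · rintro ⟨⟨x, y⟩, hp, h⟩
    rw [mem_up] at hp
    simp only [Prod.ext_iff] at h
    have : (a, b) = (x - d, y - d) := by simp only [Prod.ext_iff]; omega
    rw [this]; exact hp.2.2
  · intro h
    refine ⟨(a + d, b + d), ?_, by simp only [Prod.ext_iff]; omega⟩
    rw [mem_up]
    refine ⟨by omega, by omega, ?_⟩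
    simpa using h

lemma up_down {d : ℕ} {S : Finset (ℕ × ℕ)} (h : ∀ p ∈ S, d ≤ p.1 ∧ d ≤ p.2) :
    up d (down d S) = S := by
  ext ⟨a, b⟩
  rw [mem_up]
  simp only [down, mem_image]
  constructor
  · rintro ⟨h1, h2, ⟨x, y⟩, hp, heq⟩
    simp only [Prod.ext_iff] at heq
    have hb := h _ hp
    have : (a, b) = (x, y) := by simp only [Prod.ext_iff] at *; omega
    rwa [this]
  · intro hab
    have hb := h _ hab
    exact ⟨by omega, by omega, (a, b), hab, rfl⟩
/-! ### components of IsSecStr -/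

def Disj (S : Finset (ℕ × ℕ)) : Prop :=
  ∀ p ∈ S, ∀ q ∈ S, p ≠ q → p.1 ≠ q.1 ∧ p.1 ≠ q.2 ∧ p.2 ≠ q.1 ∧ p.2 ≠ q.2

def NC (S : Finset (ℕ × ℕ)) : Prop :=
  ∀ p ∈ S, ∀ q ∈ S, ¬ (p.1 < q.1 ∧ q.1 < p.2 ∧ p.2 < q.2)

lemma isSecStr_def {n : ℕ} {S : Finset (ℕ × ℕ)} :
    IsSecStr n S ↔ (∀ p ∈ S, 1 ≤ p.1 ∧ p.1 + 1 < p.2 ∧ p.2 ≤ n) ∧ Disj S ∧ NC S :=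
  Iff.rfl

lemma Disj.mono {S T : Finset (ℕ × ℕ)} (hsub : S ⊆ T) (h : Disj T) : Disj S :=
  fun p hp q hq => h p (hsub hp) q (hsub hq)

lemma NC.mono {S T : Finset (ℕ × ℕ)} (hsub : S ⊆ T) (h : NC T) : NC S :=
  fun p hp q hq => h p (hsub hp) q (hsub hq)

lemma disj_up {d : ℕ} {S : Finset (ℕ × ℕ)} (h : Disj S) : Disj (up d S) := by
  rintro ⟨a, b⟩ hp ⟨c, e⟩ hq hne
  rw [mem_up] at hp hq
  have hne' : (a - d, b - d) ≠ (c - d, e - d) := by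
    simp only [Ne, Prod.ext_iff] at hne ⊢
    omega
  have := h _ hp.2.2 _ hq.2.2 hne'
  simp only [Prod.ext_iff] at this ⊢
  omega

lemma nc_up {d : ℕ} {S : Finset (ℕ × ℕ)} (h : NC S) : NC (up d S) := by
  rintro ⟨a, b⟩ hp ⟨c, e⟩ hq
  rw [mem_up] at hp hq
  have := h _ hp.2.2 _ hq.2.2
  simp only [Prod.ext_iff] at this ⊢
  omega

lemma disj_down {d : ℕ} {S : Finset (ℕ × ℕ)} (hb : ∀ p ∈ S, d ≤ p.1 ∧ p.1 < p.2)
    (h : Disj S) : Disj (down d S) := by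
  rintro p' hp' q' hq' hne
  simp only [down, mem_image] at hp' hq'
  obtain ⟨p, hp, rfl⟩ := hp'
  obtain ⟨q, hq, rfl⟩ := hq'
  have hne' : p ≠ q := by rintro rfl; exact hne rfl
  have h1 := hb p hp
  have h2 := hb q hq
  have := h p hp q hq hne'
  simp only [Prod.ext_iff] at this ⊢
  omega

lemma nc_down {d : ℕ} {S : Finset (ℕ × ℕ)} (hb : ∀ p ∈ S, d ≤ p.1 ∧ p.1 < p.2)
    (h : NC S) : NC (down d S) := by
  rintro p' hp' q' hq'
  simp only [down, mem_image] at hp' hq'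
  obtain ⟨p, hp, rfl⟩ := hp'
  obtain ⟨q, hq, rfl⟩ := hq'
  have h1 := hb p hp
  have h2 := hb q hq
  have := h p hp q hq
  simp only [Prod.ext_iff] at this ⊢
  omega

lemma secstr_down {m d : ℕ} {W : Finset (ℕ × ℕ)}
    (hb : ∀ p ∈ W, d + 1 ≤ p.1 ∧ p.1 + 1 < p.2 ∧ p.2 ≤ m + d)
    (hd : Disj W) (hn : NC W) : IsSecStr m (down d W) := by
  refine ⟨?_, disj_down (fun p hp => by have := hb p hp; omega) hd,
    nc_down (fun p hp => by have := hb p hp; omega) hn⟩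
  rintro p' hp'
  simp only [down, mem_image] at hp'
  obtain ⟨p, hp, rfl⟩ := hp'
  have := hb p hp
  simp only [Prod.ext_iff]
  omega

lemma up1_bounds {j : ℕ} {T : Finset (ℕ × ℕ)} (hT : IsSecStr (j - 2) T) (hj : 3 ≤ j) :
    ∀ p ∈ up 1 T, 2 ≤ p.1 ∧ p.1 + 1 < p.2 ∧ p.2 ≤ j - 1 := by
  rintro ⟨a, b⟩ hp
  rw [mem_up] at hp
  have := hT.1 _ hp.2.2
  simp only at this ⊢
  omega

lemma upj_bounds {n j : ℕ} {U : Finset (ℕ × ℕ)} (hU : IsSecStr (n - j) U) (hjn : j ≤ n) :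
    ∀ p ∈ up j U, j + 1 ≤ p.1 ∧ p.1 + 1 < p.2 ∧ p.2 ≤ n := by
  rintro ⟨a, b⟩ hp
  rw [mem_up] at hp
  have := hU.1 _ hp.2.2
  simp only at this ⊢
  omega

/-- The master construction: gluing two secondary structures under a pair `(1,j)`. -/
lemma psi_secstr {n j : ℕ} (hj : 3 ≤ j) (hjn : j ≤ n) {T U : Finset (ℕ × ℕ)}
    (hT : IsSecStr (j - 2) T) (hU : IsSecStr (n - j) U) :
    IsSecStr n (insert (1, j) (up 1 T ∪ up j U)) := by
  have bT := up1_bounds hT hj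
  have bU := upj_bounds hU hjn
  have mem_iff : ∀ p : ℕ × ℕ, p ∈ insert (1, j) (up 1 T ∪ up j U) ↔
      p = (1, j) ∨ p ∈ up 1 T ∨ p ∈ up j U := by
    intro p; simp [mem_insert, mem_union]
  have dT := disj_up (d := 1) hT.2.1
  have dU := disj_up (d := j) hU.2.1
  have nT := nc_up (d := 1) hT.2.2
  have nU := nc_up (d := j) hU.2.2
  refine ⟨?_, ?_, ?_⟩
  · intro p hp
    rcases (mem_iff p).1 hp with rfl | hp | hp
    · simp only; omega
    · have := bT p hp; omega
    · have := bU p hp; omega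
  · intro p hp q hq hne
    rcases (mem_iff p).1 hp with rfl | hp | hp <;>
      rcases (mem_iff q).1 hq with rfl | hq | hq
    · exact absurd rfl hne
    · have := bT q hq; simp only at *; omega
    · have := bU q hq; simp only at *; omega
    · have := bT p hp; simp only at *; omega
    · exact dT p hp q hq hne
    · have h1 := bT p hp; have h2 := bU q hq; omega
    · have := bU p hp; simp only at *; omega
    · have h1 := bU p hp; have h2 := bT q hq; omega
    · exact dU p hp q hq hne
  · intro p hp q hq
    rcases (mem_iff p).1 hp with rfl | hp | hp <;>
      rcases (mem_iff q).1 hq with rfl | hq | hq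
    · simp only; omega
    · have := bT q hq; simp only at *; omega
    · have := bU q hq; simp only at *; omega
    · have := bT p hp; simp only at *; omega
    · exact nT p hp q hq
    · have h1 := bT p hp; have h2 := bU q hq; omega
    · have := bU p hp; simp only at *; omega
    · have h1 := bU p hp; have h2 := bT q hq; omega
    · exact nU p hp q hq

/-! ### classification of pairs relative to (1,j) -/

lemma pair_zones {n j : ℕ} {S : Finset (ℕ × ℕ)} (h : IsSecStr n S) (hmem : (1, j) ∈ S)
    {p : ℕ × ℕ} (hp : p ∈ S) :
    p = (1, j) ∨ (2 ≤ p.1 ∧ p.1 + 1 < p.2 ∧ p.2 ≤ j - 1) ∨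
      (j + 1 ≤ p.1 ∧ p.1 + 1 < p.2 ∧ p.2 ≤ n) := by
  by_cases hpq : p = (1, j)
  · exact Or.inl hpq
  · have hb := h.1 p hp
    have hbj := h.1 _ hmem
    have hd := h.2.1 p hp _ hmem hpq
    have hnc := h.2.2 (1, j) hmem p hp
    simp only at hbj hd hnc
    omega

lemma decompA {n j : ℕ} {S : Finset (ℕ × ℕ)} (h : IsSecStr n S) (hmem : (1, j) ∈ S) :
    S = insert (1, j) (up 1 (down 1 (S.filter fun p => p.2 < j)) ∪
      up j (down j (S.filter fun p => j < p.1))) := by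
  have hbj := h.1 _ hmem
  simp only at hbj
  rw [up_down (by
    rintro p hp
    rw [mem_filter] at hp
    have := h.1 p hp.1
    omega)]
  rw [up_down (by
    rintro p hp
    rw [mem_filter] at hp
    have := h.1 p hp.1
    omega)]
  ext p
  simp only [mem_insert, mem_union, mem_filter]
  constructor
  · intro hp
    rcases pair_zones h hmem hp with hz | hz | hz
    · exact Or.inl hz
    · exact Or.inr (Or.inl ⟨hp, by omega⟩)
    · exact Or.inr (Or.inr ⟨hp, by omega⟩)
  · rintro (rfl | ⟨hp, _⟩ | ⟨hp, _⟩) <;> first | exact hmem | exact hp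

/-! ### saturation transfer for the pair-split case -/

lemma satA {n j : ℕ} (hj : 3 ≤ j) (hjn : j ≤ n) {T U : Finset (ℕ × ℕ)}
    (hT : IsSecStr (j - 2) T) (hU : IsSecStr (n - j) U) :
    IsSaturated n (insert (1, j) (up 1 T ∪ up j U)) ↔
      IsSaturated (j - 2) T ∧ IsSaturated (n - j) U := by
  set S := insert (1, j) (up 1 T ∪ up j U) with hS
  have bT := up1_bounds hT hj
  have bU := upj_bounds hU hjn
  have hTS : up 1 T ⊆ S := Finset.subset_union_left.trans (Finset.subset_insert _ _)
  have hUS : up j U ⊆ S := Finset.subset_union_right.trans (Finset.subset_insert _ _)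
  constructor
  · rintro ⟨hsec, hsat⟩
    refine ⟨⟨hT, fun q hq hins => ?_⟩, ⟨hU, fun q hq hins => ?_⟩⟩
    · -- lift q by 1
      have hqb := hins.1 q (mem_insert_self _ _)
      have hnew : IsSecStr n (insert (1, j) (up 1 (insert q T) ∪ up j U)) :=
        psi_secstr hj hjn hins hU
      rw [up_insert, Finset.insert_union, Finset.insert_comm] at hnew
      refine hsat (q.1 + 1, q.2 + 1) ?_ hnew
      intro hmem
      rcases mem_insert.1 hmem with heq | hmem
      · rw [Prod.ext_iff] at heq
        simp only at heq
        omega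
      rcases mem_union.1 hmem with hm | hm
      · rw [mem_up] at hm
        have he : (q.1 + 1 - 1, q.2 + 1 - 1) = q := by simp
        rw [he] at hm
        exact hq hm.2.2
      · have := bU _ hm
        simp only at this
        omega
    · have hqb := hins.1 q (mem_insert_self _ _)
      have hnew : IsSecStr n (insert (1, j) (up 1 T ∪ up j (insert q U))) :=
        psi_secstr hj hjn hT hins
      rw [up_insert, Finset.union_insert, Finset.insert_comm] at hnew
      refine hsat (q.1 + j, q.2 + j) ?_ hnew
      intro hmem
      rcases mem_insert.1 hmem with heq | hmem
      · rw [Prod.ext_iff] at heq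
        simp only at heq
        omega
      rcases mem_union.1 hmem with hm | hm
      · have := bT _ hm
        simp only at this
        omega
      · rw [mem_up] at hm
        have he : (q.1 + j - j, q.2 + j - j) = q := by simp
        rw [he] at hm
        exact hq hm.2.2
  · rintro ⟨⟨_, hsatT⟩, ⟨_, hsatU⟩⟩
    refine ⟨psi_secstr hj hjn hT hU, fun q hq hins => ?_⟩
    have hqS : q ∈ insert q S := mem_insert_self _ _
    have hjS : (1, j) ∈ insert q S := mem_insert_of_mem (mem_insert_self _ _)
    have hqb := hins.1 q hqS
    have hd := hins.2.1 q hqS _ hjS (by rintro rfl; exact hq (mem_insert_self _ _))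
    have hnc := hins.2.2 (1, j) hjS q hqS
    simp only at hd hnc
    have hcase : (2 ≤ q.1 ∧ q.2 ≤ j - 1) ∨ (j + 1 ≤ q.1) := by omega
    rcases hcase with hz | hz
    · -- q is inside: contradict saturation of T
      have hq' : (q.1 - 1, q.2 - 1) ∉ T := by
        intro hmem
        exact hq (hTS (by rw [show q = (q.1, q.2) from rfl, mem_up]; exact ⟨by omega, by omega, hmem⟩))
      refine hsatT _ hq' ?_
      have hWsub : insert q (up 1 T) ⊆ insert q S := insert_subset_insert _ hTS
      have : insert (q.1 - 1, q.2 - 1) T = down 1 (insert q (up 1 T)) := by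
        rw [down_insert, down_up]
      rw [this]
      refine secstr_down ?_ (Disj.mono hWsub hins.2.1) (NC.mono hWsub hins.2.2)
      intro p hp
      rcases mem_insert.1 hp with rfl | hp
      · omega
      · have := bT p hp; omega
    · -- q is outside: contradict saturation of U
      have hq' : (q.1 - j, q.2 - j) ∉ U := by
        intro hmem
        exact hq (hUS (by rw [show q = (q.1, q.2) from rfl, mem_up]; exact ⟨by omega, by omega, hmem⟩))
      refine hsatU _ hq' ?_
      have hWsub : insert q (up j U) ⊆ insert q S := insert_subset_insert _ hUS
      have : insert (q.1 - j, q.2 - j) U = down j (insert q (up j U)) := by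
        rw [down_insert, down_up]
      rw [this]
      refine secstr_down ?_ (Disj.mono hWsub hins.2.1) (NC.mono hWsub hins.2.2)
      intro p hp
      rcases mem_insert.1 hp with rfl | hp
      · omega
      · have := bU p hp; omega

lemma novisA {n j : ℕ} (hj : 3 ≤ j) (hjn : j ≤ n) {T U : Finset (ℕ × ℕ)}
    (hT : IsSecStr (j - 2) T) (hU : IsSecStr (n - j) U) :
    NoVisible n (insert (1, j) (up 1 T ∪ up j U)) ↔ NoVisible (n - j) U := by
  have bT := up1_bounds hT hj
  have bU := upj_bounds hU hjn
  constructor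
  · intro h i hi1 hi2
    obtain ⟨p, hp, hc1, hc2⟩ := h (i + j) (by omega) (by omega)
    rcases mem_insert.1 hp with rfl | hp
    · simp only at hc1 hc2; omega
    rcases mem_union.1 hp with hp | hp
    · have := bT p hp; omega
    · obtain ⟨a, b⟩ := p
      rw [mem_up] at hp
      have := bU (a, b) (by rw [mem_up]; exact hp)
      exact ⟨(a - j, b - j), hp.2.2, by simp only at *; omega⟩
  · intro h i hi1 hi2
    by_cases hij : i ≤ j
    · exact ⟨(1, j), mem_insert_self _ _, by simp only; omega⟩
    · obtain ⟨p, hp, hc1, hc2⟩ := h (i - j) (by omega) (by omega)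
      refine ⟨(p.1 + j, p.2 + j), mem_insert_of_mem (mem_union_right _ ?_), by simp only; omega⟩
      rw [mem_up]
      simpa using hp

/-! ### visible positions and shifted structures -/

def Vis (i : ℕ) (S : Finset (ℕ × ℕ)) : Prop := ∀ p ∈ S, i < p.1 ∨ p.2 < i

lemma secstr_up' {m d : ℕ} {T : Finset (ℕ × ℕ)} (hT : IsSecStr m T) :
    IsSecStr (m + d) (up d T) := by
  refine ⟨?_, disj_up hT.2.1, nc_up hT.2.2⟩
  rintro ⟨a, b⟩ hp
  rw [mem_up] at hp
  have := hT.1 _ hp.2.2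
  simp only at this ⊢
  omega

/-- In a saturated structure where position 1 is visible, every position `k ∈ [3,n]`
is covered by some pair (else `(1,k)` could be added). -/
lemma vis_saturated {n k : ℕ} {S : Finset (ℕ × ℕ)} (h : IsSaturated n S)
    (h2 : ∀ p ∈ S, 2 ≤ p.1) (hk3 : 3 ≤ k) (hkn : k ≤ n) :
    ∃ p ∈ S, p.1 ≤ k ∧ k ≤ p.2 := by
  by_contra hc
  push_neg at hc
  refine h.2 (1, k) (fun hmem => by have := h2 _ hmem; simp only at this; omega) ⟨?_, ?_, ?_⟩
  · intro p hp
    rcases mem_insert.1 hp with rfl | hp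
    · simp only; omega
    · exact h.1.1 p hp
  · intro p hp q hq hne
    rcases mem_insert.1 hp with rfl | hp <;> rcases mem_insert.1 hq with rfl | hq
    · exact absurd rfl hne
    · have hb := h.1.1 q hq
      have := h2 q hq
      have := hc q hq
      simp only at *
      omega
    · have hb := h.1.1 p hp
      have := h2 p hp
      have := hc p hp
      simp only at *
      omega
    · exact h.1.2.1 p hp q hq hne
  · intro p hp q hq
    rcases mem_insert.1 hp with rfl | hp <;> rcases mem_insert.1 hq with rfl | hq
    · simp only; omega
    · have hb := h.1.1 q hq
      have := h2 q hq
      have := hc q hq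
      simp only at *
      omega
    · have hb := h.1.1 p hp
      have := h2 p hp
      have := hc p hp
      simp only at *
      omega
    · exact h.1.2.2 p hp q hq

/-- Master lemma for the cases where the first `d` positions are visible (`d ∈ {1,2}`). -/
lemma satShift {n d : ℕ} (hd : 1 ≤ d) (hd2 : d ≤ 2) (hdn : d ≤ n) {T : Finset (ℕ × ℕ)} :
    (IsSaturated n (up d T) ∧ Vis d (up d T)) ↔
      (IsSaturated (n - d) T ∧
        ∀ i : ℕ, 1 ≤ i → 3 ≤ i + d → i ≤ n - d → ∃ p ∈ T, p.1 ≤ i ∧ i ≤ p.2) := by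
  constructor
  · rintro ⟨hsat, hvis⟩
    have hbig : ∀ p ∈ up d T, d + 1 ≤ p.1 ∧ p.1 + 1 < p.2 ∧ p.2 ≤ n := by
      rintro ⟨a, b⟩ hp
      have hb := hsat.1.1 _ hp
      have hv := hvis _ hp
      rw [mem_up] at hp
      simp only at hb hv ⊢
      omega
    have hTd : T = down d (up d T) := (down_up d T).symm
    have hsecT : IsSecStr (n - d) T := by
      rw [hTd]
      exact secstr_down (fun p hp => by have := hbig p hp; omega) hsat.1.2.1 hsat.1.2.2
    refine ⟨⟨hsecT, fun q hq hins => ?_⟩, fun i hi1 hi3 hi2 => ?_⟩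
    · have hup : IsSecStr (n - d + d) (up d (insert q T)) := secstr_up' hins
      rw [up_insert, show n - d + d = n by omega] at hup
      refine hsat.2 (q.1 + d, q.2 + d) (fun hmem => ?_) hup
      rw [mem_up] at hmem
      have he : (q.1 + d - d, q.2 + d - d) = q := by simp
      rw [he] at hmem
      exact hq hmem.2.2
    · obtain ⟨p, hp, hc1, hc2⟩ := vis_saturated hsat
        (fun p hp => by have := hbig p hp; omega) hi3 (by omega)
      obtain ⟨a, b⟩ := p
      rw [mem_up] at hp
      have := hbig (a, b) (by rw [mem_up]; exact hp)
      simp only at hc1 hc2 this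
      exact ⟨(a - d, b - d), hp.2.2, by simp only; omega⟩
  · rintro ⟨⟨hsecT, hsatT⟩, hcov⟩
    have hsecS : IsSecStr n (up d T) := by
      have := secstr_up' (d := d) hsecT
      rwa [show n - d + d = n by omega] at this
    have hbig : ∀ p ∈ up d T, d + 1 ≤ p.1 ∧ p.1 + 1 < p.2 ∧ p.2 ≤ n := by
      rintro ⟨a, b⟩ hp
      rw [mem_up] at hp
      have := hsecT.1 _ hp.2.2
      simp only at this ⊢
      omega
    have hvis : Vis d (up d T) := fun p hp => Or.inl (by have := hbig p hp; omega)
    refine ⟨⟨hsecS, fun q hq hins => ?_⟩, hvis⟩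
    have hqb := hins.1 q (mem_insert_self _ _)
    by_cases hq1 : q.1 ≤ d
    · -- q starts in the visible zone: its right end is covered, contradiction
      obtain ⟨p, hp, hc1, hc2⟩ := hcov (q.2 - d) (by omega) (by omega) (by omega)
      have hpS : (p.1 + d, p.2 + d) ∈ up d T := by
        rw [mem_up]
        simpa using hp
      have hbp := hbig _ hpS
      have hd' := hins.2.1 q (mem_insert_self _ _) _ (mem_insert_of_mem hpS)
        (by rintro rfl; simp only at hq1 hbp; omega)
      have hnc := hins.2.2 q (mem_insert_self _ _) _ (mem_insert_of_mem hpS)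
      simp only at hd' hnc hbp
      omega
    · -- q is entirely in the shifted zone: contradict saturation of T
      have hq' : (q.1 - d, q.2 - d) ∉ T := by
        intro hmem
        exact hq (by rw [show q = (q.1, q.2) from rfl, mem_up]; exact ⟨by omega, by omega, hmem⟩)
      refine hsatT _ hq' ?_
      have : insert (q.1 - d, q.2 - d) T = down d (insert q (up d T)) := by
        rw [down_insert, down_up]
      rw [this]
      refine secstr_down ?_ hins.2.1 hins.2.2
      intro p hp
      rcases mem_insert.1 hp with rfl | hp
      · omega
      · have := hbig p hp; omega

lemma caseB_iff {n : ℕ} (hn : 2 ≤ n) {T : Finset (ℕ × ℕ)} :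
    (IsSaturated n (up 1 T) ∧ Vis 1 (up 1 T) ∧ ¬ Vis 2 (up 1 T)) ↔
      (IsSaturated (n - 1) T ∧ NoVisible (n - 1) T) := by
  have key := satShift (n := n) (d := 1) le_rfl (by omega) (by omega) (T := T)
  constructor
  · rintro ⟨hsat, hvis, hnvis⟩
    obtain ⟨hT, hcov⟩ := key.1 ⟨hsat, hvis⟩
    refine ⟨hT, fun i hi1 hi2 => ?_⟩
    rcases Nat.lt_or_ge i 2 with hi | hi
    · -- i = 1 : from ¬ Vis 2
      have h1 : i = 1 := by omega
      subst h1
      rw [Vis] at hnvis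
      push_neg at hnvis
      obtain ⟨p, hp, hc1, hc2⟩ := hnvis
      obtain ⟨a, b⟩ := p
      rw [mem_up] at hp
      simp only at hc1 hc2
      exact ⟨(a - 1, b - 1), hp.2.2, by simp only; omega⟩
    · exact hcov i hi1 (by omega) hi2
  · rintro ⟨hT, hnv⟩
    obtain ⟨hsat, hvis⟩ := key.2 ⟨hT, fun i hi1 _ hi2 => hnv i hi1 hi2⟩
    refine ⟨hsat, hvis, ?_⟩
    rw [Vis]
    push_neg
    obtain ⟨p, hp, hc1, hc2⟩ := hnv 1 le_rfl (by omega)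
    refine ⟨(p.1 + 1, p.2 + 1), by rw [mem_up]; simpa using hp, by simp only; omega⟩

lemma caseC_iff {n : ℕ} (hn : 2 ≤ n) {T : Finset (ℕ × ℕ)} :
    (IsSaturated n (up 2 T) ∧ Vis 2 (up 2 T)) ↔
      (IsSaturated (n - 2) T ∧ NoVisible (n - 2) T) := by
  have key := satShift (n := n) (d := 2) (by omega) le_rfl (by omega) (T := T)
  rw [key]
  constructor
  · rintro ⟨hT, hcov⟩
    exact ⟨hT, fun i hi1 hi2 => hcov i hi1 (by omega) hi2⟩
  · rintro ⟨hT, hnv⟩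
    exact ⟨hT, fun i hi1 _ hi2 => hnv i hi1 hi2⟩

/-! ### cardinality bijections -/

lemma parts_secstr {n j : ℕ} (hj : 3 ≤ j) (hjn : j ≤ n) {S : Finset (ℕ × ℕ)}
    (h : IsSecStr n S) (hmem : (1, j) ∈ S) :
    IsSecStr (j - 2) (down 1 (S.filter fun p => p.2 < j)) ∧
      IsSecStr (n - j) (down j (S.filter fun p => j < p.1)) := by
  constructor
  · refine secstr_down ?_ (Disj.mono (filter_subset _ _) h.2.1)
      (NC.mono (filter_subset _ _) h.2.2)
    intro p hp
    rw [mem_filter] at hp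
    rcases pair_zones h hmem hp.1 with rfl | hz | hz
    · simp only at hp; omega
    · omega
    · omega
  · refine secstr_down ?_ (Disj.mono (filter_subset _ _) h.2.1)
      (NC.mono (filter_subset _ _) h.2.2)
    intro p hp
    rw [mem_filter] at hp
    rcases pair_zones h hmem hp.1 with rfl | hz | hz
    · simp only at hp; omega
    · omega
    · omega

lemma phi_psi {n j : ℕ} (hj : 3 ≤ j) (hjn : j ≤ n) {T U : Finset (ℕ × ℕ)}
    (hT : IsSecStr (j - 2) T) (hU : IsSecStr (n - j) U) :
    down 1 ((insert (1, j) (up 1 T ∪ up j U)).filter fun p => p.2 < j) = T ∧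
      down j ((insert (1, j) (up 1 T ∪ up j U)).filter fun p => j < p.1) = U := by
  have bT := up1_bounds hT hj
  have bU := upj_bounds hU hjn
  have h1 : (insert (1, j) (up 1 T ∪ up j U)).filter (fun p => p.2 < j) = up 1 T := by
    ext p
    simp only [mem_filter, mem_insert, mem_union]
    constructor
    · rintro ⟨rfl | hp | hp, h2⟩
      · simp only at h2; omega
      · exact hp
      · have := bU p hp; omega
    · intro hp
      exact ⟨Or.inr (Or.inl hp), by have := bT p hp; omega⟩
  have h2 : (insert (1, j) (up 1 T ∪ up j U)).filter (fun p => j < p.1) = up j U := by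
    ext p
    simp only [mem_filter, mem_insert, mem_union]
    constructor
    · rintro ⟨rfl | hp | hp, h2⟩
      · simp only at h2; omega
      · have := bT p hp; omega
      · exact hp
    · intro hp
      exact ⟨Or.inr (Or.inr hp), by have := bU p hp; omega⟩
  rw [h1, h2, down_up, down_up]
  exact ⟨rfl, rfl⟩

lemma cardA {n j : ℕ} (hj : 3 ≤ j) (hjn : j ≤ n) :
    ((satF n).filter fun S => (1, j) ∈ S).card = (satF (j - 2)).card * (satF (n - j)).card := by
  rw [← Finset.card_product]
  refine Finset.card_bij'
    (fun S _ => (down 1 (S.filter fun p => p.2 < j), down j (S.filter fun p => j < p.1)))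
    (fun TU _ => insert (1, j) (up 1 TU.1 ∪ up j TU.2)) ?_ ?_ ?_ ?_
  · intro S hS
    rw [mem_filter, mem_satF] at hS
    obtain ⟨hsat, hmem⟩ := hS
    obtain ⟨hT, hU⟩ := parts_secstr hj hjn hsat.1 hmem
    have hdec := decompA hsat.1 hmem
    rw [Finset.mem_product, mem_satF, mem_satF]
    have := (satA hj hjn hT hU).1 (hdec ▸ hsat)
    exact this
  · intro TU hTU
    rw [Finset.mem_product, mem_satF, mem_satF] at hTU
    rw [mem_filter, mem_satF]
    exact ⟨(satA hj hjn hTU.1.1 hTU.2.1).2 hTU, mem_insert_self _ _⟩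
  · intro S hS
    rw [mem_filter, mem_satF] at hS
    exact (decompA hS.1.1 hS.2).symm
  · intro TU hTU
    rw [Finset.mem_product, mem_satF, mem_satF] at hTU
    obtain ⟨h1, h2⟩ := phi_psi hj hjn hTU.1.1 hTU.2.1
    exact Prod.ext h1 h2

lemma cardA' {n j : ℕ} (hj : 3 ≤ j) (hjn : j ≤ n) :
    ((satnvF n).filter fun S => (1, j) ∈ S).card
      = (satF (j - 2)).card * (satnvF (n - j)).card := by
  rw [← Finset.card_product]
  refine Finset.card_bij'
    (fun S _ => (down 1 (S.filter fun p => p.2 < j), down j (S.filter fun p => j < p.1)))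
    (fun TU _ => insert (1, j) (up 1 TU.1 ∪ up j TU.2)) ?_ ?_ ?_ ?_
  · intro S hS
    rw [mem_filter, mem_satnvF] at hS
    obtain ⟨⟨hsat, hnv⟩, hmem⟩ := hS
    obtain ⟨hT, hU⟩ := parts_secstr hj hjn hsat.1 hmem
    have hdec := decompA hsat.1 hmem
    rw [Finset.mem_product, mem_satF, mem_satnvF]
    have h1 := (satA hj hjn hT hU).1 (hdec ▸ hsat)
    have h2 := (novisA hj hjn hT hU).1 (hdec ▸ hnv)
    exact ⟨h1.1, h1.2, h2⟩
  · intro TU hTU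
    rw [Finset.mem_product, mem_satF, mem_satnvF] at hTU
    rw [mem_filter, mem_satnvF]
    exact ⟨⟨(satA hj hjn hTU.1.1 hTU.2.1.1).2 ⟨hTU.1, hTU.2.1⟩,
      (novisA hj hjn hTU.1.1 hTU.2.1.1).2 hTU.2.2⟩, mem_insert_self _ _⟩
  · intro S hS
    rw [mem_filter, mem_satnvF] at hS
    exact (decompA hS.1.1.1 hS.2).symm
  · intro TU hTU
    rw [Finset.mem_product, mem_satF, mem_satnvF] at hTU
    obtain ⟨h1, h2⟩ := phi_psi hj hjn hTU.1.1 hTU.2.1.1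
    exact Prod.ext h1 h2

lemma cardB {n : ℕ} (hn : 2 ≤ n) :
    ((satF n).filter fun S => Vis 1 S ∧ ¬ Vis 2 S).card = (satnvF (n - 1)).card := by
  refine Finset.card_bij' (fun S _ => down 1 S) (fun T _ => up 1 T) ?_ ?_ ?_ ?_
  · intro S hS
    rw [mem_filter, mem_satF] at hS
    obtain ⟨hsat, hv1, hv2⟩ := hS
    have hS1 : S = up 1 (down 1 S) := by
      refine (up_down fun p hp => ?_).symm
      have := hsat.1.1 p hp
      omega
    rw [mem_satnvF]
    exact (caseB_iff hn).1 ⟨hS1 ▸ hsat, hS1 ▸ hv1, hS1 ▸ hv2⟩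
  · intro T hT
    rw [mem_satnvF] at hT
    rw [mem_filter, mem_satF]
    have := (caseB_iff hn).2 hT
    exact ⟨this.1, this.2.1, this.2.2⟩
  · intro S hS
    rw [mem_filter, mem_satF] at hS
    refine up_down fun p hp => ?_
    have := hS.1.1.1 p hp
    omega
  · intro T _
    exact down_up 1 T

lemma cardC {n : ℕ} (hn : 2 ≤ n) :
    ((satF n).filter fun S => Vis 1 S ∧ Vis 2 S).card = (satnvF (n - 2)).card := by
  refine Finset.card_bij' (fun S _ => down 2 S) (fun T _ => up 2 T) ?_ ?_ ?_ ?_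
  · intro S hS
    rw [mem_filter, mem_satF] at hS
    obtain ⟨hsat, hv1, hv2⟩ := hS
    have hS1 : S = up 2 (down 2 S) := by
      refine (up_down fun p hp => ?_).symm
      have := hsat.1.1 p hp
      have := hv2 p hp
      omega
    rw [mem_satnvF]
    exact (caseC_iff hn).1 ⟨hS1 ▸ hsat, hS1 ▸ hv2⟩
  · intro T hT
    rw [mem_satnvF] at hT
    rw [mem_filter, mem_satF]
    have := (caseC_iff hn).2 hT
    have hbig : ∀ p ∈ up 2 T, 3 ≤ p.1 := by
      rintro ⟨a, b⟩ hp
      rw [mem_up] at hp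
      have := hT.1.1.1 _ hp.2.2
      simp only at this ⊢
      omega
    exact ⟨this.1, fun p hp => Or.inl (by have := hbig p hp; omega), this.2⟩
  · intro S hS
    rw [mem_filter, mem_satF] at hS
    refine up_down fun p hp => ?_
    have := hS.1.1.1 p hp
    have := hS.2.2 p hp
    omega
  · intro T _
    exact down_up 2 T

/-! ### partition of saturated structures -/

lemma not_vis1 {n : ℕ} {S : Finset (ℕ × ℕ)} (h : IsSecStr n S) :
    ¬ Vis 1 S ↔ ∃ j ∈ Finset.Icc 3 n, (1, j) ∈ S := by
  constructor
  · intro hv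
    rw [Vis] at hv
    push_neg at hv
    obtain ⟨p, hp, h1, h2⟩ := hv
    have hb := h.1 p hp
    refine ⟨p.2, ?_, ?_⟩
    · rw [Finset.mem_Icc]
      constructor
      · omega
      · omega
    · have h1' : (1 : ℕ) = p.1 := by omega
      rw [h1', Prod.mk.eta]
      exact hp
  · rintro ⟨j, hj, hmem⟩ hv
    have := hv _ hmem
    simp only at this
    rw [Finset.mem_Icc] at hj
    omega

lemma pairs_disjoint {n : ℕ} (G : Finset (Finset (ℕ × ℕ)))
    (hG : ∀ S ∈ G, Disj S) :
    ∀ x ∈ Finset.Icc 3 n, ∀ y ∈ Finset.Icc 3 n, x ≠ y →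
      Disjoint (G.filter fun S => (1, x) ∈ S) (G.filter fun S => (1, y) ∈ S) := by
  intro x _ y _ hxy
  rw [Finset.disjoint_left]
  intro S hS hS'
  rw [mem_filter] at hS hS'
  have := hG S hS.1 (1, x) hS.2 (1, y) hS'.2 (by simp [Prod.ext_iff]; omega)
  simp only at this
  exact this.1 rfl

lemma satF_split (n : ℕ) :
    (satF n).card = ((satF n).filter fun S => Vis 1 S ∧ ¬ Vis 2 S).card
      + ((satF n).filter fun S => Vis 1 S ∧ Vis 2 S).card
      + ∑ j ∈ Finset.Icc 3 n, ((satF n).filter fun S => (1, j) ∈ S).card := by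
  have h1 := Finset.card_filter_add_card_filter_not
    (s := satF n) (p := fun S => Vis 1 S)
  have h2 := Finset.card_filter_add_card_filter_not
    (s := (satF n).filter fun S => Vis 1 S) (p := fun S => Vis 2 S)
  rw [Finset.filter_filter, Finset.filter_filter] at h2
  have h3 : (satF n).filter (fun S => ¬ Vis 1 S)
      = (Finset.Icc 3 n).biUnion fun j => (satF n).filter fun S => (1, j) ∈ S := by
    ext S
    simp only [mem_filter, Finset.mem_biUnion]
    constructor
    · rintro ⟨hS, hv⟩
      obtain ⟨j, hj, hmem⟩ := (not_vis1 (mem_satF.1 hS).1).1 hv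
      exact ⟨j, hj, hS, hmem⟩
    · rintro ⟨j, hj, hS, hmem⟩
      exact ⟨hS, (not_vis1 (mem_satF.1 hS).1).2 ⟨j, hj, hmem⟩⟩
  have h4 := Finset.card_biUnion
    (pairs_disjoint (n := n) (satF n) fun S hS => (mem_satF.1 hS).1.2.1)
  rw [← h3] at h4
  omega

lemma satnvF_split {n : ℕ} (hn : 1 ≤ n) :
    (satnvF n).card
      = ∑ j ∈ Finset.Icc 3 n, ((satnvF n).filter fun S => (1, j) ∈ S).card := by
  have h3 : satnvF n
      = (Finset.Icc 3 n).biUnion fun j => (satnvF n).filter fun S => (1, j) ∈ S := by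
    ext S
    simp only [Finset.mem_biUnion, mem_filter]
    constructor
    · intro hS
      obtain ⟨hsat, hnv⟩ := mem_satnvF.1 hS
      have hv : ¬ Vis 1 S := by
        intro hv
        obtain ⟨p, hp, h1, h2⟩ := hnv 1 le_rfl hn
        have := hv p hp
        omega
      obtain ⟨j, hj, hmem⟩ := (not_vis1 hsat.1).1 hv
      exact ⟨j, hj, hS, hmem⟩
    · rintro ⟨j, _, hS, _⟩
      exact hS
  rw [show (satnvF n).card = ((Finset.Icc 3 n).biUnion fun j =>
    (satnvF n).filter fun S => (1, j) ∈ S).card from congrArg Finset.card h3]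
  exact Finset.card_biUnion
    (pairs_disjoint (n := n) (satnvF n) fun S hS => (mem_satnvF.1 hS).1.1.2.1)

/-! ### small cases -/

lemma secstr_small {n : ℕ} {S : Finset (ℕ × ℕ)} (hn : n ≤ 2) (h : IsSecStr n S) :
    S = ∅ := by
  rw [Finset.eq_empty_iff_forall_notMem]
  intro p hp
  have := h.1 p hp
  omega

lemma empty_sat {n : ℕ} (hn : n ≤ 2) : IsSaturated n ∅ := by
  refine ⟨⟨by simp, by simp, by simp⟩, fun p _ hins => ?_⟩
  have := hins.1 p (mem_insert_self _ _)
  omega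

lemma satF_small {n : ℕ} (hn : n ≤ 2) : satF n = {∅} := by
  ext S
  rw [mem_satF, Finset.mem_singleton]
  constructor
  · intro h
    exact secstr_small hn h.1
  · rintro rfl
    exact empty_sat hn

lemma satnvF_zero : satnvF 0 = {∅} := by
  ext S
  rw [mem_satnvF, Finset.mem_singleton]
  constructor
  · intro h
    exact secstr_small (by omega) h.1.1
  · rintro rfl
    exact ⟨empty_sat (by omega), fun i hi1 hi2 => by omega⟩

lemma satnvF_small {n : ℕ} (h1 : 1 ≤ n) (h2 : n ≤ 2) : satnvF n = ∅ := by
  rw [Finset.eq_empty_iff_forall_notMem]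
  intro S hS
  obtain ⟨hsat, hnv⟩ := mem_satnvF.1 hS
  obtain ⟨p, hp, _, _⟩ := hnv 1 le_rfl h1
  rw [secstr_small h2 hsat.1] at hp
  exact absurd hp (Finset.notMem_empty p)

/-! ### the two numerical recurrences -/

lemma s_rec {n : ℕ} (hn : 3 ≤ n) :
    (satF n).card = (satnvF (n - 1)).card + (satnvF (n - 2)).card
      + ∑ j ∈ Finset.Icc 3 n, (satF (j - 2)).card * (satF (n - j)).card := by
  rw [satF_split n, cardB (by omega), cardC (by omega)]
  congr 1
  exact Finset.sum_congr rfl fun j hj => by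
    rw [Finset.mem_Icc] at hj
    exact cardA hj.1 hj.2

lemma r_rec (n : ℕ) (hn : 1 ≤ n) :
    (satnvF n).card
      = ∑ j ∈ Finset.Icc 3 n, (satF (j - 2)).card * (satnvF (n - j)).card := by
  rw [satnvF_split hn]
  exact Finset.sum_congr rfl fun j hj => by
    rw [Finset.mem_Icc] at hj
    exact cardA' hj.1 hj.2

/-! ### generating function coefficients -/

noncomputable def sqc (n : ℕ) : ℚ := if n = 0 then 0 else ((satF n).card : ℚ)
noncomputable def rqc (n : ℕ) : ℚ := if n = 0 then 0 else ((satnvF n).card : ℚ)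

lemma sqc_pos {n : ℕ} (h : n ≠ 0) : sqc n = ((satF n).card : ℚ) := if_neg h
lemma rqc_pos {n : ℕ} (h : n ≠ 0) : rqc n = ((satnvF n).card : ℚ) := if_neg h

lemma cS_zero : ((satF 0).card : ℚ) = 1 := by
  rw [satF_small (by omega)]
  simp

lemma cR_zero : ((satnvF 0).card : ℚ) = 1 := by
  rw [satnvF_zero]
  simp

lemma main_s (m : ℕ) :
    sqc (m + 3) = rqc (m + 2) + rqc (m + 1) + sqc (m + 1)
      + ∑ p ∈ Finset.HasAntidiagonal.antidiagonal (m + 1), sqc p.1 * sqc p.2 := by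
  have hsum : ∑ p ∈ Finset.HasAntidiagonal.antidiagonal (m + 1), sqc p.1 * sqc p.2
      = ∑ i ∈ Finset.range m, ((satF (i + 1)).card : ℚ) * ((satF (m - i)).card : ℚ) := by
    rw [Finset.Nat.sum_antidiagonal_eq_sum_range_succ_mk, Finset.sum_range_succ',
      Finset.sum_range_succ, show m + 1 - (m + 1) = 0 by omega,
      show sqc 0 = 0 from if_pos rfl, mul_zero, zero_mul, add_zero, add_zero]
    refine Finset.sum_congr rfl fun i hi => ?_
    rw [Finset.mem_range] at hi
    rw [show m + 1 - (i + 1) = m - i by omega, sqc_pos (by omega), sqc_pos (by omega)]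
  have hIcc : ∑ j ∈ Finset.Icc 3 (m + 3), ((satF (j - 2)).card * (satF (m + 3 - j)).card : ℕ)
      = ∑ i ∈ Finset.range (m + 1), ((satF (i + 1)).card * (satF (m - i)).card : ℕ) := by
    rw [show Finset.Icc 3 (m + 3) = Finset.Ico 3 (m + 4) from (Finset.Ico_add_one_right_eq_Icc 3 (m + 3)).symm]
    rw [Finset.sum_Ico_eq_sum_range]
    rw [show m + 4 - 3 = m + 1 by omega]
    refine Finset.sum_congr rfl fun i hi => ?_
    rw [show 3 + i - 2 = i + 1 by omega, show m + 3 - (3 + i) = m - i by omega]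
  rw [hsum, sqc_pos (by omega), rqc_pos (by omega), rqc_pos (by omega), sqc_pos (by omega)]
  rw [s_rec (by omega), show m + 3 - 1 = m + 2 by omega, show m + 3 - 2 = m + 1 by omega]
  push_cast [hIcc]
  rw [Finset.sum_range_succ]
  rw [show m - m = 0 by omega]
  push_cast [cS_zero]
  ring

lemma main_r (m : ℕ) :
    rqc (m + 3) = sqc (m + 1)
      + ∑ p ∈ Finset.HasAntidiagonal.antidiagonal (m + 1), rqc p.1 * sqc p.2 := by
  have hsum : ∑ p ∈ Finset.HasAntidiagonal.antidiagonal (m + 1), rqc p.1 * sqc p.2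
      = ∑ i ∈ Finset.range m, ((satnvF (i + 1)).card : ℚ) * ((satF (m - i)).card : ℚ) := by
    rw [Finset.Nat.sum_antidiagonal_eq_sum_range_succ_mk, Finset.sum_range_succ',
      Finset.sum_range_succ, show m + 1 - (m + 1) = 0 by omega,
      show sqc 0 = 0 from if_pos rfl, show rqc 0 = 0 from if_pos rfl,
      mul_zero, zero_mul, add_zero, add_zero]
    refine Finset.sum_congr rfl fun i hi => ?_
    rw [Finset.mem_range] at hi
    rw [show m + 1 - (i + 1) = m - i by omega, rqc_pos (by omega), sqc_pos (by omega)]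
  have hIcc : ∑ j ∈ Finset.Icc 3 (m + 3), ((satF (j - 2)).card * (satnvF (m + 3 - j)).card : ℕ)
      = ∑ i ∈ Finset.range (m + 1), ((satF (i + 1)).card * (satnvF (m - i)).card : ℕ) := by
    rw [show Finset.Icc 3 (m + 3) = Finset.Ico 3 (m + 4) from (Finset.Ico_add_one_right_eq_Icc 3 (m + 3)).symm]
    rw [Finset.sum_Ico_eq_sum_range]
    rw [show m + 4 - 3 = m + 1 by omega]
    refine Finset.sum_congr rfl fun i hi => ?_
    rw [show 3 + i - 2 = i + 1 by omega, show m + 3 - (3 + i) = m - i by omega]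
  have hrefl : ∑ i ∈ Finset.range (m + 1),
        ((satF (i + 1)).card * (satnvF (m - i)).card : ℕ)
      = ∑ i ∈ Finset.range (m + 1),
        ((satF (m - i + 1)).card * (satnvF (m - (m - i))).card : ℕ) := by
    rw [← Finset.sum_range_reflect]
    refine Finset.sum_congr rfl fun i hi => ?_
    rw [Finset.mem_range] at hi
    rw [show m + 1 - 1 - i = m - i by omega]
  rw [hsum, rqc_pos (by omega), sqc_pos (by omega)]
  rw [r_rec _ (by omega)]
  push_cast [hIcc, hrefl]
  rw [Finset.sum_range_succ']
  rw [show m - 0 = m by omega, show m - m = 0 by omega]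
  push_cast [cR_zero]
  have : ∀ i ∈ Finset.range m,
      ((satF (m - (i + 1) + 1)).card : ℚ) * ((satnvF (m - (m - (i + 1)))).card : ℚ)
        = ((satnvF (i + 1)).card : ℚ) * ((satF (m - i)).card : ℚ) := by
    intro i hi
    rw [Finset.mem_range] at hi
    rw [show m - (i + 1) + 1 = m - i by omega, show m - (m - (i + 1)) = i + 1 by omega]
    ring
  rw [Finset.sum_congr rfl this]
  ring

lemma sqc_one : sqc 1 = 1 := by
  rw [sqc_pos (by omega), satF_small (by omega)]
  simp

lemma sqc_two : sqc 2 = 1 := by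
  rw [sqc_pos (by omega), satF_small (by omega)]
  simp

lemma rqc_one : rqc 1 = 0 := by
  rw [rqc_pos (by omega), satnvF_small (by omega) (by omega)]
  simp

lemma rqc_two : rqc 2 = 0 := by
  rw [rqc_pos (by omega), satnvF_small (by omega) (by omega)]
  simp

lemma coeff_X_mul' (f : PowerSeries ℚ) (n : ℕ) :
    PowerSeries.coeff n (PowerSeries.X * f)
      = if n = 0 then 0 else PowerSeries.coeff (n - 1) f := by
  cases n with
  | zero =>
    simp [PowerSeries.coeff_zero_eq_constantCoeff, map_mul]
  | succ n =>
    rw [PowerSeries.coeff_succ_X_mul, if_neg (by omega)]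
    congr 1

lemma coeff_X2_mul' (f : PowerSeries ℚ) (n : ℕ) :
    PowerSeries.coeff n (PowerSeries.X ^ 2 * f)
      = if n ≤ 1 then 0 else PowerSeries.coeff (n - 2) f := by
  match n with
  | 0 => simp [PowerSeries.coeff_zero_eq_constantCoeff, map_mul, map_pow]
  | 1 =>
    rw [pow_two, mul_assoc, PowerSeries.coeff_succ_X_mul, coeff_X_mul']
    norm_num
  | (n + 2) =>
    rw [PowerSeries.coeff_X_pow_mul, if_neg (by omega), Nat.add_sub_cancel]

lemma satGF_mk : satGF = PowerSeries.mk sqc := by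
  refine PowerSeries.ext fun n => ?_
  simp only [satGF, PowerSeries.coeff_mk, sqc]
  by_cases h : n = 0
  · simp [h]
  · rw [if_neg h, if_neg h, ncard_sat]

lemma satNoVisGF_mk : satNoVisGF = PowerSeries.mk rqc := by
  refine PowerSeries.ext fun n => ?_
  simp only [satNoVisGF, PowerSeries.coeff_mk, rqc]
  by_cases h : n = 0
  · simp [h]
  · rw [if_neg h, if_neg h, ncard_satnv]

open PowerSeries in
/-- The generating functions satisfy `S = z + z² + zR + z²R + z²S + z²S²` and
`R = z²S + z²RS`. -/
theorem saturated_gf_system :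
    satGF = X + X ^ 2 + X * satNoVisGF + X ^ 2 * satNoVisGF + X ^ 2 * satGF
      + X ^ 2 * satGF ^ 2 ∧
    satNoVisGF = X ^ 2 * satGF + X ^ 2 * satNoVisGF * satGF := by
  rw [satGF_mk, satNoVisGF_mk]
  constructor
  · refine PowerSeries.ext fun n => ?_
    rw [map_add, map_add, map_add, map_add, map_add, PowerSeries.coeff_mk,
      coeff_X_mul', coeff_X2_mul', coeff_X2_mul', coeff_X2_mul',
      PowerSeries.coeff_X, PowerSeries.coeff_X_pow]
    rcases n with _ | _ | _ | m
    · norm_num [sqc]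
    · norm_num [sqc_one, PowerSeries.coeff_mk, rqc]
    · norm_num [sqc_two, PowerSeries.coeff_mk, rqc_one, pow_two, PowerSeries.coeff_mul,
        show sqc 0 = 0 from if_pos rfl, show rqc 0 = 0 from if_pos rfl]
    · rw [if_neg (by omega), if_neg (by omega), if_neg (by omega), if_neg (by omega),
        if_neg (by omega), if_neg (by omega)]
      rw [show m + 3 - 1 = m + 2 by omega, show m + 3 - 2 = m + 1 by omega]
      rw [pow_two, PowerSeries.coeff_mul]
      simp only [PowerSeries.coeff_mk]
      rw [main_s m]
      ring
  · refine PowerSeries.ext fun n => ?_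
    rw [map_add, mul_assoc, PowerSeries.coeff_mk, coeff_X2_mul', coeff_X2_mul']
    rcases n with _ | _ | _ | m
    · norm_num [rqc]
    · norm_num [rqc_one]
    · norm_num [rqc_two, PowerSeries.coeff_mk, PowerSeries.coeff_mul,
        show sqc 0 = 0 from if_pos rfl, show rqc 0 = 0 from if_pos rfl]
    · rw [if_neg (by omega), if_neg (by omega)]
      rw [show m + 3 - 2 = m + 1 by omega]
      rw [PowerSeries.coeff_mul]
      simp only [PowerSeries.coeff_mk]
      rw [main_r m]
end

section
/- Let s_n be the number of saturated secondary structures on [1,n] (with θ = 1, and s_0 = 0). Then the formal power series S(z) = Σ_{n≥1} s_n z^n ∈ ℚ[[z]] satisfies the cubic equation z⁴S³ + z²(z² − 2)S² + (1 − z²)S = z + z². -/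
namespace SatAux

open Finset

def shiftF (k : ℕ) (S : Finset (ℕ × ℕ)) : Finset (ℕ × ℕ) :=
  S.image fun p => (p.1 + k, p.2 + k)

def unshiftF (k : ℕ) (S : Finset (ℕ × ℕ)) : Finset (ℕ × ℕ) :=
  S.image fun p => (p.1 - k, p.2 - k)

lemma mem_shiftF {k : ℕ} {S : Finset (ℕ × ℕ)} {q : ℕ × ℕ} :
    q ∈ shiftF k S ↔ ∃ p ∈ S, p.1 + k = q.1 ∧ p.2 + k = q.2 := by
  simp [shiftF, Prod.ext_iff]

lemma shiftF_mem {k : ℕ} {S : Finset (ℕ × ℕ)} {p : ℕ × ℕ} (hp : p ∈ S) :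
    (p.1 + k, p.2 + k) ∈ shiftF k S :=
  mem_shiftF.2 ⟨p, hp, rfl, rfl⟩

lemma unshiftF_shiftF (k : ℕ) (S : Finset (ℕ × ℕ)) : unshiftF k (shiftF k S) = S := by
  ext p
  constructor
  · intro hp
    rcases Finset.mem_image.1 hp with ⟨q, hq, rfl⟩
    rcases mem_shiftF.1 hq with ⟨r, hr, h1, h2⟩
    have he : (q.1 - k, q.2 - k) = r := by ext <;> simp <;> omega
    rwa [he]
  · intro hp
    refine Finset.mem_image.2 ⟨(p.1 + k, p.2 + k), shiftF_mem hp, by ext <;> simp⟩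

lemma shiftF_unshiftF {k : ℕ} {S : Finset (ℕ × ℕ)} (h : ∀ p ∈ S, k ≤ p.1 ∧ k ≤ p.2) :
    shiftF k (unshiftF k S) = S := by
  ext p
  constructor
  · intro hp
    rcases Finset.mem_image.1 hp with ⟨q, hq, rfl⟩
    rcases Finset.mem_image.1 hq with ⟨r, hr, rfl⟩
    have hr2 := h r hr
    have he : ((r.1 - k) + k, (r.2 - k) + k) = r := by ext <;> simp <;> omega
    rwa [he]
  · intro hp
    refine Finset.mem_image.2 ⟨(p.1 - k, p.2 - k), Finset.mem_image.2 ⟨p, hp, rfl⟩, ?_⟩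
    have := h p hp
    ext <;> simp <;> omega

lemma secStr_subset {n : ℕ} {S T : Finset (ℕ × ℕ)} (h : IsSecStr n S) (hTS : T ⊆ S) :
    IsSecStr n T :=
  ⟨fun p hp => h.1 p (hTS hp),
   fun p hp q hq => h.2.1 p (hTS hp) q (hTS hq),
   fun p hp q hq => h.2.2 p (hTS hp) q (hTS hq)⟩

lemma secStr_mono_n {n n' : ℕ} {S : Finset (ℕ × ℕ)} (h : IsSecStr n S) (hn : n ≤ n') :
    IsSecStr n' S :=
  ⟨fun p hp => ⟨(h.1 p hp).1, (h.1 p hp).2.1, le_trans (h.1 p hp).2.2 hn⟩, h.2.1, h.2.2⟩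

lemma secStr_shift_iff {m n k : ℕ} {S : Finset (ℕ × ℕ)}
    (hlo : ∀ p ∈ S, 1 ≤ p.1) (hhi : ∀ p ∈ S, p.2 ≤ m) (hmn : m + k ≤ n) :
    IsSecStr m S ↔ IsSecStr n (shiftF k S) := by
  constructor
  · rintro ⟨h1, h2, h3⟩
    refine ⟨?_, ?_, ?_⟩
    · intro p hp
      rcases mem_shiftF.1 hp with ⟨q, hq, e1, e2⟩
      have := h1 q hq; omega
    · intro p hp q hq hne
      rcases mem_shiftF.1 hp with ⟨p', hp', e1, e2⟩
      rcases mem_shiftF.1 hq with ⟨q', hq', f1, f2⟩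
      have hne' : p' ≠ q' := by
        rintro rfl; apply hne; ext <;> omega
      have := h2 p' hp' q' hq' hne'; omega
    · intro p hp q hq
      rcases mem_shiftF.1 hp with ⟨p', hp', e1, e2⟩
      rcases mem_shiftF.1 hq with ⟨q', hq', f1, f2⟩
      have := h3 p' hp' q' hq'; omega
  · rintro ⟨h1, h2, h3⟩
    refine ⟨?_, ?_, ?_⟩
    · intro p hp
      have := h1 _ (shiftF_mem (k := k) hp)
      have := hlo p hp; have := hhi p hp
      omega
    · intro p hp q hq hne
      have hne' : ((p.1 + k, p.2 + k) : ℕ × ℕ) ≠ (q.1 + k, q.2 + k) := by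
        intro h; apply hne
        have h1' : p.1 = q.1 := by have := congrArg Prod.fst h; simpa using this
        have h2' : p.2 = q.2 := by have := congrArg Prod.snd h; simp at this; omega
        ext <;> simp [h1', h2']
      have := h2 _ (shiftF_mem (k := k) hp) _ (shiftF_mem (k := k) hq) hne'
      simp at this; omega
    · intro p hp q hq
      have := h3 _ (shiftF_mem (k := k) hp) _ (shiftF_mem (k := k) hq)
      simp at this; omega

section Block

variable {n : ℕ} {S : Finset (ℕ × ℕ)} {x y : ℕ} {q : ℕ × ℕ}

lemma block_cover_left (hq : q ∈ S) (h1 : q.1 ≤ x) (h2 : x ≤ q.2) (h3 : q.2 < y) :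
    ¬ IsSecStr n (insert (x, y) S) := by
  intro hsec
  have hmem : (x, y) ∈ insert (x, y) S := Finset.mem_insert_self _ _
  have hqm : q ∈ insert (x, y) S := Finset.mem_insert_of_mem hq
  have hne : (x, y) ≠ q := by
    intro h; have := congrArg Prod.snd h; simp at this; omega
  rcases eq_or_lt_of_le h1 with h | h
  · have := hsec.2.1 _ hmem _ hqm hne; simp at this; omega
  rcases eq_or_lt_of_le h2 with h' | h'
  · have := hsec.2.1 _ hmem _ hqm hne; simp at this; omega
  · have := hsec.2.2 _ hqm _ hmem; simp at this; omega

lemma block_cover_right (hq : q ∈ S) (h1 : q.1 ≤ y) (h2 : y ≤ q.2) (h3 : x < q.1) :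
    ¬ IsSecStr n (insert (x, y) S) := by
  intro hsec
  have hmem : (x, y) ∈ insert (x, y) S := Finset.mem_insert_self _ _
  have hqm : q ∈ insert (x, y) S := Finset.mem_insert_of_mem hq
  have hne : (x, y) ≠ q := by
    intro h; have := congrArg Prod.fst h; simp at this; omega
  rcases eq_or_lt_of_le h1 with h | h
  · have := hsec.2.1 _ hmem _ hqm hne; simp at this; omega
  rcases eq_or_lt_of_le h2 with h' | h'
  · have := hsec.2.1 _ hmem _ hqm hne; simp at this; omega
  · have := hsec.2.2 _ hmem _ hqm; simp at this; omega

end Block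

lemma secStr_shrink {n m : ℕ} {S : Finset (ℕ × ℕ)} (h : IsSecStr n S)
    (hm : ∀ p ∈ S, p.2 ≤ m) : IsSecStr m S :=
  ⟨fun p hp => ⟨(h.1 p hp).1, (h.1 p hp).2.1, hm p hp⟩, h.2.1, h.2.2⟩

lemma shiftF_insert {k : ℕ} {p : ℕ × ℕ} {S : Finset (ℕ × ℕ)} :
    shiftF k (insert p S) = insert (p.1 + k, p.2 + k) (shiftF k S) := by
  simp [shiftF, Finset.image_insert]

lemma secStr_union_iff {n m : ℕ} {A B : Finset (ℕ × ℕ)}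
    (hA : ∀ p ∈ A, p.2 ≤ m) (hB : ∀ p ∈ B, m < p.1) :
    IsSecStr n (A ∪ B) ↔ IsSecStr n A ∧ IsSecStr n B := by
  constructor
  · intro h
    exact ⟨secStr_subset h Finset.subset_union_left,
           secStr_subset h Finset.subset_union_right⟩
  · rintro ⟨⟨hA1, hA2, hA3⟩, ⟨hB1, hB2, hB3⟩⟩
    refine ⟨?_, ?_, ?_⟩
    · intro p hp
      rcases Finset.mem_union.1 hp with h | h
      exacts [hA1 p h, hB1 p h]
    · intro p hp q hq hne
      rcases Finset.mem_union.1 hp with h | h <;> rcases Finset.mem_union.1 hq with h' | h'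
      · exact hA2 p h q h' hne
      · have w1 := hA1 p h; have w2 := hB1 q h'
        have := hA p h; have := hB q h'; omega
      · have w1 := hB1 p h; have w2 := hA1 q h'
        have := hB p h; have := hA q h'; omega
      · exact hB2 p h q h' hne
    · intro p hp q hq
      rcases Finset.mem_union.1 hp with h | h <;> rcases Finset.mem_union.1 hq with h' | h'
      · exact hA3 p h q h'
      · have w1 := hA1 p h; have w2 := hB1 q h'
        have := hA p h; have := hB q h'; omega
      · have w1 := hB1 p h; have w2 := hA1 q h'
        have := hB p h; have := hA q h'; omega
      · exact hB3 p h q h'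

lemma secStr_insert_arc_iff {n i j : ℕ} {S : Finset (ℕ × ℕ)}
    (h1 : 1 ≤ i) (h2 : i + 1 < j) (h3 : j ≤ n)
    (hS : ∀ p ∈ S, (i < p.1 ∧ p.2 < j) ∨ j < p.1) :
    IsSecStr n (insert (i, j) S) ↔ IsSecStr n S := by
  constructor
  · intro h
    exact secStr_subset h (Finset.subset_insert _ _)
  · rintro ⟨hS1, hS2, hS3⟩
    refine ⟨?_, ?_, ?_⟩
    · intro p hp
      rcases Finset.mem_insert.1 hp with rfl | h
      · exact ⟨h1, h2, h3⟩
      · exact hS1 p h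
    · intro p hp q hq hne
      rcases Finset.mem_insert.1 hp with rfl | h <;> rcases Finset.mem_insert.1 hq with rfl | h'
      · exact absurd rfl hne
      · have w := hS1 q h'; have := hS q h'; simp only []; omega
      · have w := hS1 p h; have := hS p h; simp only []; omega
      · exact hS2 p h q h' hne
    · intro p hp q hq
      rcases Finset.mem_insert.1 hp with rfl | h <;> rcases Finset.mem_insert.1 hq with rfl | h'
      · simp only []; omega
      · have w := hS1 q h'; have := hS q h'; simp only []; omega
      · have w := hS1 p h; have := hS p h; simp only []; omega
      · exact hS3 p h q h'

def IsTight (n : ℕ) (S : Finset (ℕ × ℕ)) : Prop :=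
  IsSaturated n S ∧ ∀ i, 1 ≤ i → i ≤ n → ∃ p ∈ S, p.1 ≤ i ∧ i ≤ p.2

open Classical in
noncomputable def sats (n : ℕ) : Finset (Finset (ℕ × ℕ)) :=
  ((Finset.range (n + 1) ×ˢ Finset.range (n + 1)).powerset).filter fun S => IsSaturated n S

open Classical in
noncomputable def tights (n : ℕ) : Finset (Finset (ℕ × ℕ)) :=
  ((Finset.range (n + 1) ×ˢ Finset.range (n + 1)).powerset).filter fun S => IsTight n S

lemma subset_box {n : ℕ} {S : Finset (ℕ × ℕ)} (h : IsSecStr n S) :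
    S ⊆ Finset.range (n + 1) ×ˢ Finset.range (n + 1) := by
  intro p hp
  have := h.1 p hp
  simp only [Finset.mem_product, Finset.mem_range]
  omega

lemma mem_sats {n : ℕ} {S : Finset (ℕ × ℕ)} : S ∈ sats n ↔ IsSaturated n S := by
  classical
  simp only [sats, Finset.mem_filter, Finset.mem_powerset]
  exact ⟨fun h => h.2, fun h => ⟨subset_box h.1, h⟩⟩

lemma mem_tights {n : ℕ} {S : Finset (ℕ × ℕ)} : S ∈ tights n ↔ IsTight n S := by
  classical
  simp only [tights, Finset.mem_filter, Finset.mem_powerset]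
  exact ⟨fun h => h.2, fun h => ⟨subset_box h.1.1, h⟩⟩

noncomputable def sC (n : ℕ) : ℕ := (sats n).card
noncomputable def pC (n : ℕ) : ℕ := (tights n).card

lemma small_empty {n : ℕ} {S : Finset (ℕ × ℕ)} (hn : n ≤ 2) (h : IsSecStr n S) : S = ∅ := by
  rcases Finset.eq_empty_or_nonempty S with rfl | ⟨p, hp⟩
  · rfl
  · have := h.1 p hp; omega

lemma empty_saturated {n : ℕ} (hn : n ≤ 2) : IsSaturated n ∅ := by
  refine ⟨⟨by simp, by simp, by simp⟩, ?_⟩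
  intro p _ hsec
  have := hsec.1 p (Finset.mem_insert_self _ _)
  omega

lemma sats1 : sats 1 = {∅} := by
  ext S
  simp only [mem_sats, Finset.mem_singleton]
  constructor
  · intro h; exact small_empty (by norm_num) h.1
  · rintro rfl; exact empty_saturated (by norm_num)

lemma sC1 : sC 1 = 1 := by rw [sC, sats1]; rfl

lemma tights0 : tights 0 = {∅} := by
  ext S
  simp only [mem_tights, Finset.mem_singleton]
  constructor
  · intro h; exact small_empty (by norm_num) h.1.1
  · rintro rfl
    exact ⟨empty_saturated (by norm_num), fun i h1 h2 => by omega⟩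

lemma pC0 : pC 0 = 1 := by rw [pC, tights0]; rfl

lemma tights_small {n : ℕ} (h1 : 1 ≤ n) (h2 : n ≤ 2) : tights n = ∅ := by
  ext S
  simp only [mem_tights, Finset.notMem_empty, iff_false]
  intro h
  have hS : S = ∅ := small_empty h2 h.1.1
  rcases h.2 1 le_rfl h1 with ⟨p, hp, _⟩
  rw [hS] at hp
  simp at hp

lemma pC1 : pC 1 = 0 := by rw [pC, tights_small le_rfl (by norm_num)]; rfl

lemma pC2 : pC 2 = 0 := by rw [pC, tights_small (by norm_num) le_rfl]; rfl



section Join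

lemma shift_window {c b : ℕ} {U : Finset (ℕ × ℕ)} (hU : IsSecStr b U) :
    ∀ q ∈ shiftF c U, c + 1 ≤ q.1 ∧ q.1 + 1 < q.2 ∧ q.2 ≤ c + b := by
  intro q hq
  rcases mem_shiftF.1 hq with ⟨p, hp, e1, e2⟩
  have := hU.1 p hp; omega

lemma join_secStr {n a c b : ℕ} {T U : Finset (ℕ × ℕ)}
    (hT : IsSecStr a T) (hU : IsSecStr b U) (hac : a ≤ c) (hn : c + b ≤ n) :
    IsSecStr n (T ∪ shiftF c U) := by
  have hT' : IsSecStr n T := secStr_mono_n hT (by omega)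
  have hU' : IsSecStr n (shiftF c U) :=
    (secStr_shift_iff (fun p hp => (hU.1 p hp).1) (fun p hp => (hU.1 p hp).2.2)
      (by omega)).1 hU
  refine (secStr_union_iff (m := a) (fun p hp => (hT.1 p hp).2.2) ?_).2 ⟨hT', hU'⟩
  intro q hq
  have := shift_window hU q hq; omega

lemma join_sat {a g b : ℕ} {T U : Finset (ℕ × ℕ)} (hg1 : 1 ≤ g) (hg2 : g ≤ 2)
    (hT : IsTight a T) (hU : IsTight b U) :
    IsSaturated (a + g + b) (T ∪ shiftF (a + g) U) := by
  have hsec : IsSecStr (a + g + b) (T ∪ shiftF (a + g) U) :=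
    join_secStr hT.1.1 hU.1.1 (by omega) (by omega)
  refine ⟨hsec, ?_⟩
  rintro ⟨x, y⟩ hp hins
  have hw := hins.1 (x, y) (Finset.mem_insert_self _ _)
  simp only [] at hw
  by_cases hy : y ≤ a
  · -- addable on the left part
    have h1 : IsSecStr (a + g + b) (insert (x, y) T) :=
      secStr_subset hins (Finset.insert_subset_insert _ Finset.subset_union_left)
    have h2 : IsSecStr a (insert (x, y) T) := by
      refine secStr_shrink h1 ?_
      intro p hp'
      rcases Finset.mem_insert.1 hp' with rfl | h
      · exact hy
      · exact (hT.1.1.1 p h).2.2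
    have hnT : (x, y) ∉ T := fun h => hp (Finset.mem_union_left _ h)
    exact hT.1.2 _ hnT h2
  by_cases hx : a + g < x
  · -- addable on the right part
    have hxy : (((x - (a + g) : ℕ), (y - (a + g) : ℕ)).1 + (a + g),
        ((x - (a + g) : ℕ), (y - (a + g) : ℕ)).2 + (a + g)) = ((x : ℕ), (y : ℕ)) := by
      ext <;> simp <;> omega
    have h1 : IsSecStr (a + g + b) (shiftF (a + g) (insert (x - (a + g), y - (a + g)) U)) := by
      rw [shiftF_insert, hxy]
      exact secStr_subset hins (Finset.insert_subset_insert _ Finset.subset_union_right)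
    have h2 : IsSecStr b (insert (x - (a + g), y - (a + g)) U) := by
      refine (secStr_shift_iff (k := a + g) ?_ ?_ (by omega)).2 h1
      · intro p hp'
        rcases Finset.mem_insert.1 hp' with rfl | h
        · simp; omega
        · exact (hU.1.1.1 p h).1
      · intro p hp'
        rcases Finset.mem_insert.1 hp' with rfl | h
        · simp; omega
        · exact (hU.1.1.1 p h).2.2
    have hnU : (x - (a + g), y - (a + g)) ∉ U := by
      intro h
      apply hp
      refine Finset.mem_union_right _ ?_
      have := shiftF_mem (k := a + g) h
      rwa [hxy] at this
    exact hU.1.2 _ hnU h2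
  · -- straddling pair: blocked
    push_neg at hy hx
    by_cases hxa : x ≤ a
    · rcases hT.2 x hw.1 hxa with ⟨q, hq, hq1, hq2⟩
      have hqa : q.2 ≤ a := (hT.1.1.1 q hq).2.2
      exact block_cover_left (Finset.mem_union_left _ hq) hq1 hq2 (by omega) hins
    · push_neg at hxa
      have hy3 : a + g + 1 ≤ y := by omega
      rcases hU.2 (y - (a + g)) (by omega) (by omega) with ⟨q, hq, hq1, hq2⟩
      have hqw := hU.1.1.1 q hq
      have hqm : ((q.1 + (a + g), q.2 + (a + g)) : ℕ × ℕ) ∈ T ∪ shiftF (a + g) U :=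
        Finset.mem_union_right _ (shiftF_mem hq)
      exact block_cover_right hqm (by simp; omega) (by simp; omega) (by simp; omega) hins

lemma wrap_tight {a b : ℕ} {T U : Finset (ℕ × ℕ)} (ha : 1 ≤ a)
    (hT : IsSaturated a T) (hU : IsTight b U) :
    IsTight (a + 2 + b) (insert (1, a + 2) (shiftF 1 T ∪ shiftF (a + 2) U)) := by
  have hwT := shift_window (c := 1) hT.1
  have hwU := shift_window (c := a + 2) hU.1.1
  have hsec0 : IsSecStr (a + 2 + b) (shiftF 1 T ∪ shiftF (a + 2) U) := by
    refine (secStr_union_iff (m := a + 1) ?_ ?_).2 ⟨?_, ?_⟩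
    · intro p hp; have := hwT p hp; omega
    · intro p hp; have := hwU p hp; omega
    · exact (secStr_shift_iff (fun p hp => (hT.1.1 p hp).1)
        (fun p hp => (hT.1.1 p hp).2.2) (by omega)).1 hT.1
    · exact (secStr_shift_iff (fun p hp => (hU.1.1.1 p hp).1)
        (fun p hp => (hU.1.1.1 p hp).2.2) (by omega)).1 hU.1.1
  have hsec : IsSecStr (a + 2 + b) (insert (1, a + 2) (shiftF 1 T ∪ shiftF (a + 2) U)) := by
    refine (secStr_insert_arc_iff le_rfl (by omega) (by omega) ?_).2 hsec0
    intro p hp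
    rcases Finset.mem_union.1 hp with h | h
    · have := hwT p h; left; omega
    · have := hwU p h; right; omega
  refine ⟨⟨hsec, ?_⟩, ?_⟩
  · rintro ⟨x, y⟩ hp hins
    have harc : ((1, a + 2) : ℕ × ℕ) ∈ insert (1, a + 2) (shiftF 1 T ∪ shiftF (a + 2) U) :=
      Finset.mem_insert_self _ _
    have hw := hins.1 (x, y) (Finset.mem_insert_self _ _)
    simp only [] at hw
    have hne : ((x, y) : ℕ × ℕ) ≠ (1, a + 2) := by
      intro h; rw [h] at hp; exact hp harc
    have hsh := hins.2.1 (x, y) (Finset.mem_insert_self _ _)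
      (1, a + 2) (Finset.mem_insert_of_mem harc) hne
    simp only [] at hsh
    by_cases hy : y ≤ a + 1
    · -- interior
      have hx2 : 2 ≤ x := by omega
      have hxy : (((x - 1 : ℕ), (y - 1 : ℕ)).1 + 1, ((x - 1 : ℕ), (y - 1 : ℕ)).2 + 1)
          = ((x : ℕ), (y : ℕ)) := by ext <;> simp <;> omega
      have h1 : IsSecStr (a + 2 + b) (shiftF 1 (insert (x - 1, y - 1) T)) := by
        rw [shiftF_insert, hxy]
        refine secStr_subset hins ?_
        exact Finset.insert_subset_insert _
          (Finset.subset_union_left.trans (Finset.subset_insert _ _))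
      have h2 : IsSecStr a (insert (x - 1, y - 1) T) := by
        refine (secStr_shift_iff (k := 1) ?_ ?_ (by omega)).2 h1
        · intro p hp'
          rcases Finset.mem_insert.1 hp' with rfl | h
          · simp; omega
          · exact (hT.1.1 p h).1
        · intro p hp'
          rcases Finset.mem_insert.1 hp' with rfl | h
          · simp; omega
          · exact (hT.1.1 p h).2.2
      have hnT : (x - 1, y - 1) ∉ T := by
        intro h
        apply hp
        refine Finset.mem_insert_of_mem (Finset.mem_union_left _ ?_)
        have := shiftF_mem (k := 1) h
        rwa [hxy] at this
      exact hT.2 _ hnT h2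
    · by_cases hx : x ≤ a + 2
      · -- straddles the arc
        exact block_cover_left harc (by simp; omega) (by simp; omega) (by simp; omega) hins
      · -- in the suffix
        push_neg at hx hy
        have hxy : (((x - (a + 2) : ℕ), (y - (a + 2) : ℕ)).1 + (a + 2),
            ((x - (a + 2) : ℕ), (y - (a + 2) : ℕ)).2 + (a + 2)) = ((x : ℕ), (y : ℕ)) := by
          ext <;> simp <;> omega
        have h1 : IsSecStr (a + 2 + b) (shiftF (a + 2) (insert (x - (a + 2), y - (a + 2)) U)) := by
          rw [shiftF_insert, hxy]
          exact secStr_subset hins (Finset.insert_subset_insert _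
            (Finset.subset_union_right.trans (Finset.subset_insert _ _)))
        have h2 : IsSecStr b (insert (x - (a + 2), y - (a + 2)) U) := by
          refine (secStr_shift_iff (k := a + 2) ?_ ?_ (by omega)).2 h1
          · intro p hp'
            rcases Finset.mem_insert.1 hp' with rfl | h
            · simp; omega
            · exact (hU.1.1.1 p h).1
          · intro p hp'
            rcases Finset.mem_insert.1 hp' with rfl | h
            · simp; omega
            · exact (hU.1.1.1 p h).2.2
        have hnU : (x - (a + 2), y - (a + 2)) ∉ U := by
          intro h
          apply hp
          refine Finset.mem_insert_of_mem (Finset.mem_union_right _ ?_)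
          have := shiftF_mem (k := a + 2) h
          rwa [hxy] at this
        exact hU.1.2 _ hnU h2
  · -- coverage
    intro i h1 h2
    by_cases hi : i ≤ a + 2
    · exact ⟨(1, a + 2), Finset.mem_insert_self _ _, h1, hi⟩
    · push_neg at hi
      rcases hU.2 (i - (a + 2)) (by omega) (by omega) with ⟨q, hq, hq1, hq2⟩
      refine ⟨(q.1 + (a + 2), q.2 + (a + 2)),
        Finset.mem_insert_of_mem (Finset.mem_union_right _ (shiftF_mem hq)), by simp; omega,
        by simp; omega⟩

end Join


section Split

lemma mem_unshiftF {k : ℕ} {S : Finset (ℕ × ℕ)} {q : ℕ × ℕ} :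
    q ∈ unshiftF k S ↔ ∃ p ∈ S, (p.1 - k, p.2 - k) = q := by
  simp [unshiftF]

lemma sat_uncov {n : ℕ} {S : Finset (ℕ × ℕ)} (hS : IsSaturated n S) {i j : ℕ}
    (h1 : 1 ≤ i) (hij : i + 1 < j) (hj : j ≤ n)
    (hi' : ∀ p ∈ S, ¬(p.1 ≤ i ∧ i ≤ p.2)) (hj' : ∀ p ∈ S, ¬(p.1 ≤ j ∧ j ≤ p.2)) :
    False := by
  have hnotmem : ((i, j) : ℕ × ℕ) ∉ S := by
    intro h
    exact hi' _ h ⟨le_rfl, by omega⟩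
  refine hS.2 (i, j) hnotmem ⟨?_, ?_, ?_⟩
  · intro p hp
    rcases Finset.mem_insert.1 hp with rfl | h
    · exact ⟨h1, hij, hj⟩
    · exact hS.1.1 p h
  · intro p hp q hq hne
    rcases Finset.mem_insert.1 hp with rfl | h <;> rcases Finset.mem_insert.1 hq with rfl | h'
    · exact absurd rfl hne
    · have w := hS.1.1 q h'
      have c1 := hi' q h'; have c2 := hj' q h'
      simp only [] at *; omega
    · have w := hS.1.1 p h
      have c1 := hi' p h; have c2 := hj' p h
      simp only [] at *; omega
    · exact hS.1.2.1 p h q h' hne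
  · intro p hp q hq
    rcases Finset.mem_insert.1 hp with rfl | h <;> rcases Finset.mem_insert.1 hq with rfl | h'
    · simp only []; omega
    · have w := hS.1.1 q h'
      have c1 := hi' q h'; have c2 := hj' q h'
      simp only [] at *; omega
    · have w := hS.1.1 p h
      have c1 := hi' p h; have c2 := hj' p h
      simp only [] at *; omega
    · exact hS.1.2.2 p h q h'

lemma unshift_window {k : ℕ} {S : Finset (ℕ × ℕ)} {m : ℕ}
    (h : ∀ p ∈ S, k + 1 ≤ p.1 ∧ p.2 ≤ k + m) :
    (∀ p ∈ unshiftF k S, 1 ≤ p.1) ∧ (∀ p ∈ unshiftF k S, p.2 ≤ m) := by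
  constructor <;> intro p hp <;> rcases mem_unshiftF.1 hp with ⟨q, hq, rfl⟩ <;>
    have := h q hq <;> simp <;> omega

lemma cut_restore {c : ℕ} {R : Finset (ℕ × ℕ)} (h : ∀ p ∈ R, c < p.1 ∧ c < p.2) :
    shiftF c (unshiftF c R) = R :=
  shiftF_unshiftF (fun p hp => ⟨le_of_lt (h p hp).1, le_of_lt (h p hp).2⟩)

lemma cut_split_left {a c b : ℕ} {S : Finset (ℕ × ℕ)} (hS : IsSaturated (c + b) S)
    (hac : a ≤ c) (hcut : ∀ p ∈ S, p.2 ≤ a ∨ c < p.1) :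
    IsSaturated a (S.filter fun p => p.2 ≤ a) := by
  set T := S.filter fun p => p.2 ≤ a with hT
  set R := S.filter fun p => c < p.1 with hR
  have hSTR : S = T ∪ R := by
    ext p
    simp only [hT, hR, Finset.mem_union, Finset.mem_filter]
    constructor
    · intro hp
      rcases hcut p hp with h | h
      · exact Or.inl ⟨hp, h⟩
      · exact Or.inr ⟨hp, h⟩
    · rintro (⟨hp, _⟩ | ⟨hp, _⟩) <;> exact hp
  have hTsub : T ⊆ S := Finset.filter_subset _ _
  have hRsub : R ⊆ S := Finset.filter_subset _ _
  refine ⟨secStr_shrink (secStr_subset hS.1 hTsub)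
      (fun p hp => (Finset.mem_filter.1 hp).2), ?_⟩
  intro p hpT hins
  have hw := hins.1 p (Finset.mem_insert_self _ _)
  have hpS : p ∉ S := by
    intro h
    rcases hcut p h with h' | h'
    · exact hpT (Finset.mem_filter.2 ⟨h, h'⟩)
    · omega
  refine hS.2 p hpS ?_
  rw [hSTR, ← Finset.insert_union]
  refine (secStr_union_iff (m := a) ?_ ?_).2
    ⟨secStr_mono_n hins (by omega), secStr_subset hS.1 hRsub⟩
  · intro q hq
    rcases Finset.mem_insert.1 hq with rfl | h
    · exact hw.2.2
    · exact (Finset.mem_filter.1 h).2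
  · intro q hq
    have := (Finset.mem_filter.1 hq).2; omega

lemma cut_split_right {a c b : ℕ} {S : Finset (ℕ × ℕ)} (hS : IsSaturated (c + b) S)
    (hac : a ≤ c) (hcut : ∀ p ∈ S, p.2 ≤ a ∨ c < p.1) :
    IsSaturated b (unshiftF c (S.filter fun p => c < p.1)) := by
  set T := S.filter fun p => p.2 ≤ a with hT
  set R := S.filter fun p => c < p.1 with hR
  have hRw : ∀ p ∈ R, c < p.1 ∧ c < p.2 := by
    intro p hp
    have h1 := (Finset.mem_filter.1 hp).2
    have h2 := hS.1.1 p ((Finset.mem_filter.1 hp).1)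
    omega
  have hRw2 : ∀ p ∈ R, c + 1 ≤ p.1 ∧ p.2 ≤ c + b := by
    intro p hp
    have h1 := (Finset.mem_filter.1 hp).2
    have h2 := hS.1.1 p ((Finset.mem_filter.1 hp).1)
    omega
  set U := unshiftF c R with hU
  have hres : shiftF c U = R := cut_restore hRw
  have hUw := unshift_window (m := b) hRw2
  have hSTR : S = T ∪ R := by
    ext p
    simp only [hT, hR, Finset.mem_union, Finset.mem_filter]
    constructor
    · intro hp
      rcases hcut p hp with h | h
      · exact Or.inl ⟨hp, h⟩
      · exact Or.inr ⟨hp, h⟩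
    · rintro (⟨hp, _⟩ | ⟨hp, _⟩) <;> exact hp
  have hRsec : IsSecStr (c + b) R := secStr_subset hS.1 (Finset.filter_subset _ _)
  have hUsec : IsSecStr b U := by
    refine (secStr_shift_iff (k := c) (n := c + b) hUw.1 hUw.2 (by omega)).2 ?_
    rwa [hres]
  refine ⟨hUsec, ?_⟩
  intro p hpU hins
  have hw := hins.1 p (Finset.mem_insert_self _ _)
  set q : ℕ × ℕ := (p.1 + c, p.2 + c) with hq
  have hqS : q ∉ S := by
    intro h
    rcases hcut q h with h' | h'
    · simp only [hq] at h'; omega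
    · have : q ∈ R := Finset.mem_filter.2 ⟨h, h'⟩
      apply hpU
      rw [hU]
      refine mem_unshiftF.2 ⟨q, this, ?_⟩
      simp only [hq]; ext <;> simp
  refine hS.2 q hqS ?_
  have hshift : IsSecStr (c + b) (shiftF c (insert p U)) := by
    refine (secStr_shift_iff (k := c) (n := c + b) ?_ ?_ (by omega)).1 hins
    · intro r hr
      rcases Finset.mem_insert.1 hr with rfl | h
      · exact hw.1
      · exact hUw.1 r h
    · intro r hr
      rcases Finset.mem_insert.1 hr with rfl | h
      · exact hw.2.2
      · exact hUw.2 r h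
  rw [shiftF_insert, hres] at hshift
  rw [hSTR, Finset.union_comm T R, ← Finset.insert_union, Finset.union_comm]
  refine (secStr_union_iff (m := a) ?_ ?_).2
    ⟨secStr_subset hS.1 (Finset.filter_subset _ _), hshift⟩
  · intro r hr
    exact (Finset.mem_filter.1 hr).2
  · intro r hr
    rcases Finset.mem_insert.1 hr with rfl | h
    · simp only [hq]; omega
    · have := hRw r h; omega

lemma arc_split_interior {j n : ℕ} {S : Finset (ℕ × ℕ)} (hS : IsSaturated n S)
    (harc : (1, j) ∈ S) (hj : j ≤ n) (hj3 : 3 ≤ j)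
    (hcut : ∀ p ∈ S, p ≠ (1, j) → (1 < p.1 ∧ p.2 < j) ∨ j < p.1) :
    IsSaturated (j - 2) (unshiftF 1 (S.filter fun p => p.2 < j)) := by
  set T' := S.filter (fun p => p.2 < j) with hT'
  set R := S.filter (fun p => j < p.1) with hR
  have hT'w : ∀ p ∈ T', 1 + 1 ≤ p.1 ∧ p.2 ≤ 1 + (j - 2) := by
    intro p hp
    have h1 := (Finset.mem_filter.1 hp).2
    have h2 := hS.1.1 p ((Finset.mem_filter.1 hp).1)
    have h3 : p ≠ (1, j) := by
      intro h; rw [h] at h1; exact absurd h1 (by simp)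
    rcases hcut p ((Finset.mem_filter.1 hp).1) h3 with h | h <;> omega
  set T0 := unshiftF 1 T' with hT0
  have hres : shiftF 1 T0 = T' := by
    refine cut_restore ?_
    intro p hp
    have h1 := hT'w p hp
    have h2 := hS.1.1 p ((Finset.mem_filter.1 hp).1)
    omega
  have hT0w := unshift_window (m := j - 2) hT'w
  have hSdec : S = insert (1, j) (T' ∪ R) := by
    ext p
    simp only [hT', hR, Finset.mem_insert, Finset.mem_union, Finset.mem_filter]
    constructor
    · intro hp
      by_cases h : p = (1, j)
      · exact Or.inl h
      · rcases hcut p hp h with h' | h'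
        · exact Or.inr (Or.inl ⟨hp, h'.2⟩)
        · exact Or.inr (Or.inr ⟨hp, h'⟩)
    · rintro (rfl | ⟨hp, _⟩ | ⟨hp, _⟩) <;> first | exact harc | exact hp
  have hT0sec : IsSecStr (j - 2) T0 := by
    refine (secStr_shift_iff (k := 1) (n := n) hT0w.1 hT0w.2 (by omega)).2 ?_
    rw [hres]
    exact secStr_subset hS.1 (Finset.filter_subset _ _)
  refine ⟨hT0sec, ?_⟩
  intro p hpT0 hins
  have hw := hins.1 p (Finset.mem_insert_self _ _)
  set q : ℕ × ℕ := (p.1 + 1, p.2 + 1) with hq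
  have hqS : q ∉ S := by
    intro h
    have hqne : q ≠ (1, j) := by
      intro h'
      have := congrArg Prod.fst h'
      simp only [hq] at this; omega
    rcases hcut q h hqne with h' | h'
    · have : q ∈ T' := Finset.mem_filter.2 ⟨h, h'.2⟩
      apply hpT0
      rw [hT0]
      refine mem_unshiftF.2 ⟨q, this, ?_⟩
      simp only [hq]; ext <;> simp
    · simp only [hq] at h'; omega
  refine hS.2 q hqS ?_
  have hshift : IsSecStr (j - 1) (shiftF 1 (insert p T0)) := by
    refine (secStr_shift_iff (k := 1) (n := j - 1) ?_ ?_ (by omega)).1 hins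
    · intro r hr
      rcases Finset.mem_insert.1 hr with rfl | h
      · exact hw.1
      · exact hT0w.1 r h
    · intro r hr
      rcases Finset.mem_insert.1 hr with rfl | h
      · exact hw.2.2
      · exact hT0w.2 r h
  rw [shiftF_insert, hres] at hshift
  rw [hSdec, Finset.insert_comm, ← Finset.insert_union]
  have hqw : q.1 + 1 ≤ 1 + (j - 1) ∧ q.2 ≤ j - 1 := by
    simp only [hq]; omega
  refine (secStr_insert_arc_iff le_rfl (by omega) hj ?_).2 ?_
  · intro r hr
    rcases Finset.mem_union.1 hr with h | h
    · rcases Finset.mem_insert.1 h with rfl | h'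
      · left; simp only [hq]; omega
      · have := hT'w r h'; left; omega
    · right; exact (Finset.mem_filter.1 h).2
  · refine (secStr_union_iff (m := j - 1) ?_ ?_).2
      ⟨secStr_mono_n hshift (by omega), secStr_subset hS.1 (Finset.filter_subset _ _)⟩
    · intro r hr
      rcases Finset.mem_insert.1 hr with rfl | h
      · simp only [hq]; omega
      · have := hT'w r h; omega
    · intro r hr
      have h1 := (Finset.mem_filter.1 hr).2
      omega

lemma tight_first_arc {n : ℕ} {S : Finset (ℕ × ℕ)} (hS : IsTight n S) (hn : 1 ≤ n) :
    ∃ j, (1, j) ∈ S ∧ 3 ≤ j ∧ j ≤ n := by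
  rcases hS.2 1 le_rfl hn with ⟨q, hq, hq1, hq2⟩
  have hw := hS.1.1.1 q hq
  have hq1' : q.1 = 1 := by omega
  refine ⟨q.2, ?_, by omega, hw.2.2⟩
  have : q = (1, q.2) := by ext <;> simp [hq1']
  rwa [this] at hq

lemma arc_cut {n j : ℕ} {S : Finset (ℕ × ℕ)} (hS : IsSecStr n S) (harc : (1, j) ∈ S) :
    ∀ p ∈ S, p ≠ (1, j) → (1 < p.1 ∧ p.2 < j) ∨ j < p.1 := by
  intro p hp hne
  have hw := hS.1 p hp
  have hsh := hS.2.1 p hp (1, j) harc hne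
  have hc1 := hS.2.2 (1, j) harc p hp
  have hc2 := hS.2.2 p hp (1, j) harc
  simp only [] at hsh hc1 hc2
  omega

end Split


section CountA

open Finset

def wrapJ (m : ℕ) (TU : Finset (ℕ × ℕ) × Finset (ℕ × ℕ)) : Finset (ℕ × ℕ) :=
  insert (1, m + 3) (shiftF 1 TU.1 ∪ shiftF (m + 3) TU.2)

lemma wrap_mem1 {m a b : ℕ} {T U : Finset (ℕ × ℕ)} (hT : IsSecStr a T) (hU : IsSecStr b U) :
    ∀ p ∈ wrapJ m (T, U), p.1 = 1 → p = (1, m + 3) := by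
  intro p hp h1
  rcases Finset.mem_insert.1 hp with rfl | h
  · rfl
  rcases Finset.mem_union.1 h with h | h
  · have := shift_window (c := 1) hT p h; omega
  · have := shift_window (c := m + 3) hU p h; omega

lemma wrap_filter1 {m a b : ℕ} {T U : Finset (ℕ × ℕ)} (hT : IsSecStr a T) (hab : a ≤ m + 1)
    (hU : IsSecStr b U) :
    (wrapJ m (T, U)).filter (fun p => 1 < p.1 ∧ p.2 < m + 3) = shiftF 1 T := by
  ext p
  simp only [Finset.mem_filter, wrapJ, Finset.mem_insert, Finset.mem_union]
  constructor
  · rintro ⟨rfl | h | h, h2⟩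
    · simp at h2
    · exact h
    · have := shift_window (c := m + 3) hU p h; omega
  · intro h
    have := shift_window (c := 1) hT p h
    exact ⟨Or.inr (Or.inl h), by omega, by omega⟩

lemma wrap_filter2 {m a b : ℕ} {T U : Finset (ℕ × ℕ)} (hT : IsSecStr a T) (hab : a ≤ m + 1)
    (hU : IsSecStr b U) :
    (wrapJ m (T, U)).filter (fun p => m + 3 < p.1) = shiftF (m + 3) U := by
  ext p
  simp only [Finset.mem_filter, wrapJ, Finset.mem_insert, Finset.mem_union]
  constructor
  · rintro ⟨rfl | h | h, h2⟩
    · simp at h2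
    · have := shift_window (c := 1) hT p h; omega
    · exact h
  · intro h
    have := shift_window (c := m + 3) hU p h
    exact ⟨Or.inr (Or.inr h), by omega⟩

lemma lemA_decomp (n : ℕ) :
    tights (n + 3) =
      (Finset.range (n + 1)).biUnion
        (fun m => ((sats (m + 1)) ×ˢ (tights (n - m))).image (wrapJ m)) := by
  ext S
  simp only [Finset.mem_biUnion, Finset.mem_image, Finset.mem_range, Finset.mem_product]
  constructor
  · intro hS0
    have hS : IsTight (n + 3) S := mem_tights.1 hS0
    rcases tight_first_arc hS (by omega) with ⟨j, harc, hj3, hjn⟩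
    have hcut := arc_cut hS.1.1 harc
    set m := j - 3 with hm
    have hj : j = m + 3 := by omega
    have hmn : m < n + 1 := by omega
    -- the interior
    have hint : IsSaturated (m + 1) (unshiftF 1 (S.filter fun p => p.2 < j)) := by
      have := arc_split_interior hS.1 harc hjn hj3 hcut
      have e : j - 2 = m + 1 := by omega
      rwa [e] at this
    -- the suffix
    have hcut2 : ∀ p ∈ S, p.2 ≤ j ∨ j < p.1 := by
      intro p hp
      by_cases h : p = (1, j)
      · subst h; left; simp
      · rcases hcut p hp h with h' | h' <;> omega
    have hS' : IsSaturated (j + (n - m)) S := by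
      have e : j + (n - m) = n + 3 := by omega
      rw [e]; exact hS.1
    have hsuf : IsSaturated (n - m) (unshiftF j (S.filter fun p => j < p.1)) :=
      cut_split_right (a := j) hS' le_rfl hcut2
    have hsufT : IsTight (n - m) (unshiftF j (S.filter fun p => j < p.1)) := by
      refine ⟨hsuf, ?_⟩
      intro i h1 h2
      rcases hS.2 (i + j) (by omega) (by omega) with ⟨q, hq, hq1, hq2⟩
      have hqw := hS.1.1.1 q hq
      have hqf : q ∈ S.filter (fun p => j < p.1) := by
        refine Finset.mem_filter.2 ⟨hq, ?_⟩
        by_cases h : q = (1, j)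
        · subst h; simp at hq2 ⊢; omega
        · rcases hcut q hq h with h' | h' <;> omega
      refine ⟨(q.1 - j, q.2 - j), mem_unshiftF.2 ⟨q, hqf, rfl⟩, ?_, ?_⟩
      · simp only []
        have := (Finset.mem_filter.1 hqf).2; omega
      · simp only []
        have := (Finset.mem_filter.1 hqf).2; omega
    refine ⟨m, hmn, (unshiftF 1 (S.filter fun p => p.2 < j), unshiftF j (S.filter fun p => j < p.1)),
      ⟨mem_sats.2 hint, mem_tights.2 hsufT⟩, ?_⟩
    -- S equals the wrap join
    have hres1 : shiftF 1 (unshiftF 1 (S.filter fun p => p.2 < j)) = S.filter fun p => p.2 < j := by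
      refine cut_restore ?_
      intro p hp
      have h1 := (Finset.mem_filter.1 hp).2
      have h2 := hS.1.1.1 p ((Finset.mem_filter.1 hp).1)
      have h3 : p ≠ (1, j) := by
        intro h; rw [h] at h1; exact absurd h1 (by simp)
      rcases hcut p ((Finset.mem_filter.1 hp).1) h3 with h | h <;> omega
    have hres2 : shiftF j (unshiftF j (S.filter fun p => j < p.1)) = S.filter fun p => j < p.1 := by
      refine cut_restore ?_
      intro p hp
      have h1 := (Finset.mem_filter.1 hp).2
      have h2 := hS.1.1.1 p ((Finset.mem_filter.1 hp).1)
      omega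
    rw [wrapJ]
    simp only []
    rw [hres1, ← hj, hres2]
    ext p
    simp only [Finset.mem_insert, Finset.mem_union, Finset.mem_filter]
    constructor
    · rintro (rfl | ⟨hp, _⟩ | ⟨hp, _⟩) <;> first | exact harc | exact hp
    · intro hp
      by_cases h : p = (1, j)
      · exact Or.inl h
      · rcases hcut p hp h with h' | h'
        · exact Or.inr (Or.inl ⟨hp, h'.2⟩)
        · exact Or.inr (Or.inr ⟨hp, h'⟩)
  · rintro ⟨m, hmn, ⟨T, U⟩, ⟨hT, hU⟩, rfl⟩
    have hT' := mem_sats.1 hT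
    have hU' := mem_tights.1 hU
    have := wrap_tight (a := m + 1) (b := n - m) (by omega) hT' hU'
    have e : m + 1 + 2 + (n - m) = n + 3 := by omega
    rw [e] at this
    exact mem_tights.2 this

lemma lemA (n : ℕ) : pC (n + 3) = ∑ m ∈ Finset.range (n + 1), sC (m + 1) * pC (n - m) := by
  rw [pC, lemA_decomp]
  rw [Finset.card_biUnion]
  · refine Finset.sum_congr rfl ?_
    intro m hm
    have hinj : Set.InjOn (wrapJ m) ↑((sats (m + 1)) ×ˢ (tights (n - m))) := by
      rintro ⟨T, U⟩ hTU ⟨T', U'⟩ hTU' heq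
      simp only [Finset.mem_coe, Finset.mem_product] at hTU hTU'
      have hT := (mem_sats.1 hTU.1).1
      have hU := (mem_tights.1 hTU.2).1.1
      have hT' := (mem_sats.1 hTU'.1).1
      have hU' := (mem_tights.1 hTU'.2).1.1
      have e1 : shiftF 1 T = shiftF 1 T' := by
        rw [← wrap_filter1 (m := m) hT le_rfl hU, ← wrap_filter1 (m := m) hT' le_rfl hU', heq]
      have e2 : shiftF (m + 3) U = shiftF (m + 3) U' := by
        rw [← wrap_filter2 (m := m) hT le_rfl hU, ← wrap_filter2 (m := m) hT' le_rfl hU', heq]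
      have t1 : T = T' := by
        have := congrArg (unshiftF 1) e1
        rwa [unshiftF_shiftF, unshiftF_shiftF] at this
      have t2 : U = U' := by
        have := congrArg (unshiftF (m + 3)) e2
        rwa [unshiftF_shiftF, unshiftF_shiftF] at this
      rw [t1, t2]
    rw [Finset.card_image_of_injOn hinj, Finset.card_product]
    rfl
  · intro x hx y hy hxy
    simp only [Finset.disjoint_left, Finset.mem_image, Finset.mem_product]
    rintro X ⟨⟨T, U⟩, ⟨hT, hU⟩, rfl⟩ ⟨⟨T', U'⟩, ⟨hT', hU'⟩, heq⟩
    have hTs := (mem_sats.1 hT).1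
    have hUs := (mem_tights.1 hU).1.1
    have hTs' := (mem_sats.1 hT').1
    have hUs' := (mem_tights.1 hU').1.1
    have harc' : ((1, y + 3) : ℕ × ℕ) ∈ wrapJ x (T, U) := by
      rw [← heq]; exact Finset.mem_insert_self _ _
    have := wrap_mem1 (m := x) hTs hUs _ harc' rfl
    have := congrArg Prod.snd this
    simp at this
    omega

end CountA


section CountB

open Finset

def gapJ (g a : ℕ) (TU : Finset (ℕ × ℕ) × Finset (ℕ × ℕ)) : Finset (ℕ × ℕ) :=
  TU.1 ∪ shiftF (a + g) TU.2

lemma gapJ_cov {g a b : ℕ} {T U : Finset (ℕ × ℕ)} (hT : IsTight a T) (hU : IsTight b U)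
    (x : ℕ) :
    (∃ p ∈ T ∪ shiftF (a + g) U, p.1 ≤ x ∧ x ≤ p.2) ↔
      ((1 ≤ x ∧ x ≤ a) ∨ (a + g < x ∧ x ≤ a + g + b)) := by
  constructor
  · rintro ⟨p, hp, h1, h2⟩
    rcases Finset.mem_union.1 hp with h | h
    · have := hT.1.1.1 p h; left; omega
    · have := shift_window (c := a + g) hU.1.1 p h; right; omega
  · rintro (⟨h1, h2⟩ | ⟨h1, h2⟩)
    · rcases hT.2 x h1 h2 with ⟨p, hp, hc⟩
      exact ⟨p, Finset.mem_union_left _ hp, hc⟩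
    · rcases hU.2 (x - (a + g)) (by omega) (by omega) with ⟨p, hp, hc1, hc2⟩
      refine ⟨(p.1 + (a + g), p.2 + (a + g)),
        Finset.mem_union_right _ (shiftF_mem hp), by simp; omega, by simp; omega⟩

lemma gapJ_uncov {c a b : ℕ} {T U : Finset (ℕ × ℕ)} (hT : ∀ p ∈ T, p.2 ≤ a)
    (hU : IsSecStr b U) (hca : a < c) :
    ∀ p ∈ T ∪ shiftF c U, ¬(p.1 ≤ a + 1 ∧ a + 1 ≤ p.2) := by
  intro p hp
  rcases Finset.mem_union.1 hp with h | h
  · have := hT p h; omega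
  · have := shift_window (c := c) hU p h; omega

lemma gapJ_filter1 {c a b : ℕ} {T U : Finset (ℕ × ℕ)} (hT : ∀ p ∈ T, p.2 ≤ a)
    (hU : IsSecStr b U) (hca : a ≤ c) :
    (T ∪ shiftF c U).filter (fun p => p.2 ≤ a) = T := by
  ext p
  simp only [Finset.mem_filter, Finset.mem_union]
  constructor
  · rintro ⟨h | h, h2⟩
    · exact h
    · have := shift_window (c := c) hU p h; omega
  · intro h
    exact ⟨Or.inl h, hT p h⟩

lemma gapJ_filter2 {c a b : ℕ} {T U : Finset (ℕ × ℕ)} (hT : ∀ p ∈ T, p.2 ≤ a)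
    (hTw : ∀ p ∈ T, p.1 < p.2) (hU : IsSecStr b U) (hca : a ≤ c) :
    (T ∪ shiftF c U).filter (fun p => c < p.1) = shiftF c U := by
  ext p
  simp only [Finset.mem_filter, Finset.mem_union]
  constructor
  · rintro ⟨h | h, h2⟩
    · have := hT p h; have := hTw p h; omega
    · exact h
  · intro h
    have := shift_window (c := c) hU p h
    exact ⟨Or.inr h, by omega⟩

lemma gap_case {N a g b : ℕ} {S : Finset (ℕ × ℕ)} (hS : IsSaturated N S)
    (hb : a + g + b = N)
    (hcut : ∀ p ∈ S, p.2 ≤ a ∨ a + g < p.1)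
    (hcovL : ∀ x, 1 ≤ x → x ≤ a → ∃ p ∈ S, p.1 ≤ x ∧ x ≤ p.2)
    (hcovR : ∀ x, a + g < x → x ≤ N → ∃ p ∈ S, p.1 ≤ x ∧ x ≤ p.2) :
    IsTight a (S.filter fun p => p.2 ≤ a) ∧
    IsTight b (unshiftF (a + g) (S.filter fun p => a + g < p.1)) ∧
    S = (S.filter fun p => p.2 ≤ a) ∪
        shiftF (a + g) (unshiftF (a + g) (S.filter fun p => a + g < p.1)) := by
  have hS' : IsSaturated ((a + g) + b) S := by
    have e : (a + g) + b = N := by omega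
    rw [e]; exact hS
  have hL : IsSaturated a (S.filter fun p => p.2 ≤ a) :=
    cut_split_left hS' (by omega) hcut
  have hR : IsSaturated b (unshiftF (a + g) (S.filter fun p => a + g < p.1)) :=
    cut_split_right hS' (by omega) hcut
  have hres : shiftF (a + g) (unshiftF (a + g) (S.filter fun p => a + g < p.1)) =
      S.filter fun p => a + g < p.1 := by
    refine cut_restore ?_
    intro p hp
    have h1 := (Finset.mem_filter.1 hp).2
    have h2 := hS.1.1 p ((Finset.mem_filter.1 hp).1)
    omega
  refine ⟨⟨hL, ?_⟩, ⟨hR, ?_⟩, ?_⟩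
  · intro x h1 h2
    rcases hcovL x h1 h2 with ⟨p, hp, hc1, hc2⟩
    refine ⟨p, Finset.mem_filter.2 ⟨hp, ?_⟩, hc1, hc2⟩
    rcases hcut p hp with h | h <;> omega
  · intro y h1 h2
    rcases hcovR (y + (a + g)) (by omega) (by omega) with ⟨p, hp, hc1, hc2⟩
    have hpf : p ∈ S.filter fun p => a + g < p.1 := by
      refine Finset.mem_filter.2 ⟨hp, ?_⟩
      rcases hcut p hp with h | h <;> omega
    refine ⟨(p.1 - (a + g), p.2 - (a + g)), mem_unshiftF.2 ⟨p, hpf, rfl⟩, ?_, ?_⟩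
    · simp only []; omega
    · simp only []
      have := (Finset.mem_filter.1 hpf).2; omega
  · rw [hres]
    ext p
    simp only [Finset.mem_union, Finset.mem_filter]
    constructor
    · intro hp
      rcases hcut p hp with h | h
      · exact Or.inl ⟨hp, h⟩
      · exact Or.inr ⟨hp, h⟩
    · rintro (⟨hp, _⟩ | ⟨hp, _⟩) <;> exact hp

lemma lemB_decomp (n : ℕ) :
    sats (n + 1) =
      tights (n + 1) ∪
      ((Finset.range (n + 1)).biUnion fun a =>
        ((tights a) ×ˢ (tights (n - a))).image (gapJ 1 a)) ∪
      ((Finset.range n).biUnion fun a =>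
        ((tights a) ×ˢ (tights (n - 1 - a))).image (gapJ 2 a)) := by
  classical
  ext S
  simp only [Finset.mem_union, Finset.mem_biUnion, Finset.mem_image, Finset.mem_range,
    Finset.mem_product]
  constructor
  · intro hS0
    have hS : IsSaturated (n + 1) S := mem_sats.1 hS0
    set V := (Finset.Icc 1 (n + 1)).filter
      (fun i => ∀ p ∈ S, ¬(p.1 ≤ i ∧ i ≤ p.2)) with hV
    have hcov_notV : ∀ x, 1 ≤ x → x ≤ n + 1 → x ∉ V → ∃ p ∈ S, p.1 ≤ x ∧ x ≤ p.2 := by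
      intro x h1 h2 hxV
      by_contra hcon
      push_neg at hcon
      apply hxV
      rw [hV]
      refine Finset.mem_filter.2 ⟨Finset.mem_Icc.2 ⟨h1, h2⟩, ?_⟩
      intro p hp hc
      exact absurd hc.2 (by have := hcon p hp hc.1; omega)
    by_cases hVe : V = ∅
    · left; left
      refine mem_tights.2 ⟨hS, ?_⟩
      intro i h1 h2
      exact hcov_notV i h1 h2 (by rw [hVe]; simp)
    · have hVne : V.Nonempty := Finset.nonempty_iff_ne_empty.2 hVe
      set i0 := V.min' hVne with hi0
      have hi0V : i0 ∈ V := Finset.min'_mem _ _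
      have hmin : ∀ x ∈ V, i0 ≤ x := fun x hx => Finset.min'_le _ _ hx
      have hi0I : 1 ≤ i0 ∧ i0 ≤ n + 1 :=
        Finset.mem_Icc.1 (Finset.mem_filter.1 hi0V).1
      have huncov0 : ∀ p ∈ S, ¬(p.1 ≤ i0 ∧ i0 ≤ p.2) := (Finset.mem_filter.1 hi0V).2
      have hVsub : ∀ x ∈ V, x = i0 ∨ x = i0 + 1 := by
        intro x hxV
        by_contra hcon
        push_neg at hcon
        have hx1 := hmin x hxV
        have hxI := Finset.mem_Icc.1 (Finset.mem_filter.1 hxV).1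
        have hxu := (Finset.mem_filter.1 hxV).2
        have : i0 + 1 < x := by omega
        exact sat_uncov hS hi0I.1 this hxI.2 huncov0 hxu
      by_cases hg : (i0 + 1) ∈ V
      · -- gap of size 2
        right
        have hi1I := Finset.mem_Icc.1 (Finset.mem_filter.1 hg).1
        have huncov1 : ∀ p ∈ S, ¬(p.1 ≤ i0 + 1 ∧ i0 + 1 ≤ p.2) := (Finset.mem_filter.1 hg).2
        set a := i0 - 1 with ha
        have hcut : ∀ p ∈ S, p.2 ≤ a ∨ a + 2 < p.1 := by
          intro p hp
          have h1 := huncov0 p hp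
          have h2 := huncov1 p hp
          have h3 := hS.1.1 p hp
          omega
        have hgc := gap_case (b := n - 1 - a) hS (by omega) hcut
          (fun x h1 h2 => hcov_notV x h1 (by omega)
            (fun hxV => by have := hmin x hxV; omega))
          (fun x h1 h2 => hcov_notV x (by omega) h2
            (fun hxV => by rcases hVsub x hxV with h | h <;> omega))
        refine ⟨a, by omega, (S.filter fun p => p.2 ≤ a,
          unshiftF (a + 2) (S.filter fun p => a + 2 < p.1)),
          ⟨mem_tights.2 hgc.1, mem_tights.2 hgc.2.1⟩, ?_⟩
        rw [gapJ]
        exact hgc.2.2.symm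
      · -- gap of size 1
        left; right
        set a := i0 - 1 with ha
        have hcut : ∀ p ∈ S, p.2 ≤ a ∨ a + 1 < p.1 := by
          intro p hp
          have h1 := huncov0 p hp
          have h3 := hS.1.1 p hp
          omega
        have hgc := gap_case (b := n - a) hS (by omega) hcut
          (fun x h1 h2 => hcov_notV x h1 (by omega)
            (fun hxV => by have := hmin x hxV; omega))
          (fun x h1 h2 => hcov_notV x (by omega) h2
            (fun hxV => by
              rcases hVsub x hxV with h | h
              · omega
              · exact hg (h ▸ hxV)))
        refine ⟨a, by omega, (S.filter fun p => p.2 ≤ a,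
          unshiftF (a + 1) (S.filter fun p => a + 1 < p.1)),
          ⟨mem_tights.2 hgc.1, mem_tights.2 hgc.2.1⟩, ?_⟩
        rw [gapJ]
        exact hgc.2.2.symm
  · rintro ((hS | ⟨a, han, ⟨T, U⟩, ⟨hT, hU⟩, rfl⟩) | ⟨a, han, ⟨T, U⟩, ⟨hT, hU⟩, rfl⟩)
    · exact mem_sats.2 (mem_tights.1 hS).1
    · have := join_sat (g := 1) le_rfl (by norm_num) (mem_tights.1 hT) (mem_tights.1 hU)
      have e : a + 1 + (n - a) = n + 1 := by omega
      rw [e] at this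
      exact mem_sats.2 this
    · have := join_sat (g := 2) (by norm_num) le_rfl (mem_tights.1 hT) (mem_tights.1 hU)
      have e : a + 2 + (n - 1 - a) = n + 1 := by omega
      rw [e] at this
      exact mem_sats.2 this


lemma gapJ_uncov2 {g a b : ℕ} {T U : Finset (ℕ × ℕ)} (hT : ∀ p ∈ T, p.2 ≤ a)
    (hU : IsSecStr b U) :
    ∀ y, a < y → y ≤ a + g → ∀ p ∈ T ∪ shiftF (a + g) U, ¬(p.1 ≤ y ∧ y ≤ p.2) := by
  intro y hy1 hy2 p hp
  rcases Finset.mem_union.1 hp with h | h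
  · have := hT p h; omega
  · have := shift_window (c := a + g) hU p h; omega

lemma mem_B_elim {g a b : ℕ} {X : Finset (ℕ × ℕ)}
    (h : X ∈ ((tights a) ×ˢ (tights b)).image (gapJ g a)) :
    ∃ T U, IsTight a T ∧ IsTight b U ∧ X = T ∪ shiftF (a + g) U := by
  rcases Finset.mem_image.1 h with ⟨⟨T, U⟩, hTU, rfl⟩
  rcases Finset.mem_product.1 hTU with ⟨h1, h2⟩
  exact ⟨T, U, mem_tights.1 h1, mem_tights.1 h2, rfl⟩

lemma B_uncov {g a b : ℕ} {X : Finset (ℕ × ℕ)}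
    (h : X ∈ ((tights a) ×ˢ (tights b)).image (gapJ g a)) :
    ∀ y, a < y → y ≤ a + g → ∀ p ∈ X, ¬(p.1 ≤ y ∧ y ≤ p.2) := by
  rcases mem_B_elim h with ⟨T, U, hT, hU, rfl⟩
  exact gapJ_uncov2 (fun p hp => (hT.1.1.1 p hp).2.2) hU.1.1

lemma B_cov {g a b : ℕ} {X : Finset (ℕ × ℕ)}
    (h : X ∈ ((tights a) ×ˢ (tights b)).image (gapJ g a)) :
    ∀ x, (∃ p ∈ X, p.1 ≤ x ∧ x ≤ p.2) ↔ ((1 ≤ x ∧ x ≤ a) ∨ (a + g < x ∧ x ≤ a + g + b)) := by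
  rcases mem_B_elim h with ⟨T, U, hT, hU, rfl⟩
  exact gapJ_cov hT hU

lemma B_disj {g g' a a' b b' : ℕ} {X : Finset (ℕ × ℕ)} (hg : 1 ≤ g) (hg' : 1 ≤ g')
    (hg2 : g ≤ 2) (hg2' : g' ≤ 2)
    (hn : a + g + b = a' + g' + b') (hne : g ≠ g' ∨ a ≠ a')
    (h : X ∈ ((tights a) ×ˢ (tights b)).image (gapJ g a))
    (h' : X ∈ ((tights a') ×ˢ (tights b')).image (gapJ g' a')) : False := by
  have c1 := (B_cov h (a' + 1)).2
  have c2 := (B_cov h' (a + 1)).2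
  have u1 := B_uncov h (a + 1) (by omega) (by omega)
  have u2 := B_uncov h' (a' + 1) (by omega) (by omega)
  -- a+1 uncovered in X (via h), so via h' characterization it is "uncovered" too
  have d1 : ¬((1 ≤ a + 1 ∧ a + 1 ≤ a') ∨ (a' + g' < a + 1 ∧ a + 1 ≤ a' + g' + b')) := by
    intro hc
    rcases (B_cov h' (a + 1)).2 hc with ⟨p, hp, hc1, hc2⟩
    exact u1 p hp ⟨hc1, hc2⟩
  have d2 : ¬((1 ≤ a' + 1 ∧ a' + 1 ≤ a) ∨ (a + g < a' + 1 ∧ a' + 1 ≤ a + g + b)) := by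
    intro hc
    rcases (B_cov h (a' + 1)).2 hc with ⟨p, hp, hc1, hc2⟩
    exact u2 p hp ⟨hc1, hc2⟩
  have haa : a = a' := by omega
  have hgg : g ≠ g' := by
    rcases hne with h | h
    · exact h
    · exact absurd haa h
  -- wlog g < g', i.e. the smaller gap covers a+2 when the other does not
  rcases Nat.lt_or_ge g g' with hlt | hge
  · have u2' := B_uncov h' (a + 2) (by omega) (by omega)
    have d3 : ¬((1 ≤ a + 2 ∧ a + 2 ≤ a) ∨ (a + g < a + 2 ∧ a + 2 ≤ a + g + b)) := by
      intro hc
      rcases (B_cov h (a + 2)).2 hc with ⟨p, hp, hc1, hc2⟩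
      exact u2' p hp ⟨hc1, hc2⟩
    omega
  · have hlt : g' < g := by omega
    have u1' := B_uncov h (a + 2) (by omega) (by omega)
    have d3 : ¬((1 ≤ a + 2 ∧ a + 2 ≤ a') ∨ (a' + g' < a + 2 ∧ a + 2 ≤ a' + g' + b')) := by
      intro hc
      rcases (B_cov h' (a + 2)).2 hc with ⟨p, hp, hc1, hc2⟩
      exact u1' p hp ⟨hc1, hc2⟩
    omega

lemma B_tight_disj {g a b N : ℕ} {X : Finset (ℕ × ℕ)} (hg : 1 ≤ g)
    (hn : a + g + b = N)
    (h : X ∈ ((tights a) ×ˢ (tights b)).image (gapJ g a)) (h' : X ∈ tights N) : False := by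
  have hT := mem_tights.1 h'
  rcases hT.2 (a + 1) (by omega) (by omega) with ⟨p, hp, h1, h2⟩
  exact B_uncov h (a + 1) (by omega) (by omega) p hp ⟨h1, h2⟩

lemma B_inj (g a b : ℕ) (hg : 1 ≤ g) :
    Set.InjOn (gapJ g a) ↑((tights a) ×ˢ (tights b)) := by
  rintro ⟨T, U⟩ hTU ⟨T', U'⟩ hTU' heq
  simp only [Finset.mem_coe, Finset.mem_product] at hTU hTU'
  have hT := mem_tights.1 hTU.1
  have hU := mem_tights.1 hTU.2
  have hT' := mem_tights.1 hTU'.1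
  have hU' := mem_tights.1 hTU'.2
  have hTw : ∀ p ∈ T, p.2 ≤ a := fun p hp => (hT.1.1.1 p hp).2.2
  have hTw' : ∀ p ∈ T', p.2 ≤ a := fun p hp => (hT'.1.1.1 p hp).2.2
  have hTlt : ∀ p ∈ T, p.1 < p.2 := fun p hp => by have := hT.1.1.1 p hp; omega
  have hTlt' : ∀ p ∈ T', p.1 < p.2 := fun p hp => by have := hT'.1.1.1 p hp; omega
  have e1 : T = T' := by
    rw [← gapJ_filter1 (c := a + g) hTw hU.1.1 (by omega),
        ← gapJ_filter1 (c := a + g) hTw' hU'.1.1 (by omega)]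
    rw [show (T ∪ shiftF (a + g) U) = gapJ g a (T, U) from rfl,
        show (T' ∪ shiftF (a + g) U') = gapJ g a (T', U') from rfl, heq]
  have e2 : U = U' := by
    have := congrArg (unshiftF (a + g)) (by
      rw [← gapJ_filter2 (c := a + g) hTw hTlt hU.1.1 (by omega),
          ← gapJ_filter2 (c := a + g) hTw' hTlt' hU'.1.1 (by omega)]
      rw [show (T ∪ shiftF (a + g) U) = gapJ g a (T, U) from rfl,
          show (T' ∪ shiftF (a + g) U') = gapJ g a (T', U') from rfl, heq] :
        shiftF (a + g) U = shiftF (a + g) U')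
    rwa [unshiftF_shiftF, unshiftF_shiftF] at this
  rw [e1, e2]

lemma lemB (n : ℕ) :
    sC (n + 1) = pC (n + 1) + (∑ a ∈ Finset.range (n + 1), pC a * pC (n - a))
      + ∑ a ∈ Finset.range n, pC a * pC (n - 1 - a) := by
  classical
  rw [sC, lemB_decomp]
  set B1 := (Finset.range (n + 1)).biUnion
    (fun a => ((tights a) ×ˢ (tights (n - a))).image (gapJ 1 a)) with hB1
  set B2 := (Finset.range n).biUnion
    (fun a => ((tights a) ×ˢ (tights (n - 1 - a))).image (gapJ 2 a)) with hB2
  have hD01 : Disjoint (tights (n + 1)) B1 := by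
    rw [Finset.disjoint_left]
    intro X hX hX'
    rw [hB1] at hX'
    rcases Finset.mem_biUnion.1 hX' with ⟨a, ha, hXa⟩
    have han := Finset.mem_range.1 ha
    exact B_tight_disj le_rfl (by omega) hXa hX
  have hD02 : Disjoint (tights (n + 1)) B2 := by
    rw [Finset.disjoint_left]
    intro X hX hX'
    rw [hB2] at hX'
    rcases Finset.mem_biUnion.1 hX' with ⟨a, ha, hXa⟩
    have han := Finset.mem_range.1 ha
    exact B_tight_disj (by norm_num) (by omega) hXa hX
  have hD12 : Disjoint B1 B2 := by
    rw [Finset.disjoint_left]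
    intro X hX hX'
    rw [hB1] at hX
    rw [hB2] at hX'
    rcases Finset.mem_biUnion.1 hX with ⟨a, ha, hXa⟩
    rcases Finset.mem_biUnion.1 hX' with ⟨a', ha', hXa'⟩
    have han := Finset.mem_range.1 ha
    have han' := Finset.mem_range.1 ha'
    exact B_disj le_rfl (by norm_num) (by norm_num) (by norm_num) (by omega)
      (Or.inl (by norm_num)) hXa hXa'
  rw [Finset.card_union_of_disjoint (by
    rw [Finset.disjoint_union_left]
    exact ⟨hD02, hD12⟩)]
  rw [Finset.card_union_of_disjoint hD01]
  congr 1
  · congr 1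
    rw [Finset.card_biUnion]
    · exact Finset.sum_congr rfl fun a ha => by
        rw [Finset.card_image_of_injOn (B_inj 1 a (n - a) le_rfl), Finset.card_product]; rfl
    · intro x hx y hy hxy
      rw [Function.onFun, Finset.disjoint_left]
      intro X hXx hXy
      have hxn := Finset.mem_range.1 hx
      have hyn := Finset.mem_range.1 hy
      exact B_disj (g := 1) (g' := 1) le_rfl le_rfl (by norm_num) (by norm_num) (by omega)
        (Or.inr hxy) hXx hXy
  · rw [Finset.card_biUnion]
    · exact Finset.sum_congr rfl fun a ha => by
        rw [Finset.card_image_of_injOn (B_inj 2 a (n - 1 - a) (by norm_num)),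
          Finset.card_product]; rfl
    · intro x hx y hy hxy
      rw [Function.onFun, Finset.disjoint_left]
      intro X hXx hXy
      have hxn := Finset.mem_range.1 hx
      have hyn := Finset.mem_range.1 hy
      exact B_disj (g := 2) (g' := 2) (by norm_num) (by norm_num) (by norm_num) (by norm_num)
        (by omega) (Or.inr hxy) hXx hXy

end CountB


section GF

open PowerSeries

noncomputable def Pgf : PowerSeries ℚ := PowerSeries.mk fun n => (pC n : ℚ)

lemma coeff_satGF (n : ℕ) :
    (PowerSeries.coeff n) satGF = if n = 0 then 0 else (sC n : ℚ) := by
  rw [satGF, coeff_mk]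
  split_ifs with h
  · rfl
  · have hset : {S : Finset (ℕ × ℕ) | IsSaturated n S} = ↑(sats n) := by
      ext S
      simp [Set.mem_setOf_eq, mem_sats]
    rw [hset, Set.ncard_coe_finset]
    rfl

lemma coeff_Pgf (n : ℕ) : (PowerSeries.coeff n) Pgf = (pC n : ℚ) := coeff_mk _ _

lemma gf1 : Pgf = 1 + (satGF * Pgf) * X ^ 2 := by
  ext n
  rw [map_add, coeff_Pgf, PowerSeries.coeff_one, PowerSeries.coeff_mul_X_pow']
  rcases n with _ | n
  · simp [pC0]
  rcases n with _ | n
  · norm_num [pC1]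
  rcases n with _ | m
  · -- n = 2
    rw [pC2, if_neg (by omega : (2:ℕ) ≠ 0), if_pos (by omega : (2:ℕ) ≤ 2),
      show ((2:ℕ) - 2) = 0 from rfl, PowerSeries.coeff_mul]
    simp [coeff_satGF]
  · -- n = m + 3
    have h0 : (m + 3 : ℕ) ≠ 0 := by omega
    rw [if_neg h0, if_pos (by omega : 2 ≤ m + 3)]
    have e : (m + 3) - 2 = m + 1 := by omega
    rw [e, PowerSeries.coeff_mul, Finset.Nat.sum_antidiagonal_eq_sum_range_succ_mk]
    rw [Finset.sum_range_succ']
    have hz : (PowerSeries.coeff 0) satGF * (PowerSeries.coeff (m + 1 - 0)) Pgf = 0 := by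
      rw [coeff_satGF]; simp
    rw [hz, add_zero, zero_add]
    have hterm : ∀ k ∈ Finset.range (m + 1),
        (PowerSeries.coeff (k + 1)) satGF * (PowerSeries.coeff (m + 1 - (k + 1))) Pgf =
          ((sC (k + 1) * pC (m - k) : ℕ) : ℚ) := by
      intro k hk
      rw [coeff_satGF, if_neg (by omega : k + 1 ≠ 0), coeff_Pgf]
      have e2 : m + 1 - (k + 1) = m - k := by omega
      rw [e2]
      push_cast
      ring
    rw [Finset.sum_congr rfl hterm, ← Nat.cast_sum]
    exact_mod_cast congrArg (fun x : ℕ => (x : ℚ)) (lemA m)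

lemma gf2 : satGF = Pgf - 1 + Pgf ^ 2 * X ^ 1 + Pgf ^ 2 * X ^ 2 := by
  ext n
  rw [map_add, map_add, map_sub, coeff_Pgf, PowerSeries.coeff_one, coeff_satGF,
    PowerSeries.coeff_mul_X_pow', PowerSeries.coeff_mul_X_pow']
  have hsq : ∀ m : ℕ, (PowerSeries.coeff m) (Pgf ^ 2) =
      ((∑ a ∈ Finset.range (m + 1), pC a * pC (m - a) : ℕ) : ℚ) := by
    intro m
    rw [sq, PowerSeries.coeff_mul, Finset.Nat.sum_antidiagonal_eq_sum_range_succ_mk]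
    rw [Nat.cast_sum]
    refine Finset.sum_congr rfl ?_
    intro k hk
    rw [coeff_Pgf, coeff_Pgf]
    push_cast
    ring
  rcases n with _ | m
  · simp [pC0]
  rw [if_neg (by omega : (m + 1 : ℕ) ≠ 0), if_neg (by omega : (m + 1 : ℕ) ≠ 0),
    if_pos (by omega : 1 ≤ m + 1)]
  have e1 : m + 1 - 1 = m := by omega
  rw [e1, hsq]
  rcases m with _ | k
  · -- m = 0
    rw [if_neg (by omega : ¬ 2 ≤ 0 + 1)]
    have := lemB 0
    rw [sC1] at this ⊢
    simp [pC0, pC1]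
  · rw [if_pos (by omega : 2 ≤ k + 1 + 1)]
    have e2 : k + 1 + 1 - 2 = k := by omega
    rw [e2, hsq]
    have hB := lemB (k + 1)
    have : ((sC (k + 2) : ℕ) : ℚ) = ((pC (k + 2) +
        (∑ a ∈ Finset.range (k + 2), pC a * pC (k + 1 - a)) +
        ∑ a ∈ Finset.range (k + 1), pC a * pC (k - a) : ℕ) : ℚ) := by
      exact_mod_cast congrArg (fun x : ℕ => (x : ℚ)) hB
    rw [show k + 1 + 1 = k + 2 from rfl]
    rw [this]
    push_cast
    ring

lemma gf1' : Pgf * (1 - X ^ 2 * satGF) = 1 := by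
  linear_combination gf1

end GF

end SatAux


open PowerSeries in
/-- The generating function of saturated structures satisfies the cubic equation
`z⁴S³ + z²(z² − 2)S² + (1 − z²)S = z + z²`. -/
theorem saturated_gf_cubic :
    X ^ 4 * satGF ^ 3 + X ^ 2 * (X ^ 2 - 2) * satGF ^ 2 + (1 - X ^ 2) * satGF
      = X + X ^ 2 := by
  linear_combination (1 - X ^ 2 * satGF) ^ 2 * SatAux.gf2 +
    ((1 - X ^ 2 * satGF) + (X + X ^ 2) * (SatAux.Pgf * (1 - X ^ 2 * satGF) + 1)) * SatAux.gf1'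
end

section
/- For every integer n ≥ 2, the number of stem-loop structures on [1,n] (with θ = 1) equals 2^{n−2} − 1. -/
/-- A stem-loop: a secondary structure containing a (unique) base pair `(i₀,j₀)` such that
every other base pair `(i,j)` satisfies `i < i₀ < j₀ < j`. -/
def IsStemLoop (n : ℕ) (S : Finset (ℕ × ℕ)) : Prop :=
  IsSecStr n S ∧ ∃ p ∈ S, ∀ q ∈ S, q ≠ p → q.1 < p.1 ∧ p.2 < q.2


def rk (A : Finset ℕ) (x : ℕ) : ℕ := (A.filter (· ≤ x)).card
def rk' (B : Finset ℕ) (y : ℕ) : ℕ := (B.filter (y ≤ ·)).card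

def zipF (A B : Finset ℕ) : Finset (ℕ × ℕ) :=
  (A ×ˢ B).filter fun p => rk A p.1 = rk' B p.2

def Pc (n : ℕ) (A B : Finset ℕ) : Prop :=
  A.Nonempty ∧ A.card = B.card ∧ (∀ a ∈ A, 1 ≤ a) ∧ (∀ b ∈ B, b ≤ n) ∧
    ∀ a ∈ A, ∀ b ∈ B, a + 2 ≤ b

def BofC (n : ℕ) (C : Finset ℕ) : Finset ℕ × Finset ℕ :=
  (insert (C.card - 1 + 1) ((Finset.Icc 1 (C.card - 1)) \ C),
   (C.filter (fun w => C.card - 1 < w)).image (fun w => n + 1 - (w - (C.card - 1))))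

def gmap (n : ℕ) (A B : Finset ℕ) : Finset ℕ :=
  ((Finset.Icc 1 (A.sup id - 1)) \ A) ∪ B.image (fun y => A.sup id - 1 + (n + 1 - y))

lemma rk_lt_rk {A : Finset ℕ} {x x' : ℕ} (hx' : x' ∈ A) (h : x < x') :
    rk A x < rk A x' := by
  apply Finset.card_lt_card
  constructor
  · intro a ha
    simp only [Finset.mem_filter] at ha ⊢
    exact ⟨ha.1, by omega⟩
  · intro hsub
    have : x' ∈ A.filter (· ≤ x) := hsub (by simp [hx'])
    simp at this; omega

lemma rk'_lt_rk' {B : Finset ℕ} {y y' : ℕ} (hy : y ∈ B) (h : y < y') :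
    rk' B y' < rk' B y := by
  apply Finset.card_lt_card
  constructor
  · intro a ha
    simp only [Finset.mem_filter] at ha ⊢
    exact ⟨ha.1, by omega⟩
  · intro hsub
    have : y ∈ B.filter (y' ≤ ·) := hsub (by simp [hy])
    simp at this; omega

lemma rk_injOn {A : Finset ℕ} {x x' : ℕ} (hx : x ∈ A) (hx' : x' ∈ A)
    (h : rk A x = rk A x') : x = x' := by
  rcases lt_trichotomy x x' with h1 | h1 | h1
  · have := rk_lt_rk hx' h1; omega
  · exact h1
  · have := rk_lt_rk hx h1; omega

lemma rk'_injOn {B : Finset ℕ} {y y' : ℕ} (hy : y ∈ B) (hy' : y' ∈ B)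
    (h : rk' B y = rk' B y') : y = y' := by
  rcases lt_trichotomy y y' with h1 | h1 | h1
  · have := rk'_lt_rk' hy h1; omega
  · exact h1
  · have := rk'_lt_rk' hy' h1; omega

lemma rk_pos {A : Finset ℕ} {x : ℕ} (hx : x ∈ A) : 1 ≤ rk A x :=
  Finset.card_pos.mpr ⟨x, by simp [hx]⟩

lemma rk'_pos {B : Finset ℕ} {y : ℕ} (hy : y ∈ B) : 1 ≤ rk' B y :=
  Finset.card_pos.mpr ⟨y, by simp [hy]⟩

lemma rk_le {A : Finset ℕ} (x : ℕ) : rk A x ≤ A.card := Finset.card_filter_le _ _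

lemma rk'_le {B : Finset ℕ} (y : ℕ) : rk' B y ≤ B.card := Finset.card_filter_le _ _

lemma rk'_surj {B : Finset ℕ} {r : ℕ} (h1 : 1 ≤ r) (h2 : r ≤ B.card) :
    ∃ y ∈ B, rk' B y = r := by
  have himg : B.image (rk' B) = Finset.Icc 1 B.card := by
    apply Finset.eq_of_subset_of_card_le
    · intro r hr
      simp only [Finset.mem_image] at hr
      obtain ⟨y, hy, rfl⟩ := hr
      simp [Finset.mem_Icc, rk'_pos hy, rk'_le]
    · rw [Finset.card_image_of_injOn (fun a ha b hb => rk'_injOn ha hb), Nat.card_Icc]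
      omega
  have : r ∈ B.image (rk' B) := by rw [himg]; simp [Finset.mem_Icc]; omega
  simpa [Finset.mem_image] using this

lemma rk_surj {A : Finset ℕ} {r : ℕ} (h1 : 1 ≤ r) (h2 : r ≤ A.card) :
    ∃ x ∈ A, rk A x = r := by
  have himg : A.image (rk A) = Finset.Icc 1 A.card := by
    apply Finset.eq_of_subset_of_card_le
    · intro r hr
      simp only [Finset.mem_image] at hr
      obtain ⟨x, hx, rfl⟩ := hr
      simp [Finset.mem_Icc, rk_pos hx, rk_le]
    · rw [Finset.card_image_of_injOn (fun a ha b hb => rk_injOn ha hb), Nat.card_Icc]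
      omega
  have : r ∈ A.image (rk A) := by rw [himg]; simp [Finset.mem_Icc]; omega
  simpa [Finset.mem_image] using this

lemma sup_id_mem {A : Finset ℕ} (hA : A.Nonempty) : A.sup id ∈ A := by
  have h : A.sup id = A.max' hA := by
    rw [Finset.max'_eq_sup', Finset.sup'_eq_sup]
  rw [h]
  exact A.max'_mem hA

lemma mem_zipF {A B : Finset ℕ} {p : ℕ × ℕ} :
    p ∈ zipF A B ↔ p.1 ∈ A ∧ p.2 ∈ B ∧ rk A p.1 = rk' B p.2 := by
  simp [zipF, Finset.mem_filter, Finset.mem_product, and_assoc]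

lemma zipF_stemLoop {n : ℕ} {A B : Finset ℕ} (h : Pc n A B) :
    IsStemLoop n (zipF A B) := by
  obtain ⟨hA, hcard, hA1, hBn, hgap⟩ := h
  have key : ∀ p ∈ zipF A B, ∀ q ∈ zipF A B, p.1 < q.1 → q.2 < p.2 := by
    intro p hp q hq hlt
    rw [mem_zipF] at hp hq
    have h1 : rk A p.1 < rk A q.1 := rk_lt_rk hq.1 hlt
    rcases lt_trichotomy q.2 p.2 with h2 | h2 | h2
    · exact h2
    · rw [hp.2.2, hq.2.2, h2] at h1; omega
    · have := rk'_lt_rk' hp.2.1 h2; omega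
  have inj1 : ∀ p ∈ zipF A B, ∀ q ∈ zipF A B, p.1 = q.1 → p = q := by
    intro p hp q hq h1
    rw [mem_zipF] at hp hq
    have : rk' B p.2 = rk' B q.2 := by rw [← hp.2.2, ← hq.2.2, h1]
    have := rk'_injOn hp.2.1 hq.2.1 this
    exact Prod.ext h1 this
  have inj2 : ∀ p ∈ zipF A B, ∀ q ∈ zipF A B, p.2 = q.2 → p = q := by
    intro p hp q hq h2
    rw [mem_zipF] at hp hq
    have : rk A p.1 = rk A q.1 := by rw [hp.2.2, hq.2.2, h2]
    have := rk_injOn hp.1 hq.1 this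
    exact Prod.ext this h2
  refine ⟨⟨?_, ?_, ?_⟩, ?_⟩
  · intro p hp
    rw [mem_zipF] at hp
    have := hA1 _ hp.1
    have := hBn _ hp.2.1
    have := hgap _ hp.1 _ hp.2.1
    omega
  · intro p hp q hq hne
    refine ⟨fun h => hne (inj1 p hp q hq h), ?_, ?_, fun h => hne (inj2 p hp q hq h)⟩
    · rw [mem_zipF] at hp hq
      have := hgap _ hp.1 _ hq.2.1; omega
    · rw [mem_zipF] at hp hq
      have := hgap _ hq.1 _ hp.2.1; omega
  · intro p hp q hq ⟨h1, h2, h3⟩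
    have := key p hp q hq h1; omega
  · -- the special innermost pair (max A, min B)
    have hB : B.Nonempty := by
      rw [← Finset.card_pos, ← hcard, Finset.card_pos]; exact hA
    refine ⟨(A.max' hA, B.min' hB), ?_, ?_⟩
    · rw [mem_zipF]
      refine ⟨A.max'_mem hA, B.min'_mem hB, ?_⟩
      have h1 : A.filter (· ≤ A.max' hA) = A :=
        Finset.filter_true_of_mem (fun a ha => A.le_max' a ha)
      have h2 : B.filter (B.min' hB ≤ ·) = B :=
        Finset.filter_true_of_mem (fun b hb => B.min'_le b hb)
      simp only [rk, rk', h1, h2, hcard]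
    · intro q hq hne
      have hq' := hq; rw [mem_zipF] at hq'
      constructor
      · rcases lt_or_eq_of_le (A.le_max' q.1 hq'.1) with h | h
        · exact h
        · exfalso
          apply hne
          apply inj1 q hq _ _ h
          rw [mem_zipF]
          refine ⟨A.max'_mem hA, B.min'_mem hB, ?_⟩
          have h1 : A.filter (· ≤ A.max' hA) = A :=
            Finset.filter_true_of_mem (fun a ha => A.le_max' a ha)
          have h2 : B.filter (B.min' hB ≤ ·) = B :=
            Finset.filter_true_of_mem (fun b hb => B.min'_le b hb)
          simp only [rk, rk', h1, h2, hcard]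
      · rcases lt_or_eq_of_le (B.min'_le q.2 hq'.2.1) with h | h
        · exact h
        · exfalso
          apply hne
          apply inj2 q hq _ _ h.symm
          rw [mem_zipF]
          refine ⟨A.max'_mem hA, B.min'_mem hB, ?_⟩
          have h1 : A.filter (· ≤ A.max' hA) = A :=
            Finset.filter_true_of_mem (fun a ha => A.le_max' a ha)
          have h2 : B.filter (B.min' hB ≤ ·) = B :=
            Finset.filter_true_of_mem (fun b hb => B.min'_le b hb)
          simp only [rk, rk', h1, h2, hcard]

lemma stemLoop_eq_zipF {n : ℕ} {S : Finset (ℕ × ℕ)} (h : IsStemLoop n S) :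
    ∃ A B : Finset ℕ, Pc n A B ∧ S = zipF A B := by
  obtain ⟨⟨hmem, hdist, hcross⟩, p₀, hp₀, hinner⟩ := h
  have nest : ∀ p ∈ S, ∀ q ∈ S, q.1 < p.1 → p.2 < q.2 := by
    intro p hp q hq hlt
    by_cases hpp : p = p₀
    · subst hpp
      have hqp : q ≠ p := by intro h; rw [h] at hlt; omega
      exact (hinner q hq hqp).2
    · have hip := hinner p hp hpp
      by_cases hqq : q = p₀
      · subst hqq; omega
      · have hiq := hinner q hq hqq
        have hne : p ≠ q := by intro h; rw [h] at hlt; omega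
        have d := hdist p hp q hq hne
        have hm0 := (hmem p₀ hp₀).2.1
        rcases lt_trichotomy p.2 q.2 with h1 | h1 | h1
        · exact h1
        · omega
        · exact absurd ⟨hlt, by omega, h1⟩ (hcross q hq p hp)
  have nestIff : ∀ p ∈ S, ∀ q ∈ S, (q.1 ≤ p.1 ↔ p.2 ≤ q.2) := by
    intro p hp q hq
    by_cases hne : p = q
    · subst hne; omega
    · have d := hdist p hp q hq hne
      constructor
      · intro h
        have := nest p hp q hq (by omega); omega
      · intro h
        rcases lt_trichotomy q.1 p.1 with h1 | h1 | h1
        · omega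
        · omega
        · have := nest q hq p hp h1; omega
  have injfst : ∀ p ∈ S, ∀ q ∈ S, p.1 = q.1 → p = q := by
    intro p hp q hq h
    by_contra hne
    exact absurd h (hdist p hp q hq hne).1
  have injsnd : ∀ p ∈ S, ∀ q ∈ S, p.2 = q.2 → p = q := by
    intro p hp q hq h
    by_contra hne
    exact absurd h (hdist p hp q hq hne).2.2.2
  set A := S.image Prod.fst with hAdef
  set B := S.image Prod.snd with hBdef
  have hcardA : A.card = S.card :=
    Finset.card_image_of_injOn (fun p hp q hq h => injfst p hp q hq h)
  have hcardB : B.card = S.card :=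
    Finset.card_image_of_injOn (fun p hp q hq h => injsnd p hp q hq h)
  have memA : ∀ a, a ∈ A ↔ ∃ p ∈ S, p.1 = a := by intro a; simp [hAdef]
  have memB : ∀ b, b ∈ B ↔ ∃ p ∈ S, p.2 = b := by intro b; simp [hBdef]
  have hsub : ∀ p ∈ S, p ∈ zipF A B := by
    intro p hp
    rw [mem_zipF]
    refine ⟨(memA p.1).2 ⟨p, hp, rfl⟩, (memB p.2).2 ⟨p, hp, rfl⟩, ?_⟩
    have e1 : A.filter (· ≤ p.1) = (S.filter fun q => q.1 ≤ p.1).image Prod.fst := by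
      ext a
      simp only [Finset.mem_filter, Finset.mem_image, hAdef]
      constructor
      · rintro ⟨⟨q, hq, rfl⟩, hle⟩; exact ⟨q, ⟨hq, hle⟩, rfl⟩
      · rintro ⟨q, ⟨hq, hle⟩, rfl⟩; exact ⟨⟨q, hq, rfl⟩, hle⟩
    have e2 : B.filter (p.2 ≤ ·) = (S.filter fun q => p.2 ≤ q.2).image Prod.snd := by
      ext b
      simp only [Finset.mem_filter, Finset.mem_image, hBdef]
      constructor
      · rintro ⟨⟨q, hq, rfl⟩, hle⟩; exact ⟨q, ⟨hq, hle⟩, rfl⟩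
      · rintro ⟨q, ⟨hq, hle⟩, rfl⟩; exact ⟨⟨q, hq, rfl⟩, hle⟩
    have e3 : (S.filter fun q => q.1 ≤ p.1) = (S.filter fun q => p.2 ≤ q.2) := by
      ext q
      simp only [Finset.mem_filter]
      exact and_congr_right fun hq => nestIff p hp q hq
    simp only [rk, rk', e1, e2, e3]
    rw [Finset.card_image_of_injOn (fun a ha b hb hh =>
          injfst a (Finset.mem_of_mem_filter a ha) b (Finset.mem_of_mem_filter b hb) hh),
        Finset.card_image_of_injOn (fun a ha b hb hh =>
          injsnd a (Finset.mem_of_mem_filter a ha) b (Finset.mem_of_mem_filter b hb) hh)]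
  refine ⟨A, B, ⟨⟨p₀.1, (memA p₀.1).2 ⟨p₀, hp₀, rfl⟩⟩, by rw [hcardA, hcardB], ?_, ?_, ?_⟩, ?_⟩
  · intro a ha
    obtain ⟨p, hp, rfl⟩ := (memA a).1 ha
    exact (hmem p hp).1
  · intro b hb
    obtain ⟨p, hp, rfl⟩ := (memB b).1 hb
    exact (hmem p hp).2.2
  · intro a ha b hb
    obtain ⟨p, hp, rfl⟩ := (memA a).1 ha
    obtain ⟨q, hq, rfl⟩ := (memB b).1 hb
    have h1 : p.1 ≤ p₀.1 := by
      by_cases hpp : p = p₀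
      · rw [hpp]
      · exact (hinner p hp hpp).1.le
    have h2 : p₀.2 ≤ q.2 := by
      by_cases hqq : q = p₀
      · rw [hqq]
      · exact (hinner q hq hqq).2.le
    have := (hmem p₀ hp₀).2.1
    omega
  · apply Finset.Subset.antisymm
    · intro p hp; exact hsub p hp
    · intro p hp
      rw [mem_zipF] at hp
      obtain ⟨q, hq, hq1⟩ := (memA p.1).1 hp.1
      have hqz := hsub q hq
      rw [mem_zipF] at hqz
      have : rk' B q.2 = rk' B p.2 := by rw [← hqz.2.2, hq1, hp.2.2]
      have h2 := rk'_injOn hqz.2.1 hp.2.1 this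
      have : q = p := Prod.ext hq1 h2
      rwa [← this]

-- Part 2 : recovering A and B from zipF A B
lemma zipF_image_fst {n : ℕ} {A B : Finset ℕ} (h : Pc n A B) :
    (zipF A B).image Prod.fst = A := by
  apply Finset.Subset.antisymm
  · intro a ha
    simp only [Finset.mem_image] at ha
    obtain ⟨p, hp, rfl⟩ := ha
    exact (mem_zipF.1 hp).1
  · intro a ha
    obtain ⟨y, hy, hry⟩ := rk'_surj (rk_pos ha) (h.2.1 ▸ rk_le a)
    exact Finset.mem_image.2 ⟨(a, y), mem_zipF.2 ⟨ha, hy, hry.symm⟩, rfl⟩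

lemma zipF_image_snd {n : ℕ} {A B : Finset ℕ} (h : Pc n A B) :
    (zipF A B).image Prod.snd = B := by
  apply Finset.Subset.antisymm
  · intro b hb
    simp only [Finset.mem_image] at hb
    obtain ⟨p, hp, rfl⟩ := hb
    exact (mem_zipF.1 hp).2.1
  · intro b hb
    obtain ⟨x, hx, hrx⟩ := rk_surj (rk'_pos hb) (h.2.1.symm ▸ rk'_le b)
    exact Finset.mem_image.2 ⟨(x, b), mem_zipF.2 ⟨hx, hb, hrx⟩, rfl⟩

lemma zipF_injOn {n : ℕ} {A B A' B' : Finset ℕ} (h : Pc n A B) (h' : Pc n A' B')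
    (heq : zipF A B = zipF A' B') : A = A' ∧ B = B' := by
  constructor
  · rw [← zipF_image_fst h, ← zipF_image_fst h', heq]
  · rw [← zipF_image_snd h, ← zipF_image_snd h', heq]


lemma Pc_BofC {n : ℕ} {C : Finset ℕ} (hne : C.Nonempty) (hsub : C ⊆ Finset.Icc 1 (n-2)) :
    Pc n (BofC n C).1 (BofC n C).2 := by
  simp only [BofC]
  set s := C.card - 1 with hs
  have hCb : ∀ w ∈ C, 1 ≤ w ∧ w ≤ n - 2 := by
    intro w hw; simpa using hsub hw
  have hCcard : C.card = s + 1 := by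
    have := Finset.card_pos.2 hne; omega
  have hex : ∃ w ∈ C, s < w := by
    by_contra hcon
    push_neg at hcon
    have : C ⊆ Finset.Icc 1 s := fun w hw => by
      simp only [Finset.mem_Icc]; exact ⟨(hCb w hw).1, hcon w hw⟩
    have := Finset.card_le_card this
    rw [Nat.card_Icc] at this; omega
  have hinter : Finset.Icc 1 s ∩ C = C.filter (· ≤ s) := by
    ext x
    simp only [Finset.mem_inter, Finset.mem_Icc, Finset.mem_filter]
    constructor
    · rintro ⟨⟨h1, h2⟩, h3⟩; exact ⟨h3, h2⟩
    · rintro ⟨h1, h2⟩; exact ⟨⟨(hCb x h1).1, h2⟩, h1⟩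
  have hsplit : (C.filter (· ≤ s)).card + (C.filter (fun w => s < w)).card = s + 1 := by
    have h1 : C.filter (fun a => ¬ a ≤ s) = C.filter (fun w => s < w) := by
      apply Finset.filter_congr
      intro x _
      constructor
      · intro h; omega
      · intro h; omega
    have h2 := Finset.card_filter_add_card_filter_not (s := C) (p := (· ≤ s))
    rw [h1] at h2  -- may need adjusting
    omega
  have hcardA : (insert (s + 1) ((Finset.Icc 1 s) \ C)).card
      = s + 1 - (C.filter (· ≤ s)).card := by
    rw [Finset.card_insert_of_notMem (by simp [Finset.mem_Icc])]
    have h1 := Finset.card_sdiff_add_card_inter (Finset.Icc 1 s) C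
    rw [hinter, Nat.card_Icc] at h1
    omega
  have hcardB : ((C.filter (fun w => s < w)).image (fun w => n + 1 - (w - s))).card
      = (C.filter (fun w => s < w)).card := by
    apply Finset.card_image_of_injOn
    intro x hx y hy hxy
    simp only [Finset.mem_coe, Finset.mem_filter] at hx hy
    dsimp only at hxy
    have h1 := hCb x hx.1
    have h2 := hCb y hy.1
    omega
  refine ⟨⟨s+1, Finset.mem_insert_self _ _⟩, ?_, ?_, ?_, ?_⟩
  · rw [hcardA, hcardB]
    have hpos : 1 ≤ (C.filter (fun w => s < w)).card := by
      obtain ⟨w, hw, hws⟩ := hex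
      exact Finset.card_pos.2 ⟨w, Finset.mem_filter.2 ⟨hw, hws⟩⟩
    omega
  · intro a ha
    rcases Finset.mem_insert.1 ha with rfl | ha
    · omega
    · have := (Finset.mem_sdiff.1 ha).1
      simp only [Finset.mem_Icc] at this; omega
  · intro b hb
    simp only [Finset.mem_image, Finset.mem_filter] at hb
    obtain ⟨w, ⟨hw, hws⟩, rfl⟩ := hb
    omega
  · intro a ha b hb
    simp only [Finset.mem_image, Finset.mem_filter] at hb
    obtain ⟨w, ⟨hw, hws⟩, rfl⟩ := hb
    have hwb := hCb w hw
    have haa : a ≤ s + 1 := by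
      rcases Finset.mem_insert.1 ha with rfl | ha
      · omega
      · have := (Finset.mem_sdiff.1 ha).1
        simp only [Finset.mem_Icc] at this; omega
    omega

lemma sup_insert_of_le {s : ℕ} {T : Finset ℕ} (h : ∀ x ∈ T, x ≤ s) :
    (insert s T).sup id = s := by
  apply le_antisymm
  · apply Finset.sup_le
    intro x hx
    rcases Finset.mem_insert.1 hx with rfl | hx
    · exact le_refl _
    · exact h x hx
  · exact Finset.le_sup (f := id) (Finset.mem_insert_self _ _)

lemma gmap_BofC {n : ℕ} {C : Finset ℕ} (hne : C.Nonempty) (hsub : C ⊆ Finset.Icc 1 (n-2)) :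
    gmap n (BofC n C).1 (BofC n C).2 = C := by
  simp only [BofC]
  set s := C.card - 1 with hs
  have hCb : ∀ w ∈ C, 1 ≤ w ∧ w ≤ n - 2 := by
    intro w hw; simpa using hsub hw
  have hsup : (insert (s + 1) ((Finset.Icc 1 s) \ C)).sup id = s + 1 := by
    apply sup_insert_of_le
    intro x hx
    have := (Finset.mem_sdiff.1 hx).1
    simp only [Finset.mem_Icc] at this; omega
  rw [gmap, hsup]
  have hss : s + 1 - 1 = s := by omega
  rw [hss]
  ext x
  simp only [Finset.mem_union, Finset.mem_sdiff, Finset.mem_insert, Finset.mem_Icc,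
    Finset.mem_image, Finset.mem_filter, not_or, not_and, not_not]
  constructor
  · rintro (⟨⟨h1, h2⟩, h3, h4⟩ | ⟨y, ⟨w, ⟨hw, hws⟩, rfl⟩, hf⟩)
    · exact h4 ⟨h1, h2⟩
    · have hwb := hCb w hw
      have : x = w := by omega
      rwa [this]
  · intro hxC
    have hxb := hCb x hxC
    by_cases hxs : x ≤ s
    · left
      refine ⟨⟨hxb.1, hxs⟩, by omega, ?_⟩
      intro _; exact hxC
    · right
      refine ⟨n + 1 - (x - s), ⟨x, ⟨hxC, by omega⟩, rfl⟩, by omega⟩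

lemma gmap_domain {n : ℕ} {A B : Finset ℕ} (h : Pc n A B) (ha_mem : A.sup id ∈ A)
    (ha_ub : ∀ x ∈ A, x ≤ A.sup id) :
    (gmap n A B).Nonempty ∧ gmap n A B ⊆ Finset.Icc 1 (n-2) := by
  obtain ⟨hA, hcard, hA1, hBn, hgap⟩ := h
  have hB : B.Nonempty := by
    rw [← Finset.card_pos, ← hcard, Finset.card_pos]; exact hA
  obtain ⟨b, hb⟩ := hB
  set a := A.sup id with hadef
  have ha1 : 1 ≤ a := hA1 a ha_mem
  have hab : a + 2 ≤ b := hgap a ha_mem b hb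
  have hbn : b ≤ n := hBn b hb
  constructor
  · exact ⟨a - 1 + (n + 1 - b), Finset.mem_union_right _ (Finset.mem_image.2 ⟨b, hb, rfl⟩)⟩
  · intro x hx
    rcases Finset.mem_union.1 hx with hx | hx
    · have h1 := (Finset.mem_sdiff.1 hx).1
      simp only [Finset.mem_Icc] at h1 ⊢
      omega
    · obtain ⟨y, hy, rfl⟩ := Finset.mem_image.1 hx
      have h1 := hgap a ha_mem y hy
      have h2 := hBn y hy
      simp only [Finset.mem_Icc]
      omega

lemma BofC_gmap {n : ℕ} {A B : Finset ℕ} (h : Pc n A B) (ha_mem : A.sup id ∈ A)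
    (ha_ub : ∀ x ∈ A, x ≤ A.sup id) :
    BofC n (gmap n A B) = (A, B) := by
  obtain ⟨hA, hcard, hA1, hBn, hgap⟩ := h
  have hB : B.Nonempty := by
    rw [← Finset.card_pos, ← hcard, Finset.card_pos]; exact hA
  obtain ⟨b₀, hb₀⟩ := hB
  set a := A.sup id with hadef
  have ha1 : 1 ≤ a := hA1 a ha_mem
  set s := a - 1 with hsdef
  have hBlow : ∀ y ∈ B, s + 3 ≤ y ∧ y ≤ n := fun y hy =>
    ⟨by have := hgap a ha_mem y hy; omega, hBn y hy⟩
  -- the image part of gmap lies in [s+1, n-2]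
  have himgmem : ∀ x ∈ B.image (fun y => s + (n + 1 - y)), s + 1 ≤ x ∧ x ≤ n - 2 := by
    intro x hx
    obtain ⟨y, hy, rfl⟩ := Finset.mem_image.1 hx
    have := hBlow y hy; omega
  have hicc : Finset.Icc 1 s ∩ A = A.erase a := by
    ext x
    simp only [Finset.mem_inter, Finset.mem_Icc, Finset.mem_erase]
    constructor
    · rintro ⟨⟨h1, h2⟩, h3⟩; exact ⟨by omega, h3⟩
    · rintro ⟨h1, h2⟩
      have h3 := ha_ub x h2
      have h4 := hA1 x h2
      exact ⟨⟨h4, by omega⟩, h2⟩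
  have hcardIcc : ((Finset.Icc 1 s) \ A).card = s + 1 - A.card := by
    have h1 := Finset.card_sdiff_add_card_inter (Finset.Icc 1 s) A
    rw [hicc, Finset.card_erase_of_mem ha_mem, Nat.card_Icc] at h1
    have hA_le : A.card ≤ a := by
      have : A ⊆ Finset.Icc 1 a := fun x hx => by
        simp only [Finset.mem_Icc]; exact ⟨hA1 x hx, ha_ub x hx⟩
      have := Finset.card_le_card this
      rwa [Nat.card_Icc] at this
    have hApos : 1 ≤ A.card := Finset.card_pos.2 hA
    omega
  have hcardimg : (B.image (fun y => s + (n + 1 - y))).card = B.card := by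
    apply Finset.card_image_of_injOn
    intro x hx y hy hxy
    simp only [Finset.mem_coe] at hx hy
    have h1 := hBlow x hx
    have h2 := hBlow y hy
    dsimp only at hxy
    omega
  have hdisj : Disjoint ((Finset.Icc 1 s) \ A) (B.image (fun y => s + (n + 1 - y))) := by
    rw [Finset.disjoint_left]
    intro x hx hx'
    have h1 := (Finset.mem_sdiff.1 hx).1
    simp only [Finset.mem_Icc] at h1
    have h2 := himgmem x hx'
    omega
  have hcardC : (gmap n A B).card = s + 1 := by
    rw [gmap, Finset.card_union_of_disjoint hdisj, hcardIcc, hcardimg]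
    have hA_le : A.card ≤ a := by
      have : A ⊆ Finset.Icc 1 a := fun x hx => by
        simp only [Finset.mem_Icc]; exact ⟨hA1 x hx, ha_ub x hx⟩
      have := Finset.card_le_card this
      rwa [Nat.card_Icc] at this
    have hApos : 1 ≤ A.card := Finset.card_pos.2 hA
    omega
  have hmemgmap : ∀ x, x ∈ gmap n A B ↔
      ((1 ≤ x ∧ x ≤ s ∧ x ∉ A) ∨ (∃ y ∈ B, s + (n + 1 - y) = x)) := by
    intro x
    rw [gmap]
    simp only [Finset.mem_union, Finset.mem_sdiff, Finset.mem_Icc, Finset.mem_image,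
      ← hadef, ← hsdef]
    constructor
    · rintro (⟨⟨h1, h2⟩, h3⟩ | ⟨y, hy, rfl⟩)
      · exact Or.inl ⟨h1, h2, h3⟩
      · exact Or.inr ⟨y, hy, rfl⟩
    · rintro (⟨h1, h2, h3⟩ | ⟨y, hy, rfl⟩)
      · exact Or.inl ⟨⟨h1, h2⟩, h3⟩
      · exact Or.inr ⟨y, hy, rfl⟩
  rw [BofC, hcardC]
  have hss : s + 1 - 1 = s := by omega
  rw [hss]
  ext1
  · -- first component equals A
    dsimp only
    ext x
    simp only [Finset.mem_insert, Finset.mem_sdiff, Finset.mem_Icc]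
    constructor
    · rintro (rfl | ⟨⟨h1, h2⟩, h3⟩)
      · have : s + 1 = a := by omega
        rwa [this]
      · rw [hmemgmap] at h3
        push_neg at h3
        by_contra hxA
        exact hxA (h3.1 h1 h2)
    · intro hxA
      have hub := ha_ub x hxA
      have hlb := hA1 x hxA
      by_cases hxa : x = a
      · left; omega
      · right
        refine ⟨⟨hlb, by omega⟩, ?_⟩
        rw [hmemgmap]
        push_neg
        constructor
        · intro _ _; exact hxA
        · intro y hy
          have := hBlow y hy
          omega
  · -- second component equals B
    dsimp only
    have hfilter : (gmap n A B).filter (fun w => s < w) = B.image (fun y => s + (n + 1 - y)) := by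
      ext x
      simp only [Finset.mem_filter]
      constructor
      · rintro ⟨hx, hxs⟩
        rw [hmemgmap] at hx
        rcases hx with ⟨h1, h2, h3⟩ | ⟨y, hy, rfl⟩
        · omega
        · exact Finset.mem_image.2 ⟨y, hy, rfl⟩
      · intro hx
        obtain ⟨y, hy, rfl⟩ := Finset.mem_image.1 hx
        refine ⟨?_, by have := hBlow y hy; omega⟩
        rw [hmemgmap]
        exact Or.inr ⟨y, hy, rfl⟩
    rw [hfilter, Finset.image_image]
    ext y
    simp only [Finset.mem_image, Function.comp]
    constructor
    · rintro ⟨z, hz, rfl⟩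
      have := hBlow z hz
      have : n + 1 - (s + (n + 1 - z) - s) = z := by omega
      rwa [this]
    · intro hy
      refine ⟨y, hy, ?_⟩
      have := hBlow y hy
      omega

/-- For every `n ≥ 2`, the number of stem-loop structures on `[1,n]` (θ = 1)
equals `2^(n−2) − 1`. -/
theorem num_stem_loops (n : ℕ) (hn : 2 ≤ n) :
    Set.ncard {S : Finset (ℕ × ℕ) | IsStemLoop n S} = 2 ^ (n - 2) - 1 := by
  classical
  have hset : {S : Finset (ℕ × ℕ) | IsStemLoop n S}
      = (fun C => zipF (BofC n C).1 (BofC n C).2) ''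
        {C : Finset ℕ | C ⊆ Finset.Icc 1 (n-2) ∧ C.Nonempty} := by
    ext S
    simp only [Set.mem_setOf_eq, Set.mem_image]
    constructor
    · intro hS
      obtain ⟨A, B, hPc, rfl⟩ := stemLoop_eq_zipF hS
      have hsm : A.sup id ∈ A := sup_id_mem hPc.1
      have hub : ∀ x ∈ A, x ≤ A.sup id := fun x hx => Finset.le_sup (f := id) hx
      obtain ⟨hdne, hdsub⟩ := gmap_domain hPc hsm hub
      refine ⟨gmap n A B, ⟨hdsub, hdne⟩, ?_⟩
      rw [BofC_gmap hPc hsm hub]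
    · rintro ⟨C, ⟨hsub, hne⟩, rfl⟩
      exact zipF_stemLoop (Pc_BofC hne hsub)
  rw [hset]
  rw [Set.ncard_image_of_injOn (by
    intro C hC C' hC' heq
    have h1 := Pc_BofC hC.2 hC.1
    have h2 := Pc_BofC hC'.2 hC'.1
    obtain ⟨hA, hB⟩ := zipF_injOn h1 h2 heq
    calc C = gmap n (BofC n C).1 (BofC n C).2 := (gmap_BofC hC.2 hC.1).symm
      _ = gmap n (BofC n C').1 (BofC n C').2 := by rw [hA, hB]
      _ = C' := gmap_BofC hC'.2 hC'.1)]
  have hdom : {C : Finset ℕ | C ⊆ Finset.Icc 1 (n-2) ∧ C.Nonempty}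
      = ↑(((Finset.Icc 1 (n-2)).powerset).erase ∅) := by
    ext C
    simp only [Set.mem_setOf_eq, Finset.coe_erase, Set.mem_diff, Finset.mem_coe,
      Finset.mem_powerset, Set.mem_singleton_iff, Finset.nonempty_iff_ne_empty]
  rw [hdom, Set.ncard_coe_finset, Finset.card_erase_of_mem (by simp),
    Finset.card_powerset, Nat.card_Icc]
  norm_num
end
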